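/- arXiv:2211.02173 — 5 statements merged into one kernel-verified Lean document; each statement's English description precedes it below -/
import Mathlib

section
/- Σ₀ + S ⊆ Σ₁, where + denotes the Minkowski sum {a + s : a ∈ Σ₀, s ∈ S}. -/
open MeasureTheory Topology
open scoped Pointwise ENNReal RealInnerProductSpace NNReal

set_option linter.unusedVariables false
set_option linter.unusedSectionVars false

section AuxHilbert

variable {E : Type*} [NormedAddCommGroup E] [InnerProductSpace ℝ E] [CompleteSpace E]

theorem aux_isUnit_of_bddBelow {B : E →L[ℝ] E} (hB : IsSelfAdjoint B) {c : ℝ} (hc : 0 < c)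
    (h : ∀ ψ, c * ‖ψ‖ ≤ ‖B ψ‖) : IsUnit B := by
  have hsym : ∀ x y : E, ⟪B x, y⟫ = ⟪x, B y⟫ := fun x y => hB.isSymmetric x y
  have hinj : Function.Injective B := by
    intro u v huv
    have h1 := h (u - v)
    rw [map_sub, huv, sub_self, norm_zero] at h1
    have h2 : ‖u - v‖ ≤ 0 := by nlinarith [norm_nonneg (u - v)]
    exact sub_eq_zero.mp (norm_le_zero_iff.mp h2)
  have hanti : AntilipschitzWith (⟨c, hc.le⟩ : ℝ≥0)⁻¹ B := by
    apply ContinuousLinearMap.antilipschitz_of_bound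
    intro x
    have hx : ‖x‖ ≤ c⁻¹ * ‖B x‖ := by
      rw [inv_mul_eq_div, le_div_iff₀ hc]
      linarith [h x]
    exact hx.trans_eq (congrArg (· * ‖B x‖) (NNReal.coe_inv ⟨c, hc.le⟩).symm)
  have hclosed : IsClosed (Set.range B) := hanti.isClosed_range B.uniformContinuous
  have hrange : LinearMap.range (B : E →ₗ[ℝ] E) = ⊤ := by
    have hcl : IsClosed ((LinearMap.range (B : E →ₗ[ℝ] E) : Submodule ℝ E) : Set E) := by
      simpa [LinearMap.coe_range] using hclosed
    haveI : CompleteSpace (LinearMap.range (B : E →ₗ[ℝ] E)) := hcl.completeSpace_coe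
    rw [← Submodule.orthogonal_eq_bot_iff]
    rw [Submodule.eq_bot_iff]
    intro v hv
    have h1 : ⟪B (B v), v⟫ = 0 :=
      hv (B (B v)) (LinearMap.mem_range.mpr ⟨B v, rfl⟩)
    rw [hsym (B v) v] at h1
    have h2 : B v = 0 := by
      rwa [inner_self_eq_zero] at h1
    have h3 := h v
    rw [h2, norm_zero] at h3
    have : ‖v‖ ≤ 0 := by nlinarith [norm_nonneg v]
    exact norm_le_zero_iff.mp this
  exact ContinuousLinearMap.isUnit_iff_bijective.mpr
    ⟨hinj, LinearMap.range_eq_top.mp hrange⟩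

theorem aux_shift (B : E →L[ℝ] E) (z t : ℝ) :
    t ∈ spectrum ℝ (B - z • (1 : E →L[ℝ] E)) ↔ t + z ∈ spectrum ℝ B := by
  rw [spectrum.mem_iff, spectrum.mem_iff]
  have hEq : algebraMap ℝ (E →L[ℝ] E) (t + z) - B
      = algebraMap ℝ (E →L[ℝ] E) t - (B - z • (1 : E →L[ℝ] E)) := by
    simp only [Algebra.algebraMap_eq_smul_one, add_smul]
    abel
  rw [hEq]

theorem aux_approx {B : E →L[ℝ] E} (hB : IsSelfAdjoint B) (h0 : (0 : ℝ) ∈ spectrum ℝ B)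
    {ε : ℝ} (hε : 0 < ε) : ∃ ψ : E, ψ ≠ 0 ∧ ‖B ψ‖ ≤ ε * ‖ψ‖ := by
  by_contra hcon
  push_neg at hcon
  have hbdd : ∀ ψ : E, ε * ‖ψ‖ ≤ ‖B ψ‖ := by
    intro ψ
    rcases eq_or_ne ψ 0 with rfl | hne
    · simp
    · exact (hcon ψ hne).le
  have hunit := aux_isUnit_of_bddBelow hB hε hbdd
  rw [spectrum.mem_iff] at h0
  apply h0
  rw [map_zero, zero_sub]
  exact hunit.neg

theorem aux_weyl {B : E →L[ℝ] E} (hB : IsSelfAdjoint B) {ε : ℝ} (hε : 0 ≤ ε)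
    {ψ : E} (hψ : ψ ≠ 0) (h : ‖B ψ‖ ≤ ε * ‖ψ‖) :
    ∃ t ∈ spectrum ℝ B, |t| ≤ ε := by
  have hsym : ∀ x y : E, ⟪B x, y⟫ = ⟪x, B y⟫ := fun x y => hB.isSymmetric x y
  set NS : Set ℝ := {r | ∃ u : E, ‖u‖ = 1 ∧ r = ‖B u‖ ^ 2} with hNS
  have hψn : 0 < ‖ψ‖ := norm_pos_iff.mpr hψ
  set u₀ : E := ‖ψ‖⁻¹ • ψ with hu₀
  have hu₀n : ‖u₀‖ = 1 := by
    rw [hu₀, norm_smul, norm_inv, norm_norm, inv_mul_cancel₀ hψn.ne']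
  have hNS_ne : NS.Nonempty := ⟨‖B u₀‖ ^ 2, u₀, hu₀n, rfl⟩
  have hNS_bdd : BddBelow NS := ⟨0, by rintro r ⟨u, hu, rfl⟩; positivity⟩
  set m := sInf NS with hm
  have hm0 : 0 ≤ m := le_csInf hNS_ne (by rintro r ⟨u, hu, rfl⟩; positivity)
  have hBu₀ : ‖B u₀‖ ≤ ε := by
    rw [hu₀, B.map_smul, norm_smul, norm_inv, norm_norm]
    calc ‖ψ‖⁻¹ * ‖B ψ‖ ≤ ‖ψ‖⁻¹ * (ε * ‖ψ‖) :=
          mul_le_mul_of_nonneg_left h (by positivity)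
      _ = ε := by field_simp
  have hmε : m ≤ ε ^ 2 :=
    le_trans (csInf_le hNS_bdd ⟨u₀, hu₀n, rfl⟩) (by nlinarith [norm_nonneg (B u₀)])
  -- lower bound for all vectors
  have hlb : ∀ u : E, m * ‖u‖ ^ 2 ≤ ‖B u‖ ^ 2 := by
    intro u
    rcases eq_or_ne u 0 with rfl | hu
    · simp
    · have hun : 0 < ‖u‖ := norm_pos_iff.mpr hu
      have h1 : m ≤ ‖B (‖u‖⁻¹ • u)‖ ^ 2 := csInf_le hNS_bdd
        ⟨‖u‖⁻¹ • u, by rw [norm_smul, norm_inv, norm_norm, inv_mul_cancel₀ hun.ne'], rfl⟩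
      rw [B.map_smul, norm_smul, norm_inv, norm_norm, mul_pow] at h1
      have h2 := mul_le_mul_of_nonneg_right h1 (le_of_lt (by positivity : (0:ℝ) < ‖u‖ ^ 2))
      calc m * ‖u‖ ^ 2 ≤ ‖u‖⁻¹ ^ 2 * ‖B u‖ ^ 2 * ‖u‖ ^ 2 := h2
        _ = ‖B u‖ ^ 2 := by field_simp
  set A : E →L[ℝ] E := B * B - m • (1 : E →L[ℝ] E) with hA
  have hAapp : ∀ u : E, A u = B (B u) - m • u := by
    intro u
    simp [hA, ContinuousLinearMap.sub_apply, ContinuousLinearMap.mul_apply,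
      ContinuousLinearMap.smul_apply, ContinuousLinearMap.one_apply]
  have hAinner : ∀ u : E, ⟪A u, u⟫ = ‖B u‖ ^ 2 - m * ‖u‖ ^ 2 := by
    intro u
    have h1 : ⟪B (B u), u⟫ = ‖B u‖ ^ 2 := by
      rw [hsym (B u) u, real_inner_self_eq_norm_sq]
    rw [hAapp u, inner_sub_left, real_inner_smul_left, real_inner_self_eq_norm_sq, h1]
  have hApos : ∀ u : E, 0 ≤ ⟪A u, u⟫ := fun u => by
    rw [hAinner]; linarith [hlb u]
  have hAsym : ∀ u v : E, ⟪A u, v⟫ = ⟪u, A v⟫ := by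
    intro u v
    rw [hAapp u, hAapp v, inner_sub_left, inner_sub_right, real_inner_smul_left,
      real_inner_smul_right, hsym (B u) v, ← hsym u (B v)]
  -- Cauchy-Schwarz for the positive operator A
  have hCS : ∀ u : E, ‖A u‖ ^ 2 ≤ ‖A‖ * ⟪A u, u⟫ := by
    intro u
    have e1 : ⟪A (A u), u⟫ = ⟪A u, A u⟫ := hAsym (A u) u
    have hq : ∀ x : ℝ, 0 ≤ ⟪A (A u), A u⟫ * (x * x) + (2 * ⟪A u, A u⟫) * x + ⟪A u, u⟫ := by
      intro x
      have h0 := hApos (u + x • A u)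
      have hexp : ⟪A (u + x • A u), u + x • A u⟫
          = ⟪A (A u), A u⟫ * (x * x) + (2 * ⟪A u, A u⟫) * x + ⟪A u, u⟫ := by
        simp only [map_add, ContinuousLinearMap.map_smul, inner_add_left, inner_add_right,
          real_inner_smul_left, real_inner_smul_right, e1]
        ring
      rwa [hexp] at h0
    have hd := discrim_le_zero hq
    rw [discrim] at hd
    have h3 : ⟪A u, A u⟫ = ‖A u‖ ^ 2 := real_inner_self_eq_norm_sq _
    rw [h3] at hd
    have h2 : ⟪A (A u), A u⟫ ≤ ‖A‖ * ‖A u‖ ^ 2 := by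
      calc ⟪A (A u), A u⟫ ≤ ‖A (A u)‖ * ‖A u‖ := real_inner_le_norm _ _
        _ ≤ ‖A‖ * ‖A u‖ * ‖A u‖ :=
            mul_le_mul_of_nonneg_right (A.le_opNorm _) (norm_nonneg _)
        _ = ‖A‖ * ‖A u‖ ^ 2 := by ring
    rcases eq_or_lt_of_le (norm_nonneg (A u)) with h4 | h4
    · rw [← h4]
      simpa using mul_nonneg (norm_nonneg A) (hApos u)
    · have h6 := mul_le_mul_of_nonneg_right h2 (hApos u)
      have h7 : ‖A u‖ ^ 2 * ‖A u‖ ^ 2 ≤ ‖A‖ * ⟪A u, u⟫ * ‖A u‖ ^ 2 := by nlinarith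
      exact le_of_mul_le_mul_right h7 (by positivity)
  -- A is not invertible
  have hAnotunit : ¬ IsUnit A := by
    rintro ⟨U, hU⟩
    have hRA : (↑U⁻¹ : E →L[ℝ] E) * A = 1 := by rw [← hU]; exact U.inv_mul
    set R : E →L[ℝ] E := ↑U⁻¹ with hR
    have hinv : ∀ w : E, ‖w‖ ≤ ‖R‖ * ‖A w‖ := by
      intro w
      have h1 : R (A w) = w := by
        have := congrArg (fun (f : E →L[ℝ] E) => f w) hRA
        simpa [ContinuousLinearMap.mul_apply] using this
      calc ‖w‖ = ‖R (A w)‖ := by rw [h1]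
        _ ≤ ‖R‖ * ‖A w‖ := R.le_opNorm _
    set K := ‖R‖ ^ 2 * ‖A‖ with hK
    have hkey : ∀ u : E, ‖u‖ = 1 → 1 ≤ K * ⟪A u, u⟫ := by
      intro u hu
      have h1 : 1 ≤ ‖R‖ ^ 2 * ‖A u‖ ^ 2 := by
        have := hinv u
        rw [hu] at this
        nlinarith [norm_nonneg (A u), norm_nonneg R]
      calc (1:ℝ) ≤ ‖R‖ ^ 2 * ‖A u‖ ^ 2 := h1
        _ ≤ ‖R‖ ^ 2 * (‖A‖ * ⟪A u, u⟫) :=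
            mul_le_mul_of_nonneg_left (hCS u) (sq_nonneg _)
        _ = K * ⟪A u, u⟫ := by rw [hK]; ring
    have hKpos : 0 < K := by
      by_contra hKn
      push_neg at hKn
      have h1 := hkey u₀ hu₀n
      nlinarith [hApos u₀]
    have hne : m + K⁻¹ ≤ m := by
      apply le_csInf hNS_ne
      rintro r ⟨u, hu, rfl⟩
      have h1 := hkey u hu
      have h3 := hAinner u
      rw [hu] at h3
      nlinarith [mul_inv_cancel₀ hKpos.ne']
    nlinarith [inv_pos.mpr hKpos]
  -- spectral conclusion
  set r := Real.sqrt m with hr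
  have hr0 : 0 ≤ r := Real.sqrt_nonneg m
  have hr2 : r ^ 2 = m := Real.sq_sqrt hm0
  have hrε : r ≤ ε := by
    have h1 := Real.sqrt_le_sqrt hmε
    rwa [Real.sqrt_sq hε] at h1
  have hfact : (algebraMap ℝ (E →L[ℝ] E) r - B) * (algebraMap ℝ (E →L[ℝ] E) (-r) - B) = A := by
    have hm' : r * -r = -m := by rw [← hr2]; ring
    have h1 : (algebraMap ℝ (E →L[ℝ] E) r - B) * (algebraMap ℝ (E →L[ℝ] E) (-r) - B)
        = algebraMap ℝ (E →L[ℝ] E) r * algebraMap ℝ (E →L[ℝ] E) (-r)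
          - algebraMap ℝ (E →L[ℝ] E) r * B
          - B * algebraMap ℝ (E →L[ℝ] E) (-r) + B * B := by
      noncomm_ring
    have h2 : algebraMap ℝ (E →L[ℝ] E) r * algebraMap ℝ (E →L[ℝ] E) (-r)
        = -(m • (1 : E →L[ℝ] E)) := by
      rw [← map_mul, hm', Algebra.algebraMap_eq_smul_one, neg_smul]
    have h3 : algebraMap ℝ (E →L[ℝ] E) r * B = r • B := (Algebra.smul_def r B).symm
    have h4 : B * algebraMap ℝ (E →L[ℝ] E) (-r) = -(r • B) := by
      rw [← Algebra.commutes, ← Algebra.smul_def, neg_smul]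
    rw [h1, h2, h3, h4, hA]
    abel
  by_contra hcon
  push_neg at hcon
  have h₁ : r ∉ spectrum ℝ B := fun hmem => by
    have h2 := hcon r hmem
    rw [abs_of_nonneg hr0] at h2
    linarith
  have h₂ : -r ∉ spectrum ℝ B := fun hmem => by
    have h2 := hcon (-r) hmem
    rw [abs_neg, abs_of_nonneg hr0] at h2
    linarith
  have hu1 := spectrum.notMem_iff.mp h₁
  have hu2 := spectrum.notMem_iff.mp h₂
  exact hAnotunit (hfact ▸ hu1.mul hu2)

end AuxHilbert

theorem lp_summable_sq (g : lp (fun _ : ℤ => ℝ) 2) : Summable fun n => (g n) ^ 2 := by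
  have h := lp.summable_inner (𝕜 := ℝ) g g
  simpa [pow_two] using h

theorem lp_norm_sq (g : lp (fun _ : ℤ => ℝ) 2) : ‖g‖ ^ 2 = ∑' n, (g n) ^ 2 := by
  rw [← real_inner_self_eq_norm_sq, lp.inner_eq_tsum]
  refine tsum_congr fun n => ?_
  simp [RCLike.inner_apply, starRingEnd_apply, sq]

theorem exists_truncation (ψ : lp (fun _ : ℤ => ℝ) 2) {δ : ℝ} (hδ : 0 < δ) :
    ∃ (F : Finset ℤ) (φ : lp (fun _ : ℤ => ℝ) 2),
      (∀ n, φ n = if n ∈ F then ψ n else 0) ∧ ‖ψ - φ‖ ≤ δ := by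
  obtain ⟨F, hF⟩ : ∃ F : Finset ℤ, ∑' n : {x : ℤ // x ∉ F}, (ψ n) ^ 2 < δ ^ 2 := by
    have ht := tendsto_tsum_compl_atTop_zero (fun n : ℤ => (ψ n) ^ 2)
    exact ((tendsto_order.1 ht).2 _ (by positivity : (0:ℝ) < δ ^ 2)).exists
  have hmem : Memℓp (fun n : ℤ => if n ∈ F then ψ n else 0) 2 := by
    apply memℓp_gen
    apply summable_of_ne_finset_zero (s := F)
    intro n hn
    simp only [hn, if_false, norm_zero]
    rw [Real.zero_rpow (by norm_num)]
  set φ : lp (fun _ : ℤ => ℝ) 2 := ⟨fun n => if n ∈ F then ψ n else 0, hmem⟩ with hφ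
  have hφapp : ∀ n, φ n = if n ∈ F then ψ n else 0 := fun n => rfl
  refine ⟨F, φ, hφapp, ?_⟩
  have h1 : ‖ψ - φ‖ ^ 2 = ∑' n, ((ψ - φ) n) ^ 2 := lp_norm_sq _
  have h2 : ∀ n : ℤ, ((ψ - φ) n) ^ 2 = Set.indicator {x : ℤ | x ∉ F} (fun k => (ψ k) ^ 2) n := by
    intro n
    have hsub : (ψ - φ) n = ψ n - φ n := by
      rw [lp.coeFn_sub, Pi.sub_apply]
    by_cases hn : n ∈ F
    · simp [hsub, hφapp, hn, Set.indicator_apply]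
    · simp [hsub, hφapp, hn, Set.indicator_apply]
  have h3 : ‖ψ - φ‖ ^ 2 = ∑' n : {x : ℤ // x ∉ F}, (ψ n) ^ 2 := by
    rw [h1, tsum_congr h2, ← tsum_subtype]
    rfl
  have h4 : ‖ψ - φ‖ ^ 2 < δ ^ 2 := by rw [h3]; exact hF
  nlinarith [norm_nonneg (ψ - φ), hδ]

set_option maxHeartbeats 1000000 in
/-- In the setting of an ergodic Schrödinger operator with an Anderson-type
random perturbation, the Minkowski sum `Λ₀ + S` of the unperturbed almost sure spectrum
and the support of the single-site measure is contained in the perturbed almost sure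
spectrum `Λ₁`. -/
theorem sum_subset_perturbed_spectrum
    {X : Type*} [MetricSpace X] [CompactSpace X] [Nonempty X]
    [MeasurableSpace X] [BorelSpace X]
    -- `T` is a homeomorphism of `X`
    (T : X ≃ₜ X)
    -- `μ` is an ergodic Borel probability measure with full topological support
    (μ : Measure X) [IsProbabilityMeasure μ]
    (hT : Ergodic T μ)
    (hfull : ∀ U : Set X, IsOpen U → U.Nonempty → μ U ≠ 0)
    -- the continuous sampling function
    (f : C(X, ℝ))
    -- the unperturbed Schrödinger operators `H_x` on `ℓ²(ℤ)`
    (H : X → (lp (fun _ : ℤ => ℝ) 2 →L[ℝ] lp (fun _ : ℤ => ℝ) 2))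
    (hH : ∀ (x : X) (ψ : lp (fun _ : ℤ => ℝ) 2) (n : ℤ),
      (H x ψ) n = ψ (n + 1) + ψ (n - 1) + f ((T.toEquiv ^ n) x) * ψ n)
    (hHsa : ∀ x, IsSelfAdjoint (H x))
    -- the unperturbed almost sure spectrum `Λ₀`
    (Λ₀ : Set ℝ) (hΛ₀compact : IsCompact Λ₀)
    (hΛ₀ : ∀ᵐ x ∂μ, spectrum ℝ (H x) = Λ₀)
    -- the single-site measure `ν` with compact support `S` containing at least two points
    (ν : Measure ℝ) [IsProbabilityMeasure ν]
    (S : Set ℝ) (hS : S = {v : ℝ | ∀ U ∈ 𝓝 v, ν U ≠ 0})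
    (hScompact : IsCompact S) (hStwo : S.Nontrivial)
    -- `ν'` is the product measure `ν^ℤ` on `ℝ^ℤ`
    (ν' : Measure (ℤ → ℝ)) [IsProbabilityMeasure ν']
    (hν' : ∀ (F : Finset ℤ) (t : ℤ → Set ℝ), (∀ i, MeasurableSet (t i)) →
      ν' {ω | ∀ i ∈ F, ω i ∈ t i} = ∏ i ∈ F, ν (t i))
    -- the perturbed Schrödinger operators `H_{x,ω}` on `ℓ²(ℤ)`
    (H' : X → (ℤ → ℝ) → (lp (fun _ : ℤ => ℝ) 2 →L[ℝ] lp (fun _ : ℤ => ℝ) 2))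
    (hH' : ∀ (x : X) (ω : ℤ → ℝ), (∀ n, ω n ∈ S) →
      ∀ (ψ : lp (fun _ : ℤ => ℝ) 2) (n : ℤ),
        (H' x ω ψ) n = ψ (n + 1) + ψ (n - 1) + (f ((T.toEquiv ^ n) x) + ω n) * ψ n)
    (hH'sa : ∀ x ω, (∀ n, ω n ∈ S) → IsSelfAdjoint (H' x ω))
    -- the perturbed almost sure spectrum `Λ₁`
    (Λ₁ : Set ℝ) (hΛ₁compact : IsCompact Λ₁)
    (hΛ₁ : ∀ᵐ p ∂(μ.prod ν'), spectrum ℝ (H' p.1 p.2) = Λ₁) :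
    Λ₀ + S ⊆ Λ₁ := by
  intro z hz
  rw [Set.mem_add] at hz
  obtain ⟨a, ha, s, hsS, rfl⟩ := hz
  -- the support of ν has full measure
  have hSclosed : IsClosed S := hScompact.isClosed
  have hSnull : ν Sᶜ = 0 := by
    apply measure_null_of_locally_null
    intro v hv
    rw [hS] at hv
    simp only [Set.mem_compl_iff, Set.mem_setOf_eq, not_forall, not_not] at hv
    obtain ⟨U, hU, hU0⟩ := hv
    exact ⟨U, nhdsWithin_le_nhds hU, hU0⟩
  -- almost every ω has all coordinates in S
  have hωSae : ∀ᵐ ω ∂ν', ∀ n : ℤ, ω n ∈ S := by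
    rw [ae_all_iff]
    intro n
    rw [ae_iff]
    have h1 := hν' {n} (fun _ => Sᶜ) (fun _ => hSclosed.measurableSet.compl)
    have h2 : {ω : ℤ → ℝ | ¬ ω n ∈ S} = {ω : ℤ → ℝ | ∀ i ∈ ({n} : Finset ℤ), ω i ∈ Sᶜ} := by
      ext ω; simp
    rw [h2, h1, Finset.prod_singleton, hSnull]
  -- choose a good base point x
  haveI : (ae μ).NeBot := ae_neBot.mpr (IsProbabilityMeasure.ne_zero μ)
  have hfub : ∀ᵐ x ∂μ, ∀ᵐ ω ∂ν', spectrum ℝ (H' x ω) = Λ₁ :=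
    Measure.ae_ae_of_ae_prod hΛ₁
  obtain ⟨x, hxΛ₀, hxω⟩ := (hΛ₀.and hfub).exists
  -- it suffices to find spectrum points arbitrarily close to a + s
  have hΛ₁closed : IsClosed Λ₁ := hΛ₁compact.isClosed
  rw [← hΛ₁closed.closure_eq, Metric.mem_closure_iff]
  intro ε hε
  set ε' := ε / 6 with hε'def
  have hε'pos : 0 < ε' := by positivity
  -- the unperturbed operator shifted by the spectral value a
  set B := H x - a • (1 : lp (fun _ : ℤ => ℝ) 2 →L[ℝ] lp (fun _ : ℤ => ℝ) 2) with hBdef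
  have hBsa : IsSelfAdjoint B := (hHsa x).sub ((IsSelfAdjoint.all a).smul (IsSelfAdjoint.one _))
  have h0spec : (0 : ℝ) ∈ spectrum ℝ B := by
    rw [hBdef, aux_shift, zero_add, hxΛ₀]
    exact ha
  obtain ⟨ψ, hψ0, hψ⟩ := aux_approx hBsa h0spec hε'pos
  have hψn : 0 < ‖ψ‖ := norm_pos_iff.mpr hψ0
  -- truncate the approximate eigenvector
  set δ := min (ε' * ‖ψ‖ / (‖B‖ + 1)) (‖ψ‖ / 2) with hδdef
  have hδpos : 0 < δ := lt_min (by positivity) (by positivity)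
  obtain ⟨F, φ, hφapp, hφtail⟩ := exists_truncation ψ hδpos
  have hφn : ‖ψ‖ / 2 ≤ ‖φ‖ := by
    have h1 : ‖ψ‖ ≤ ‖φ‖ + ‖ψ - φ‖ := by
      have h2 := norm_add_le φ (ψ - φ)
      rwa [add_sub_cancel] at h2
    have h3 : δ ≤ ‖ψ‖ / 2 := min_le_right _ _
    linarith
  have hφ0 : φ ≠ 0 := by
    intro hc
    rw [hc, norm_zero] at hφn
    linarith
  have hBφ : ‖B φ‖ ≤ 4 * ε' * ‖φ‖ := by
    have h1 : ‖B φ‖ ≤ ‖B ψ‖ + ‖B‖ * ‖ψ - φ‖ := by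
      have h2 : B φ = B ψ - B (ψ - φ) := by rw [map_sub]; abel
      calc ‖B φ‖ = ‖B ψ - B (ψ - φ)‖ := by rw [h2]
        _ ≤ ‖B ψ‖ + ‖B (ψ - φ)‖ := norm_sub_le _ _
        _ ≤ ‖B ψ‖ + ‖B‖ * ‖ψ - φ‖ := by linarith [B.le_opNorm (ψ - φ)]
    have h3 : δ ≤ ε' * ‖ψ‖ / (‖B‖ + 1) := min_le_left _ _
    have h4 : ‖B‖ * ‖ψ - φ‖ ≤ ε' * ‖ψ‖ := by
      have h5 : ‖B‖ * ‖ψ - φ‖ ≤ ‖B‖ * (ε' * ‖ψ‖ / (‖B‖ + 1)) :=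
        mul_le_mul_of_nonneg_left (le_trans hφtail h3) (norm_nonneg _)
      have h6 : ‖B‖ * (ε' * ‖ψ‖ / (‖B‖ + 1)) ≤ ε' * ‖ψ‖ := by
        rw [div_eq_inv_mul, ← mul_assoc]
        have h7 : ‖B‖ * (‖B‖ + 1)⁻¹ ≤ 1 := by
          rw [mul_inv_le_iff₀ (by positivity), one_mul]
          linarith [norm_nonneg B]
        nlinarith [mul_nonneg hε'pos.le hψn.le]
      linarith
    have h8 : ‖ψ‖ ≤ 2 * ‖φ‖ := by linarith
    calc ‖B φ‖ ≤ ε' * ‖ψ‖ + ε' * ‖ψ‖ := by linarith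
      _ = 2 * ε' * ‖ψ‖ := by ring
      _ ≤ 4 * ε' * ‖φ‖ := by nlinarith
  -- choose a good random perturbation ω
  have hsmem : s ∈ {v : ℝ | ∀ U ∈ 𝓝 v, ν U ≠ 0} := hS ▸ hsS
  have hball : ν (Metric.ball s ε') ≠ 0 := hsmem _ (Metric.ball_mem_nhds s hε'pos)
  have hevent : ν' {ω : ℤ → ℝ | ∀ i ∈ F, ω i ∈ Metric.ball s ε'} ≠ 0 := by
    rw [hν' F (fun _ => Metric.ball s ε') (fun _ => measurableSet_ball)]
    rw [Finset.prod_ne_zero_iff]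
    exact fun i _ => hball
  obtain ⟨ω, hωF, hspecω, hωS⟩ :=
    Measure.exists_mem_of_measure_ne_zero_of_ae hevent (ae_restrict_of_ae (hxω.and hωSae))
  simp only [Set.mem_setOf_eq] at hωF
  -- the perturbed operator shifted by a + s
  set B' := H' x ω - (a + s) • (1 : lp (fun _ : ℤ => ℝ) 2 →L[ℝ] lp (fun _ : ℤ => ℝ) 2) with hB'def
  have hB'sa : IsSelfAdjoint B' :=
    (hH'sa x ω hωS).sub ((IsSelfAdjoint.all (a + s)).smul (IsSelfAdjoint.one _))
  -- estimate the perturbation on the truncated vector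
  have hD : ‖B' φ - B φ‖ ≤ ε' * ‖φ‖ := by
    set D := B' φ - B φ with hDdef
    have hDco : ∀ n : ℤ, D n = (ω n - s) * φ n := by
      intro n
      have h1 : D n = B' φ n - B φ n := by
        rw [hDdef, lp.coeFn_sub, Pi.sub_apply]
      have h2 : B' φ n = H' x ω φ n - (a + s) * φ n := by
        rw [hB'def, ContinuousLinearMap.sub_apply, ContinuousLinearMap.smul_apply,
          ContinuousLinearMap.one_apply, lp.coeFn_sub, Pi.sub_apply, lp.coeFn_smul,
          Pi.smul_apply, smul_eq_mul]
      have h3 : B φ n = H x φ n - a * φ n := by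
        rw [hBdef, ContinuousLinearMap.sub_apply, ContinuousLinearMap.smul_apply,
          ContinuousLinearMap.one_apply, lp.coeFn_sub, Pi.sub_apply, lp.coeFn_smul,
          Pi.smul_apply, smul_eq_mul]
      rw [h1, h2, h3, hH' x ω hωS φ n, hH x φ n]
      ring
    have h1 : ‖D‖ ^ 2 ≤ (ε' * ‖φ‖) ^ 2 := by
      rw [lp_norm_sq]
      have hsum1 : Summable fun n : ℤ => (D n) ^ 2 := lp_summable_sq D
      have hsum2 : Summable fun n : ℤ => ε' ^ 2 * (φ n) ^ 2 := (lp_summable_sq φ).mul_left _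
      calc ∑' n : ℤ, (D n) ^ 2 ≤ ∑' n : ℤ, ε' ^ 2 * (φ n) ^ 2 := by
            apply Summable.tsum_le_tsum _ hsum1 hsum2
            intro n
            rw [hDco n]
            by_cases hn : n ∈ F
            · have h5 := hωF n hn
              rw [Metric.mem_ball, Real.dist_eq] at h5
              have h6 : |ω n - s| ≤ ε' := h5.le
              have h7 : (ω n - s) ^ 2 ≤ ε' ^ 2 := by
                have := pow_le_pow_left₀ (abs_nonneg (ω n - s)) h6 2
                rwa [sq_abs] at this
              rw [mul_pow]
              exact mul_le_mul_of_nonneg_right h7 (sq_nonneg _)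
            · rw [hφapp n]
              simp [hn]
        _ = ε' ^ 2 * ∑' n : ℤ, (φ n) ^ 2 := tsum_mul_left
        _ = (ε' * ‖φ‖) ^ 2 := by rw [← lp_norm_sq]; ring
    nlinarith [norm_nonneg D, mul_nonneg hε'pos.le (norm_nonneg φ)]
  -- conclude via the Weyl criterion
  have hB'φ : ‖B' φ‖ ≤ 5 * ε' * ‖φ‖ := by
    have h1 : B' φ = B φ + (B' φ - B φ) := by abel
    calc ‖B' φ‖ = ‖B φ + (B' φ - B φ)‖ := by rw [← h1]
      _ ≤ ‖B φ‖ + ‖B' φ - B φ‖ := norm_add_le _ _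
      _ ≤ 4 * ε' * ‖φ‖ + ε' * ‖φ‖ := add_le_add hBφ hD
      _ = 5 * ε' * ‖φ‖ := by ring
  have h5ε : (0:ℝ) ≤ 5 * ε' := by positivity
  obtain ⟨t, htspec, htle⟩ := aux_weyl hB'sa h5ε hφ0 (by
    calc ‖B' φ‖ ≤ 5 * ε' * ‖φ‖ := hB'φ
      _ = (5 * ε') * ‖φ‖ := by ring)
  have ht1 : t + (a + s) ∈ spectrum ℝ (H' x ω) := by
    rw [← aux_shift, ← hB'def]
    exact htspec
  rw [hspecω] at ht1
  refine ⟨t + (a + s), ht1, ?_⟩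
  rw [Real.dist_eq]
  have h2 : |a + s - (t + (a + s))| = |t| := by
    rw [show a + s - (t + (a + s)) = -t by ring, abs_neg]
  rw [h2]
  calc |t| ≤ 5 * ε' := htle
    _ < ε := by rw [hε'def]; linarith
end

section
/- Let E ∈ ℝ and suppose the cocycle (T, A_E) is uniformly hyperbolic. Then any stable section d^s of (T, A_E) and any unstable section d^u of (T, A_E) satisfy d^s(x) ≠ d^u(x) for all x ∈ X and are homotopic as maps X → ℝP¹. -/
open Topology

noncomputable section

/-- The real projective line, as the projectivization of `ℝ²`. -/
abbrev RP1 : Type := Projectivization ℝ (Fin 2 → ℝ)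

instance : TopologicalSpace RP1 :=
  inferInstanceAs (TopologicalSpace (Quotient (projectivizationSetoid ℝ (Fin 2 → ℝ))))

abbrev SL2 : Type := Matrix.SpecialLinearGroup (Fin 2) ℝ

/-- The action of `SL(2,ℝ)` on `ℝP¹`: `A · span v = span (A v)`. -/
def SL2act (A : SL2) (p : RP1) : RP1 :=
  Projectivization.map ((A : Matrix (Fin 2) (Fin 2) ℝ).mulVecLin)
    (by
      rw [Matrix.coe_mulVecLin]
      exact Matrix.mulVec_injective_iff_isUnit.2
        ((Matrix.isUnit_iff_isUnit_det _).2 (by simp))) p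

/-- The Schrödinger cocycle matrix `A_E(x)`. -/
def schrodingerCocycle {X : Type*} (f : X → ℝ) (E : ℝ) (x : X) : SL2 :=
  ⟨!![E - f x, -1; 1, 0], by simp [Matrix.det_fin_two_of]⟩

/-- Iterates `A^n(x) = A(T^{n-1}x) ⋯ A(x)` for `n ∈ ℕ`. -/
def cocIterN {X : Type*} (T : X → X) (A : X → SL2) : ℕ → X → SL2
  | 0, _ => 1
  | n + 1, x => A (T^[n] x) * cocIterN T A n x

/-- Iterates `A^n(x)` for `n ∈ ℤ`, with `A^{-n}(x) = (A^n(T^{-n}x))⁻¹`. -/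
def cocIterZ {X : Type*} [TopologicalSpace X] (T : X ≃ₜ X) (A : X → SL2) (n : ℤ) (x : X) : SL2 :=
  if 0 ≤ n then cocIterN T A n.toNat x
  else (cocIterN T A (-n).toNat ((⇑T.symm)^[(-n).toNat] x))⁻¹

/-- Operator norm of a matrix in `SL(2,ℝ)` (acting on Euclidean `ℝ²`). -/
def SL2norm (A : SL2) : ℝ := ‖Matrix.toEuclideanCLM (𝕜 := ℝ) (A : Matrix (Fin 2) (Fin 2) ℝ)‖

/-- Uniform hyperbolicity of the cocycle `(T, A)`. -/
def UniformlyHyperbolic {X : Type*} [TopologicalSpace X] (T : X ≃ₜ X) (A : X → SL2) : Prop :=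
  ∃ C > 0, ∃ l > 1, ∀ (x : X) (n : ℤ), C * l ^ |n| ≤ SL2norm (cocIterZ T A n x)

/-- An invariant section of the cocycle `(T, A)`. -/
def IsInvariantSection {X : Type*} [TopologicalSpace X] (T : X ≃ₜ X) (A : X → SL2)
    (d : C(X, RP1)) : Prop :=
  ∀ x, SL2act (A x) (d x) = d (T x)

/-- An unstable section of the cocycle `(T, A)`. -/
def IsUnstableSection {X : Type*} [TopologicalSpace X] (T : X ≃ₜ X) (A : X → SL2)
    (d : C(X, RP1)) : Prop :=
  IsInvariantSection T A d ∧
    ∃ C > 0, ∃ l > 1, ∀ (x : X) (n : ℕ) (v : Fin 2 → ℝ) (hv : v ≠ 0),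
      Projectivization.mk ℝ v hv = d x →
        ‖((cocIterZ T A (-(n : ℤ)) x : Matrix (Fin 2) (Fin 2) ℝ).mulVec v)‖ ≤ C * (l ^ n)⁻¹ * ‖v‖

/-- A stable section of the cocycle `(T, A)`. -/
def IsStableSection {X : Type*} [TopologicalSpace X] (T : X ≃ₜ X) (A : X → SL2)
    (d : C(X, RP1)) : Prop :=
  IsInvariantSection T A d ∧
    ∃ C > 0, ∃ l > 1, ∀ (x : X) (n : ℕ) (v : Fin 2 → ℝ) (hv : v ≠ 0),
      Projectivization.mk ℝ v hv = d x →
        ‖((cocIterN T A n x : Matrix (Fin 2) (Fin 2) ℝ).mulVec v)‖ ≤ C * (l ^ n)⁻¹ * ‖v‖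

namespace RP1Aux

open Complex Matrix

/-- Complexification of a vector in `ℝ²`. -/
def cz (v : Fin 2 → ℝ) : ℂ := (v 0 : ℂ) + (v 1 : ℂ) * Complex.I

lemma cz_eq_zero {v : Fin 2 → ℝ} : cz v = 0 ↔ v = 0 := by
  constructor
  · intro h
    have hre := congrArg Complex.re h
    have him := congrArg Complex.im h
    simp [cz] at hre him
    funext i
    fin_cases i <;> simpa [hre, him]
  · intro h; simp [h, cz]

lemma cz_ne_zero {v : Fin 2 → ℝ} (hv : v ≠ 0) : cz v ≠ 0 := fun h => hv (cz_eq_zero.1 h)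

lemma cz_smul (c : ℝ) (v : Fin 2 → ℝ) : cz (c • v) = (c : ℂ) * cz v := by
  simp [cz]; ring

lemma eq_smul_of_cz {v w : Fin 2 → ℝ} {c : ℝ} (h : cz v = (c : ℂ) * cz w) : v = c • w := by
  have hre := congrArg Complex.re h
  have him := congrArg Complex.im h
  simp [cz] at hre him
  funext i
  fin_cases i <;> simpa [hre, him]

/-- The square-of-angle map on nonzero vectors. -/
def Q0 (v : {v : Fin 2 → ℝ // v ≠ 0}) : ℂ := cz v.1 ^ 2 / (Complex.normSq (cz v.1) : ℂ)

/-- The embedding `ℝP¹ → ℂ`, `span v ↦ (v₀+v₁i)²/|v₀+v₁i|²`. -/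
def qRP : RP1 → ℂ := Quotient.lift Q0 <| by
  rintro ⟨v, hv⟩ ⟨w, hw⟩ h
  obtain ⟨c, hc⟩ := h
  have hc' : (c : ℝ) • w = v := hc
  have hcz : cz v = ((c : ℝ) : ℂ) * cz w := by rw [← hc', cz_smul]
  have hw0 : cz w ≠ 0 := cz_ne_zero hw
  have hc0 : ((c : ℝ) : ℂ) ≠ 0 := by exact_mod_cast c.ne_zero
  have hn0 : Complex.normSq (cz w) ≠ 0 := (Complex.normSq_pos.2 hw0).ne'
  have hn0c : (Complex.normSq (cz w) : ℂ) ≠ 0 := by exact_mod_cast hn0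
  simp only [Q0, hcz, _root_.map_mul, Complex.normSq_ofReal]
  rw [Complex.ofReal_mul, Complex.ofReal_mul]
  rw [div_eq_div_iff (by exact mul_ne_zero (mul_ne_zero hc0 hc0) hn0c) hn0c]
  ring

lemma qRP_mk (v : Fin 2 → ℝ) (hv : v ≠ 0) :
    qRP (Projectivization.mk ℝ v hv) = cz v ^ 2 / (Complex.normSq (cz v) : ℂ) := rfl

lemma qRP_ne_zero (p : RP1) : qRP p ≠ 0 := by
  induction p using Projectivization.ind with
  | h v hv =>
    rw [qRP_mk]
    exact div_ne_zero (pow_ne_zero _ (cz_ne_zero hv))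
      (by simpa using (Complex.normSq_pos.2 (cz_ne_zero hv)).ne')

lemma abs_qRP (p : RP1) : ‖qRP p‖ = 1 := by
  induction p using Projectivization.ind with
  | h v hv =>
    rw [qRP_mk]
    have h0 : cz v ≠ 0 := cz_ne_zero hv
    rw [norm_div, norm_pow, Complex.norm_real, Real.norm_of_nonneg (Complex.normSq_nonneg _),
      ← Complex.sq_norm]
    have : ‖cz v‖ ≠ 0 := by simpa using h0
    field_simp

lemma qRP_injective : Function.Injective qRP := by
  intro p q h
  induction p using Projectivization.ind with
  | h v hv =>
  induction q using Projectivization.ind with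
  | h w hw =>
  rw [qRP_mk, qRP_mk] at h
  have hv0 : cz v ≠ 0 := cz_ne_zero hv
  have hw0 : cz w ≠ 0 := cz_ne_zero hw
  have hnv : (Complex.normSq (cz v) : ℂ) ≠ 0 := by simpa using (Complex.normSq_pos.2 hv0).ne'
  have hnw : (Complex.normSq (cz w) : ℂ) ≠ 0 := by simpa using (Complex.normSq_pos.2 hw0).ne'
  rw [div_eq_div_iff hnv hnw] at h
  have hsq : (cz v * (‖cz w‖ : ℂ)) ^ 2 = (cz w * (‖cz v‖ : ℂ)) ^ 2 := by
    have e1 : (Complex.normSq (cz v) : ℂ) = ((‖cz v‖ : ℂ)) ^ 2 := by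
      rw [← Complex.sq_norm]; push_cast; ring
    have e2 : (Complex.normSq (cz w) : ℂ) = ((‖cz w‖ : ℂ)) ^ 2 := by
      rw [← Complex.sq_norm]; push_cast; ring
    rw [e1, e2] at h
    ring_nf
    ring_nf at h
    linear_combination h
  rw [sq, sq] at hsq
  rcases mul_self_eq_mul_self_iff.1 hsq with h1 | h1
  · have hcz : cz v = (((‖cz v‖ / ‖cz w‖ : ℝ)) : ℂ) * cz w := by
      have hb : ((‖cz w‖ : ℂ)) ≠ 0 := by simpa using hw0
      push_cast
      field_simp
      linear_combination h1
    exact (Projectivization.mk_eq_mk_iff' ℝ v w hv hw).2 ⟨_, (eq_smul_of_cz hcz).symm⟩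
  · have hcz : cz v = (((-(‖cz v‖ / ‖cz w‖) : ℝ)) : ℂ) * cz w := by
      have hb : ((‖cz w‖ : ℂ)) ≠ 0 := by simpa using hw0
      push_cast
      field_simp
      linear_combination h1
    exact (Projectivization.mk_eq_mk_iff' ℝ v w hv hw).2 ⟨_, (eq_smul_of_cz hcz).symm⟩

lemma continuous_cz_sub : Continuous (fun v : {v : Fin 2 → ℝ // v ≠ 0} => cz v.1) := by
  apply Continuous.add
  · exact Complex.continuous_ofReal.comp ((continuous_apply 0).comp continuous_subtype_val)
  · exact (Complex.continuous_ofReal.comp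
      ((continuous_apply 1).comp continuous_subtype_val)).mul continuous_const

lemma continuous_qRP : Continuous qRP := by
  apply Continuous.quotient_lift
  apply Continuous.div
  · exact continuous_cz_sub.pow 2
  · exact Complex.continuous_ofReal.comp (Complex.continuous_normSq.comp continuous_cz_sub)
  · intro v; exact_mod_cast (Complex.normSq_pos.2 (cz_ne_zero v.2)).ne'

lemma vec_cs_ne (φ : ℝ) : ![Real.cos φ, Real.sin φ] ≠ (0 : Fin 2 → ℝ) := by
  intro h
  have h0 := congrFun h 0
  have h1 := congrFun h 1
  simp at h0 h1
  nlinarith [Real.sin_sq_add_cos_sq φ]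

def psi (φ : ℝ) : RP1 := Projectivization.mk ℝ ![Real.cos φ, Real.sin φ] (vec_cs_ne φ)

lemma continuous_psi : Continuous psi := by
  have h : Continuous (fun φ : ℝ =>
      (⟨![Real.cos φ, Real.sin φ], vec_cs_ne φ⟩ : {v : Fin 2 → ℝ // v ≠ 0})) := by
    apply Continuous.subtype_mk
    apply continuous_pi
    intro i
    fin_cases i
    · simpa using Real.continuous_cos
    · simpa using Real.continuous_sin
  exact continuous_quotient_mk'.comp h

lemma cz_cs (θ : ℝ) : cz ![Real.cos θ, Real.sin θ] = Complex.exp (θ * Complex.I) := by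
  rw [Complex.exp_mul_I, ← Complex.ofReal_cos, ← Complex.ofReal_sin]
  simp [cz]

lemma psi_surj (p : RP1) : ∃ φ ∈ Set.Icc (-Real.pi) Real.pi, psi φ = p := by
  induction p using Projectivization.ind with
  | h v hv =>
    have hz0 : cz v ≠ 0 := cz_ne_zero hv
    refine ⟨Complex.arg (cz v), ⟨(Complex.neg_pi_lt_arg (cz v)).le, Complex.arg_le_pi (cz v)⟩, ?_⟩
    have habs : (‖cz v‖ : ℂ) * Complex.exp (Complex.arg (cz v) * Complex.I) = cz v :=
      Complex.norm_mul_exp_arg_mul_I (cz v)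
    have hv_eq : v = ‖cz v‖ •
        ![Real.cos (Complex.arg (cz v)), Real.sin (Complex.arg (cz v))] := by
      apply eq_smul_of_cz
      rw [cz_cs]
      exact habs.symm
    exact ((Projectivization.mk_eq_mk_iff' ℝ v _ hv (vec_cs_ne _)).2 ⟨_, hv_eq.symm⟩).symm

instance : CompactSpace RP1 := by
  refine ⟨?_⟩
  have h : (Set.univ : Set RP1) = psi '' Set.Icc (-Real.pi) Real.pi := by
    ext p
    simp only [Set.mem_univ, true_iff, Set.mem_image]
    obtain ⟨φ, hφ, hp⟩ := psi_surj p
    exact ⟨φ, hφ, hp⟩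
  rw [h]
  exact isCompact_Icc.image continuous_psi

lemma isEmbedding_qRP : IsEmbedding qRP :=
  (continuous_qRP.isClosedEmbedding qRP_injective).isEmbedding

def Rot (φ : ℝ) : SL2 :=
  ⟨!![Real.cos φ, -Real.sin φ; Real.sin φ, Real.cos φ], by
    simp [Matrix.det_fin_two_of]
    nlinarith [Real.sin_sq_add_cos_sq φ]⟩

lemma SL2_mulVec_ne_zero (B : SL2) {v : Fin 2 → ℝ} (hv : v ≠ 0) :
    (B : Matrix (Fin 2) (Fin 2) ℝ) *ᵥ v ≠ 0 := by
  intro h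
  apply hv
  have h2 : ((B⁻¹ : SL2) : Matrix (Fin 2) (Fin 2) ℝ) *ᵥ ((B : Matrix (Fin 2) (Fin 2) ℝ) *ᵥ v)
      = v := by
    rw [Matrix.mulVec_mulVec, ← Matrix.SpecialLinearGroup.coe_mul, inv_mul_cancel,
      Matrix.SpecialLinearGroup.coe_one, Matrix.one_mulVec]
  rw [h, Matrix.mulVec_zero] at h2
  exact h2.symm

lemma mk_congr {v w : Fin 2 → ℝ} {hv : v ≠ 0} {hw : w ≠ 0} (h : v = w) :
    Projectivization.mk ℝ v hv = Projectivization.mk ℝ w hw := by subst h; rfl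

lemma SL2act_mk (A : SL2) {v : Fin 2 → ℝ} (hv : v ≠ 0) :
    SL2act A (Projectivization.mk ℝ v hv) =
      Projectivization.mk ℝ ((A : Matrix (Fin 2) (Fin 2) ℝ) *ᵥ v) (SL2_mulVec_ne_zero A hv) := rfl

lemma cz_rot (φ : ℝ) (v : Fin 2 → ℝ) :
    cz ((Rot φ : Matrix (Fin 2) (Fin 2) ℝ) *ᵥ v) = Complex.exp (φ * Complex.I) * cz v := by
  have h0 : ((Rot φ : Matrix (Fin 2) (Fin 2) ℝ) *ᵥ v) 0 = Real.cos φ * v 0 - Real.sin φ * v 1 := by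
    simp [Rot, Matrix.mulVec, dotProduct, Fin.sum_univ_two]
    ring
  have h1 : ((Rot φ : Matrix (Fin 2) (Fin 2) ℝ) *ᵥ v) 1 = Real.sin φ * v 0 + Real.cos φ * v 1 := by
    simp [Rot, Matrix.mulVec, dotProduct, Fin.sum_univ_two]
  rw [cz, h0, h1, Complex.exp_mul_I, ← Complex.ofReal_cos, ← Complex.ofReal_sin, cz]
  push_cast
  linear_combination (-(Complex.sin (φ:ℂ) * ((v 1 : ℝ) : ℂ))) * Complex.I_sq

lemma SL2act_rot_zero (p : RP1) : SL2act (Rot 0) p = p := by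
  induction p using Projectivization.ind with
  | h v hv =>
    rw [SL2act_mk]
    apply mk_congr
    have h : ((Rot 0 : SL2) : Matrix (Fin 2) (Fin 2) ℝ) = 1 := by
      simp only [Rot, Real.cos_zero, Real.sin_zero, neg_zero]
      exact Matrix.one_fin_two.symm
    rw [h, Matrix.one_mulVec]

lemma qRP_rot (φ : ℝ) (p : RP1) :
    qRP (SL2act (Rot φ) p) = Complex.exp (φ * Complex.I) ^ 2 * qRP p := by
  induction p using Projectivization.ind with
  | h v hv =>
    rw [SL2act_mk, qRP_mk, qRP_mk, cz_rot]
    have habs : Complex.normSq (Complex.exp (φ * Complex.I) * cz v) = Complex.normSq (cz v) := by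
      rw [_root_.map_mul, Complex.normSq_eq_norm_sq, Complex.norm_exp_ofReal_mul_I]
      norm_num
    rw [habs, mul_pow, mul_div_assoc]

section Cocycle

variable {X : Type*} [TopologicalSpace X]

lemma mk_cocIterN (T : X ≃ₜ X) (A : X → SL2) {d : C(X, RP1)}
    (hd : IsInvariantSection T A d) (n : ℕ) (x : X) {v : Fin 2 → ℝ} (hv : v ≠ 0)
    (h : Projectivization.mk ℝ v hv = d x) :
    Projectivization.mk ℝ ((cocIterN (⇑T) A n x : Matrix (Fin 2) (Fin 2) ℝ) *ᵥ v)
      (SL2_mulVec_ne_zero _ hv) = d ((⇑T)^[n] x) := by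
  induction n with
  | zero =>
    exact (mk_congr (by
      show ((1 : SL2) : Matrix (Fin 2) (Fin 2) ℝ) *ᵥ v = v
      rw [Matrix.SpecialLinearGroup.coe_one, Matrix.one_mulVec])).trans h
  | succ m ih =>
    have hstep :
        Projectivization.mk ℝ ((cocIterN (⇑T) A (m + 1) x : Matrix (Fin 2) (Fin 2) ℝ) *ᵥ v)
          (SL2_mulVec_ne_zero _ hv)
        = SL2act (A ((⇑T)^[m] x))
            (Projectivization.mk ℝ ((cocIterN (⇑T) A m x : Matrix (Fin 2) (Fin 2) ℝ) *ᵥ v)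
              (SL2_mulVec_ne_zero _ hv)) := by
      rw [SL2act_mk]
      apply mk_congr
      show ((A ((⇑T)^[m] x) * cocIterN (⇑T) A m x : SL2) : Matrix (Fin 2) (Fin 2) ℝ) *ᵥ v = _
      rw [Matrix.SpecialLinearGroup.coe_mul, ← Matrix.mulVec_mulVec]
    rw [hstep, ih, hd]
    exact congrArg d (Function.iterate_succ_apply' (⇑T) m x).symm

lemma cocIterZ_neg (T : X ≃ₜ X) (A : X → SL2) (n : ℕ) (x : X) :
    cocIterZ T A (-(n : ℤ)) ((⇑T)^[n] x) = (cocIterN (⇑T) A n x)⁻¹ := by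
  rcases Nat.eq_zero_or_pos n with h | h
  · subst h
    show cocIterZ T A 0 x = _
    rw [cocIterZ, if_pos le_rfl]
    show cocIterN (⇑T) A 0 x = _
    show (1 : SL2) = ((1 : SL2))⁻¹
    rw [inv_one]
  · have h1 : ¬ (0 ≤ -(n : ℤ)) := by omega
    rw [cocIterZ, if_neg h1]
    have h2 : (-(-(n : ℤ))).toNat = n := by omega
    rw [h2]
    rw [(Function.LeftInverse.iterate T.symm_apply_apply n) x]

lemma sections_ne {T : X ≃ₜ X} {A : X → SL2} {ds du : C(X, RP1)}
    (hds : IsStableSection T A ds) (hdu : IsUnstableSection T A du) (x : X) :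
    ds x ≠ du x := by
  intro heq
  obtain ⟨hinv_s, Cs, hCs, ls, hls, hs⟩ := hds
  obtain ⟨hinv_u, Cu, hCu, lu, hlu, hu⟩ := hdu
  have hv : (ds x).rep ≠ 0 := Projectivization.rep_nonzero (ds x)
  set v : Fin 2 → ℝ := (ds x).rep with hv_def
  have hmk : Projectivization.mk ℝ v hv = ds x := Projectivization.mk_rep (ds x)
  obtain ⟨n, hn⟩ := pow_unbounded_of_one_lt (Cs * Cu) (by nlinarith : (1:ℝ) < ls * lu)
  set w := (cocIterN (⇑T) A n x : Matrix (Fin 2) (Fin 2) ℝ) *ᵥ v with hw_def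
  have hw : w ≠ 0 := SL2_mulVec_ne_zero _ hv
  have hstab := hs x n v hv hmk
  have hmkw : Projectivization.mk ℝ w hw = du ((⇑T)^[n] x) :=
    mk_cocIterN T A hinv_u n x hv (hmk.trans heq)
  have hunst := hu ((⇑T)^[n] x) n w hw hmkw
  rw [cocIterZ_neg] at hunst
  have hback : (((cocIterN (⇑T) A n x)⁻¹ : SL2) : Matrix (Fin 2) (Fin 2) ℝ) *ᵥ w = v := by
    rw [hw_def, Matrix.mulVec_mulVec, ← Matrix.SpecialLinearGroup.coe_mul, inv_mul_cancel,
      Matrix.SpecialLinearGroup.coe_one, Matrix.one_mulVec]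
  rw [show (((cocIterN (⇑T) A n x)⁻¹ : SL2) : Matrix (Fin 2) (Fin 2) ℝ).mulVec w = v from hback]
    at hunst
  have hvpos : 0 < ‖v‖ := norm_pos_iff.2 hv
  have hls' : (0:ℝ) < ls ^ n := by positivity
  have hlu' : (0:ℝ) < lu ^ n := by positivity
  have hchain : ‖v‖ ≤ Cu * (lu ^ n)⁻¹ * (Cs * (ls ^ n)⁻¹ * ‖v‖) := by
    calc ‖v‖ ≤ Cu * (lu ^ n)⁻¹ * ‖w‖ := hunst
    _ ≤ Cu * (lu ^ n)⁻¹ * (Cs * (ls ^ n)⁻¹ * ‖v‖) :=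
        mul_le_mul_of_nonneg_left hstab (by positivity)
  have key : ‖v‖ * (ls ^ n * lu ^ n) ≤ Cs * Cu * ‖v‖ := by
    calc ‖v‖ * (ls ^ n * lu ^ n)
        ≤ (Cu * (lu ^ n)⁻¹ * (Cs * (ls ^ n)⁻¹ * ‖v‖)) * (ls ^ n * lu ^ n) :=
          mul_le_mul_of_nonneg_right hchain (le_of_lt (mul_pos hls' hlu'))
      _ = Cs * Cu * ‖v‖ := by field_simp
  have hpow : (ls * lu) ^ n = ls ^ n * lu ^ n := mul_pow ls lu n
  nlinarith [key, hn, hvpos, hpow]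

end Cocycle

lemma homotopic_of_ne {Y : Type*} [TopologicalSpace Y] (ds du : C(Y, RP1))
    (hne : ∀ x, ds x ≠ du x) : ds.Homotopic du := by
  set c : Y → ℂ := fun x => qRP (du x) / qRP (ds x) with hc
  have hcont_c : Continuous c :=
    (continuous_qRP.comp du.continuous).div (continuous_qRP.comp ds.continuous)
      (fun x => qRP_ne_zero _)
  have habs_c : ∀ x, ‖c x‖ = 1 := by
    intro x
    rw [hc]
    simp [norm_div, abs_qRP]
  have hc_ne_one : ∀ x, c x ≠ 1 := by
    intro x h
    apply hne x
    apply qRP_injective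
    exact ((div_eq_one_iff_eq (qRP_ne_zero _)).1 h).symm
  have hslit : ∀ x, -(c x) ∈ Complex.slitPlane := by
    intro x
    by_contra hmem
    rw [Complex.mem_slitPlane_iff] at hmem
    push_neg at hmem
    obtain ⟨hre, him⟩ := hmem
    have him' : (c x).im = 0 := by simpa using him
    have hre' : 0 ≤ (c x).re := by simpa using hre
    have hcx : c x = (((c x).re : ℝ) : ℂ) := Complex.ext rfl (by simp [him'])
    have habs := habs_c x
    rw [hcx, Complex.norm_real, Real.norm_of_nonneg hre'] at habs
    exact hc_ne_one x (by rw [hcx, habs]; norm_num)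
  set θ : Y → ℝ := fun x => Complex.arg (-(c x)) + Real.pi with hθ
  have hθcont : Continuous θ := by
    apply Continuous.add _ continuous_const
    rw [continuous_iff_continuousAt]
    intro x
    exact (Complex.continuousAt_arg (hslit x)).comp (f := fun y => -(c y)) hcont_c.neg.continuousAt
  have hexp : ∀ x, Complex.exp ((θ x : ℝ) * Complex.I) = c x := by
    intro x
    have h1 : (‖-(c x)‖ : ℂ) * Complex.exp (Complex.arg (-(c x)) * Complex.I)
        = -(c x) := Complex.norm_mul_exp_arg_mul_I _
    have h2 : ‖-(c x)‖ = 1 := by rw [norm_neg]; exact habs_c x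
    rw [h2, Complex.ofReal_one, one_mul] at h1
    rw [hθ]
    push_cast
    rw [add_mul, Complex.exp_add, Complex.exp_pi_mul_I, h1]
    ring
  refine ⟨⟨⟨fun p => SL2act (Rot ((p.1 : ℝ) * θ p.2 / 2)) (ds p.2), ?_⟩, ?_, ?_⟩⟩
  · rw [isEmbedding_qRP.continuous_iff]
    have heq : (qRP ∘ fun p : unitInterval × Y => SL2act (Rot ((p.1 : ℝ) * θ p.2 / 2)) (ds p.2))
        = fun p : unitInterval × Y =>
            Complex.exp ((((p.1 : ℝ) * θ p.2 / 2 : ℝ) : ℂ) * Complex.I) ^ 2 * qRP (ds p.2) := by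
      funext p
      exact qRP_rot _ _
    rw [heq]
    apply Continuous.mul
    · apply Continuous.pow
      apply Complex.continuous_exp.comp
      apply Continuous.mul _ continuous_const
      apply Complex.continuous_ofReal.comp
      exact ((continuous_subtype_val.comp continuous_fst).mul
        (hθcont.comp continuous_snd)).div_const 2
    · exact continuous_qRP.comp (ds.continuous.comp continuous_snd)
  · intro x
    show SL2act (Rot ((((0 : unitInterval) : ℝ)) * θ x / 2)) (ds x) = ds x
    norm_num [SL2act_rot_zero]
  · intro x
    show SL2act (Rot ((((1 : unitInterval) : ℝ)) * θ x / 2)) (ds x) = du x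
    apply qRP_injective
    rw [qRP_rot]
    have hsq : Complex.exp (((((1 : unitInterval) : ℝ) * θ x / 2 : ℝ) : ℂ) * Complex.I) ^ 2
        = Complex.exp ((θ x : ℝ) * Complex.I) := by
      rw [sq, ← Complex.exp_add]
      push_cast
      ring_nf
    rw [hsq, hexp]
    rw [hc]
    exact div_mul_cancel₀ _ (qRP_ne_zero _)

end RP1Aux

/-- If the Schrödinger cocycle `(T, A_E)` is uniformly hyperbolic, then any
stable section and any unstable section are everywhere distinct and are homotopic as maps
`X → ℝP¹`. -/
theorem stable_unstable_ne_and_homotopic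
    {X : Type*} [MetricSpace X] [CompactSpace X] [Nonempty X]
    (T : X ≃ₜ X) (f : C(X, ℝ)) (E : ℝ)
    (hUH : UniformlyHyperbolic T (schrodingerCocycle (⇑f) E))
    (ds du : C(X, RP1))
    (hds : IsStableSection T (schrodingerCocycle (⇑f) E) ds)
    (hdu : IsUnstableSection T (schrodingerCocycle (⇑f) E) du) :
    (∀ x, ds x ≠ du x) ∧ ds.Homotopic du := by
  refine ⟨fun x => RP1Aux.sections_ne hds hdu x, ?_⟩
  exact RP1Aux.homotopic_of_ne ds du (fun x => RP1Aux.sections_ne hds hdu x)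

end
end

section
/- Suppose d is an invariant section of (T, A) and g̃ is a family of lifts for A. Then: (i) for each x ∈ X, the quantity g̃(x, y) − y takes the same value for all y ∈ ℝ with π(y) = d(x), so the displacement function φ : X → ℝ is well defined and continuous; and (ii) for μ-almost every x ∈ X and every y ∈ ℝ with π(y) = d(x), lim_{n→∞} (G̃_{x,n}(y) − y)/n = ∫_X φ dμ. -/
set_option linter.unusedSectionVars false


open MeasureTheory Topology Filter

noncomputable section

instance : TopologicalSpace SL2 :=
  TopologicalSpace.induced (fun A : SL2 => (A : Matrix (Fin 2) (Fin 2) ℝ)) inferInstance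

/-- The covering map `π : ℝ → ℝP¹`, `π(y) = span (cos(πy), sin(πy))`. -/
def RP1proj (y : ℝ) : RP1 :=
  Projectivization.mk ℝ ![Real.cos (Real.pi * y), Real.sin (Real.pi * y)] (by
    intro h
    have h0 : Real.cos (Real.pi * y) = 0 := by
      have := congrFun h 0; simpa using this
    have h1 : Real.sin (Real.pi * y) = 0 := by
      have := congrFun h 1; simpa using this
    nlinarith [Real.sin_sq_add_cos_sq (Real.pi * y)])

/-- A (continuous, commuting with the deck transformation) family of lifts for the projective
action of `A`. -/
def IsLiftFamily {X : Type*} [TopologicalSpace X] (A : X → SL2) (g : X → ℝ → ℝ) : Prop :=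
  Continuous (fun p : X × ℝ => g p.1 p.2) ∧
    (∀ x y, RP1proj (g x y) = SL2act (A x) (RP1proj y)) ∧
    ∀ x y, g x (y + 1) = g x y + 1

/-- Iterates of a family of lifts: `G̃_{x,n} = g̃(T^{n-1}x, ·) ∘ ⋯ ∘ g̃(x, ·)`. -/
def liftIter {X : Type*} (T : X → X) (g : X → ℝ → ℝ) : ℕ → X → ℝ → ℝ
  | 0, _, y => y
  | n + 1, x, y => liftIter T g n (T x) (g x y)

namespace RP1Aux

open Real

lemma exists_index {v : Fin 2 → ℝ} (hv : v ≠ 0) : v 0 ≠ 0 ∨ v 1 ≠ 0 := by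
  by_contra h
  push_neg at h
  exact hv (funext fun i => by fin_cases i <;> simp [h.1, h.2])

lemma normsq_pos {v : Fin 2 → ℝ} (hv : v ≠ 0) : 0 < (v 0) ^ 2 + (v 1) ^ 2 := by
  rcases exists_index hv with h | h
  · have : 0 < (v 0) ^ 2 := by positivity
    nlinarith [sq_nonneg (v 1)]
  · have : 0 < (v 1) ^ 2 := by positivity
    nlinarith [sq_nonneg (v 0)]

lemma RP1proj_add_one (z : ℝ) : RP1proj (z + 1) = RP1proj z := by
  rw [RP1proj, RP1proj, Projectivization.mk_eq_mk_iff]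
  refine ⟨-1, ?_⟩
  funext i
  fin_cases i <;>
    simp [Units.smul_def, mul_add, Real.cos_add_pi, Real.sin_add_pi]

lemma RP1proj_add_int (k : ℤ) : ∀ y : ℝ, RP1proj (y + k) = RP1proj y := by
  induction k using Int.induction_on with
  | zero => intro y; simp
  | succ n ih =>
      intro y
      have h2 : y + ((n + 1 : ℤ) : ℝ) = (y + (n : ℤ)) + 1 := by push_cast; ring
      rw [h2, RP1proj_add_one, ih]
  | pred n ih =>
      intro y
      have h2 : y + ((-(n : ℤ) - 1 : ℤ) : ℝ) + 1 = y + ((-(n : ℤ) : ℤ) : ℝ) := by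
        push_cast; ring
      calc RP1proj (y + ((-(n : ℤ) - 1 : ℤ) : ℝ))
          = RP1proj (y + ((-(n : ℤ) - 1 : ℤ) : ℝ) + 1) := (RP1proj_add_one _).symm
        _ = RP1proj (y + ((-(n : ℤ) : ℤ) : ℝ)) := by rw [h2]
        _ = RP1proj y := ih y

lemma RP1proj_eq_iff {y y' : ℝ} : RP1proj y = RP1proj y' ↔ ∃ k : ℤ, y' = y + k := by
  constructor
  · intro h
    rw [RP1proj, RP1proj, Projectivization.mk_eq_mk_iff] at h
    obtain ⟨a, ha⟩ := h
    have h0 := congrFun ha 0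
    have h1 := congrFun ha 1
    simp [Units.smul_def] at h0 h1
    have hs : Real.sin (π * y - π * y') = 0 := by
      rw [Real.sin_sub, ← h0, ← h1]; ring
    obtain ⟨n, hn⟩ := Real.sin_eq_zero_iff.1 hs
    refine ⟨-n, ?_⟩
    have h2 : π * y' = π * (y + ((-n : ℤ) : ℝ)) := by push_cast; linear_combination hn
    exact mul_left_cancel₀ Real.pi_ne_zero h2
  · rintro ⟨k, rfl⟩
    exact (RP1proj_add_int k y).symm

lemma RP1proj_surjective : Function.Surjective RP1proj := by
  intro p
  induction p using Projectivization.ind with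
  | h v hv =>
    set z : ℂ := ⟨v 0, v 1⟩ with hzdef
    have hz0 : z ≠ 0 := by
      rcases exists_index hv with h | h <;>
        simp [Complex.ext_iff, hzdef] <;> tauto
    refine ⟨z.arg / π, ?_⟩
    rw [RP1proj, Projectivization.mk_eq_mk_iff]
    have hπ : π * (z.arg / π) = z.arg := by
      field_simp
    have habs : ‖z‖ ≠ 0 := norm_ne_zero_iff.mpr hz0
    have hre : z.re = v 0 := rfl
    have him : z.im = v 1 := rfl
    have hc : Real.cos (π * (z.arg / π)) = ‖z‖⁻¹ * v 0 := by
      rw [hπ, Complex.cos_arg hz0, hre, div_eq_inv_mul]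
    have hs : Real.sin (π * (z.arg / π)) = ‖z‖⁻¹ * v 1 := by
      rw [hπ, Complex.sin_arg, him, div_eq_inv_mul]
    refine ⟨Units.mk0 ‖z‖⁻¹ (inv_ne_zero habs), ?_⟩
    funext i
    fin_cases i
    · simpa [Units.smul_def] using hc.symm
    · simpa [Units.smul_def] using hs.symm

lemma continuous_RP1proj : Continuous RP1proj := by
  have hvec : Continuous fun y : ℝ =>
      (![Real.cos (Real.pi * y), Real.sin (Real.pi * y)] : Fin 2 → ℝ) := by
    refine continuous_pi fun i => ?_
    fin_cases i
    · simp
      exact Real.continuous_cos.comp (continuous_const.mul continuous_id)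
    · simp
      exact Real.continuous_sin.comp (continuous_const.mul continuous_id)
  exact continuous_quotient_mk'.comp (hvec.subtype_mk fun y => by
    intro h
    have h0 : Real.cos (Real.pi * y) = 0 := by
      have := congrFun h 0; simpa using this
    have h1 : Real.sin (Real.pi * y) = 0 := by
      have := congrFun h 1; simpa using this
    nlinarith [Real.sin_sq_add_cos_sq (Real.pi * y)])

lemma mk_eq_mk_of_det {v w : Fin 2 → ℝ} (hv : v ≠ 0) (hw : w ≠ 0)
    (h : v 0 * w 1 - v 1 * w 0 = 0) :
    Projectivization.mk ℝ v hv = Projectivization.mk ℝ w hw := by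
  rw [Projectivization.mk_eq_mk_iff']
  rcases exists_index hw with h0 | h1
  · refine ⟨v 0 / w 0, funext fun i => ?_⟩
    fin_cases i <;> simp only [Pi.smul_apply, smul_eq_mul]
    · exact div_mul_cancel₀ (v 0) h0
    · field_simp
      simp only [Fin.mk_one, Fin.zero_eta, Fin.isValue] at *
      linarith
  · refine ⟨v 1 / w 1, funext fun i => ?_⟩
    fin_cases i <;> simp only [Pi.smul_apply, smul_eq_mul]
    · field_simp
      simp only [Fin.mk_one, Fin.zero_eta, Fin.isValue] at *
      linarith
    · exact div_mul_cancel₀ (v 1) h1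

def Fmap : RP1 → ℝ × ℝ :=
  Projectivization.lift
    (fun v : { v : Fin 2 → ℝ // v ≠ 0 } =>
      (((v.1 0) ^ 2 - (v.1 1) ^ 2) / ((v.1 0) ^ 2 + (v.1 1) ^ 2),
        (2 * v.1 0 * v.1 1) / ((v.1 0) ^ 2 + (v.1 1) ^ 2)))
    (by
      rintro ⟨a, ha⟩ ⟨b, hb⟩ t (h : a = t • b)
      have ht : t ≠ 0 := by
        rintro rfl
        exact ha (by simp [h])
      have hb2 : (b 0) ^ 2 + (b 1) ^ 2 ≠ 0 := (normsq_pos hb).ne'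
      have h0 : a 0 = t * b 0 := by rw [h]; simp
      have h1 : a 1 = t * b 1 := by rw [h]; simp
      have ht2 : t ^ 2 * ((b 0) ^ 2 + (b 1) ^ 2) ≠ 0 :=
        mul_ne_zero (pow_ne_zero 2 ht) hb2
      have hA : (t * b 0) ^ 2 + (t * b 1) ^ 2 = t ^ 2 * ((b 0) ^ 2 + (b 1) ^ 2) := by ring
      simp only [h0, h1, Prod.mk.injEq, hA]
      constructor
      · rw [div_eq_div_iff ht2 hb2]; ring
      · rw [div_eq_div_iff ht2 hb2]; ring)

lemma Fmap_mk (v : Fin 2 → ℝ) (hv : v ≠ 0) :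
    Fmap (Projectivization.mk ℝ v hv) =
      (((v 0) ^ 2 - (v 1) ^ 2) / ((v 0) ^ 2 + (v 1) ^ 2),
        (2 * v 0 * v 1) / ((v 0) ^ 2 + (v 1) ^ 2)) := rfl

lemma Fmap_injective : Function.Injective Fmap := by
  intro p q h
  induction p using Projectivization.ind with
  | h v hv =>
  induction q using Projectivization.ind with
  | h w hw =>
    rw [Fmap_mk, Fmap_mk, Prod.mk.injEq] at h
    obtain ⟨h1, h2⟩ := h
    have hα : (0:ℝ) < (v 0) ^ 2 + (v 1) ^ 2 := normsq_pos hv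
    have hβ : (0:ℝ) < (w 0) ^ 2 + (w 1) ^ 2 := normsq_pos hw
    have h1' : ((v 0) ^ 2 - (v 1) ^ 2) * ((w 0) ^ 2 + (w 1) ^ 2)
        = ((w 0) ^ 2 - (w 1) ^ 2) * ((v 0) ^ 2 + (v 1) ^ 2) :=
      (div_eq_div_iff hα.ne' hβ.ne').1 h1
    have h2' : (2 * v 0 * v 1) * ((w 0) ^ 2 + (w 1) ^ 2)
        = (2 * w 0 * w 1) * ((v 0) ^ 2 + (v 1) ^ 2) :=
      (div_eq_div_iff hα.ne' hβ.ne').1 h2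
    have key : (v 0 * w 1 - v 1 * w 0) ^ 2 * ((w 0) ^ 2 + (w 1) ^ 2) ^ 2 = 0 := by
      linear_combination (((w 1) ^ 2 - (w 0) ^ 2) * ((w 0) ^ 2 + (w 1) ^ 2) / 2) * h1'
        - (w 0 * w 1 * ((w 0) ^ 2 + (w 1) ^ 2)) * h2'
    have hdet : v 0 * w 1 - v 1 * w 0 = 0 := by
      have h4 : ((w 0) ^ 2 + (w 1) ^ 2) ^ 2 ≠ 0 := by positivity
      rcases mul_eq_zero.1 key with h' | h'
      · exact pow_eq_zero_iff two_ne_zero |>.1 h'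
      · exact absurd h' h4
    exact mk_eq_mk_of_det hv hw hdet

lemma continuous_Fmap : Continuous Fmap := by
  have hc : Continuous fun v : { v : Fin 2 → ℝ // v ≠ 0 } =>
      (((v.1 0) ^ 2 - (v.1 1) ^ 2) / ((v.1 0) ^ 2 + (v.1 1) ^ 2),
        (2 * v.1 0 * v.1 1) / ((v.1 0) ^ 2 + (v.1 1) ^ 2)) := by
    have h0 : Continuous fun v : { v : Fin 2 → ℝ // v ≠ 0 } => v.1 0 :=
      (continuous_apply 0).comp continuous_subtype_val
    have h1 : Continuous fun v : { v : Fin 2 → ℝ // v ≠ 0 } => v.1 1 :=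
      (continuous_apply 1).comp continuous_subtype_val
    have hden : ∀ v : { v : Fin 2 → ℝ // v ≠ 0 }, (v.1 0) ^ 2 + (v.1 1) ^ 2 ≠ 0 :=
      fun v => (normsq_pos v.2).ne'
    exact Continuous.prodMk
      (((h0.pow 2).sub (h1.pow 2)).div ((h0.pow 2).add (h1.pow 2)) hden)
      (((continuous_const.mul h0).mul h1).div ((h0.pow 2).add (h1.pow 2)) hden)
  exact hc.quotient_lift _

instance : T2Space RP1 :=
  ⟨fun p q hpq => by
    obtain ⟨U, V, hU, hV, hpU, hqV, hUV⟩ :=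
      t2_separation (fun h : Fmap p = Fmap q => hpq (Fmap_injective h))
    exact ⟨Fmap ⁻¹' U, Fmap ⁻¹' V, hU.preimage continuous_Fmap,
      hV.preimage continuous_Fmap, hpU, hqV, hUV.preimage Fmap⟩⟩

end RP1Aux

namespace BirkhoffAux

variable {X : Type*} [MeasurableSpace X]

/-- Birkhoff sums. -/
def S (T : X → X) (f : X → ℝ) (n : ℕ) (x : X) : ℝ := ∑ k ∈ Finset.range n, f (T^[k] x)

lemma S_zero (T : X → X) (f : X → ℝ) (x : X) : S T f 0 x = 0 := by simp [S]

lemma S_succ' (T : X → X) (f : X → ℝ) (n : ℕ) (x : X) :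
    S T f (n + 1) x = f x + S T f n (T x) := by
  rw [S, Finset.sum_range_succ']
  simp only [Function.iterate_succ_apply, Function.iterate_zero_apply]
  rw [add_comm]
  rfl

lemma S_succ (T : X → X) (f : X → ℝ) (n : ℕ) (x : X) :
    S T f (n + 1) x = S T f n x + f (T^[n] x) := Finset.sum_range_succ _ _

lemma abs_S_le {T : X → X} {f : X → ℝ} {C : ℝ} (hb : ∀ x, |f x| ≤ C) (n : ℕ) (x : X) :
    |S T f n x| ≤ n * C := by
  calc |S T f n x| ≤ ∑ k ∈ Finset.range n, |f (T^[k] x)| := Finset.abs_sum_le_sum_abs _ _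
    _ ≤ ∑ _k ∈ Finset.range n, C := Finset.sum_le_sum fun i _ => hb _
    _ = n * C := by simp [mul_comm]

lemma S_measurable {T : X → X} {f : X → ℝ} (hT : Measurable T) (hf : Measurable f) (n : ℕ) :
    Measurable (S T f n) := by
  induction n with
  | zero =>
      have h0 : S T f 0 = fun _ => (0:ℝ) := funext fun x => S_zero T f x
      rw [h0]; exact measurable_const
  | succ n ih =>
      have h : S T f (n + 1) = fun x => S T f n x + f (T^[n] x) :=
        funext fun x => S_succ T f n x
      rw [h]
      exact ih.add (hf.comp (hT.iterate n))

/-- The (nonnegative) maximal function `max_{0 ≤ k ≤ n} S_k f`. -/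
def M (T : X → X) (f : X → ℝ) : ℕ → X → ℝ
  | 0 => fun _ => 0
  | n + 1 => fun x => max 0 (f x + M T f n (T x))

lemma M_succ (T : X → X) (f : X → ℝ) (n : ℕ) (x : X) :
    M T f (n + 1) x = max 0 (f x + M T f n (T x)) := rfl

lemma M_nonneg (T : X → X) (f : X → ℝ) : ∀ n x, 0 ≤ M T f n x
  | 0, _ => le_refl 0
  | n + 1, x => le_max_left _ _

lemma M_mono (T : X → X) (f : X → ℝ) : ∀ n x, M T f n x ≤ M T f (n + 1) x
  | 0, x => M_nonneg T f 1 x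
  | n + 1, x => max_le_max le_rfl (add_le_add le_rfl (M_mono T f n (T x)))

lemma M_mono' (T : X → X) (f : X → ℝ) {m n : ℕ} (h : m ≤ n) (x : X) :
    M T f m x ≤ M T f n x := by
  induction n with
  | zero => simp_all
  | succ n ih =>
      rcases Nat.lt_or_ge m (n + 1) with h' | h'
      · exact le_trans (ih (Nat.lt_succ_iff.1 h')) (M_mono T f n x)
      · have : m = n + 1 := le_antisymm h h'
        subst this
        exact le_rfl

lemma S_le_M (T : X → X) (f : X → ℝ) : ∀ n k, k ≤ n → ∀ x, S T f k x ≤ M T f n x := by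
  intro n
  induction n with
  | zero =>
      intro k hk x
      have : k = 0 := Nat.le_zero.1 hk
      subst this
      simp [S_zero, M]
  | succ n ih =>
      intro k hk x
      match k with
      | 0 => simpa [S_zero] using M_nonneg T f (n + 1) x
      | j + 1 =>
          have hj : j ≤ n := Nat.succ_le_succ_iff.mp hk
          calc S T f (j + 1) x = f x + S T f j (T x) := S_succ' T f j x
            _ ≤ f x + M T f n (T x) := by linarith [ih j hj (T x)]
            _ ≤ M T f (n + 1) x := le_max_right _ _

lemma M_measurable {T : X → X} {f : X → ℝ} (hT : Measurable T) (hf : Measurable f) :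
    ∀ n, Measurable (M T f n)
  | 0 => measurable_const
  | n + 1 => measurable_const.max (hf.add ((M_measurable hT hf n).comp hT))

lemma M_bound (T : X → X) (f : X → ℝ) {C : ℝ} (hC : 0 ≤ C) (hb : ∀ x, |f x| ≤ C) :
    ∀ n x, M T f n x ≤ n * C := by
  intro n
  induction n with
  | zero => intro x; simp [M]
  | succ n ih =>
      intro x
      rw [M_succ]
      have h1 : f x ≤ C := (abs_le.1 (hb x)).2
      have h2 : M T f n (T x) ≤ n * C := ih (T x)
      have h3 : (0:ℝ) ≤ (n + 1 : ℕ) * C := by positivity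
      refine max_le h3 ?_
      push_cast
      nlinarith

variable {μ : Measure X} [IsProbabilityMeasure μ]

lemma integrable_of_bounded {φ : X → ℝ} (hm : Measurable φ) {C : ℝ} (hb : ∀ x, |φ x| ≤ C) :
    Integrable φ μ :=
  (integrable_const C).mono' hm.aestronglyMeasurable
    (Eventually.of_forall fun x => by simpa [Real.norm_eq_abs] using hb x)

lemma integrable_comp {T : X → X} (hTm : MeasurePreserving T μ μ) {φ : X → ℝ}
    (hφm : Measurable φ) (hφi : Integrable φ μ) : Integrable (fun x => φ (T x)) μ := by
  have h1 : AEStronglyMeasurable φ (Measure.map T μ) := by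
    rw [hTm.map_eq]; exact hφm.aestronglyMeasurable
  exact (integrable_map_measure h1 hTm.measurable.aemeasurable).mp
    (by rw [hTm.map_eq]; exact hφi)

lemma integral_comp {T : X → X} (hTm : MeasurePreserving T μ μ) {φ : X → ℝ}
    (hφm : Measurable φ) : ∫ x, φ (T x) ∂μ = ∫ x, φ x ∂μ := by
  have h1 : AEStronglyMeasurable φ (Measure.map T μ) := by
    rw [hTm.map_eq]; exact hφm.aestronglyMeasurable
  rw [← integral_map hTm.measurable.aemeasurable h1, hTm.map_eq]

/-- The maximal ergodic inequality (Garsia's argument). -/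
lemma maximal {T : X → X} (hTm : MeasurePreserving T μ μ) {f : X → ℝ}
    (hf : Measurable f) {C : ℝ} (hC : 0 ≤ C) (hb : ∀ x, |f x| ≤ C) (n : ℕ) :
    0 ≤ ∫ x in {x | 0 < M T f (n + 1) x}, f x ∂μ := by
  have hT : Measurable T := hTm.measurable
  set E := {x | 0 < M T f (n + 1) x} with hEdef
  have hMm : Measurable (M T f (n + 1)) := M_measurable hT hf (n + 1)
  have hEm : MeasurableSet E := measurableSet_lt measurable_const hMm
  have hMabs : ∀ x, |M T f (n + 1) x| ≤ (n + 1) * C := fun x =>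
    abs_le.2 ⟨by nlinarith [M_nonneg T f (n + 1) x], by
      have := M_bound T f hC hb (n + 1) x; push_cast at this ⊢; linarith⟩
  have hMi : Integrable (M T f (n + 1)) μ := integrable_of_bounded hMm hMabs
  have hfi : Integrable f μ := integrable_of_bounded hf hb
  have hMTi : Integrable (fun x => M T f (n + 1) (T x)) μ := integrable_comp hTm hMm hMi
  have key : ∀ x ∈ E, M T f (n + 1) x - M T f (n + 1) (T x) ≤ f x := by
    intro x hx
    have hx' : 0 < M T f (n + 1) x := hx
    have h1 : M T f (n + 1) x = f x + M T f n (T x) := by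
      rcases le_or_gt (f x + M T f n (T x)) 0 with h | h
      · exfalso
        rw [M_succ, max_eq_left h] at hx'
        exact lt_irrefl _ hx'
      · rw [M_succ, max_eq_right h.le]
    have h2 : M T f n (T x) ≤ M T f (n + 1) (T x) := M_mono T f n (T x)
    linarith
  have e0 : ∫ x, M T f (n + 1) (T x) ∂μ = ∫ x, M T f (n + 1) x ∂μ := integral_comp hTm hMm
  have e1 : ∫ x in E, M T f (n + 1) x ∂μ = ∫ x, M T f (n + 1) x ∂μ := by
    rw [← integral_add_compl hEm hMi]
    have : ∫ x in Eᶜ, M T f (n + 1) x ∂μ = 0 := by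
      apply setIntegral_eq_zero_of_forall_eq_zero
      intro x hx
      have h1 : ¬ 0 < M T f (n + 1) x := hx
      exact le_antisymm (not_lt.1 h1) (M_nonneg T f (n + 1) x)
    rw [this, add_zero]
  have e2 : ∫ x in E, M T f (n + 1) (T x) ∂μ ≤ ∫ x, M T f (n + 1) (T x) ∂μ :=
    setIntegral_le_integral hMTi (Eventually.of_forall fun x => M_nonneg T f (n + 1) (T x))
  calc (0:ℝ) = ∫ x, M T f (n + 1) x ∂μ - ∫ x, M T f (n + 1) (T x) ∂μ := by rw [e0]; ring
    _ ≤ ∫ x in E, M T f (n + 1) x ∂μ - ∫ x in E, M T f (n + 1) (T x) ∂μ := by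
        rw [e1] at *; linarith
    _ = ∫ x in E, (M T f (n + 1) x - M T f (n + 1) (T x)) ∂μ :=
        (integral_sub hMi.integrableOn hMTi.integrableOn).symm
    _ ≤ ∫ x in E, f x ∂μ :=
        setIntegral_mono_on (hMi.sub hMTi).integrableOn hfi.integrableOn hEm key

lemma abs_avg_le (T : X → X) (f : X → ℝ) {C : ℝ} (hC : 0 ≤ C) (hb : ∀ x, |f x| ≤ C)
    (n : ℕ) (x : X) : |S T f n x / n| ≤ C := by
  rcases Nat.eq_zero_or_pos n with rfl | hn
  · simpa [S_zero] using hC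
  · have hn' : (0:ℝ) < n := by exact_mod_cast hn
    rw [abs_div, abs_of_pos hn', div_le_iff₀ hn']
    calc |S T f n x| ≤ n * C := abs_S_le hb n x
      _ = C * n := by ring

lemma abs_avg_le' (T : X → X) (f : X → ℝ) {C : ℝ} (hC : 0 ≤ C) (hb : ∀ x, |f x| ≤ C)
    (n : ℕ) (x : X) : |S T f (n + 1) x / ((n:ℝ) + 1)| ≤ C := by
  have := abs_avg_le T f hC hb (n + 1) x
  push_cast at this
  exact this

lemma bddu (T : X → X) (f : X → ℝ) {C : ℝ} (hC : 0 ≤ C) (hb : ∀ x, |f x| ≤ C) (x : X) :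
    IsBoundedUnder (· ≤ ·) atTop (fun n : ℕ => S T f n x / n) :=
  isBoundedUnder_of ⟨C, fun n => (abs_le.1 (abs_avg_le T f hC hb n x)).2⟩

lemma bddl (T : X → X) (f : X → ℝ) {C : ℝ} (hC : 0 ≤ C) (hb : ∀ x, |f x| ≤ C) (x : X) :
    IsBoundedUnder (· ≥ ·) atTop (fun n : ℕ => S T f n x / n) :=
  isBoundedUnder_of ⟨-C, fun n => by linarith [(abs_le.1 (abs_avg_le T f hC hb n x)).1]⟩

/-- The averages along the orbit of `x` and of `T x` have the same `limsup`. -/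
lemma limsup_shift {T : X → X} {f : X → ℝ} {C : ℝ} (hC : 0 ≤ C) (hb : ∀ x, |f x| ≤ C) (x : X) :
    limsup (fun n : ℕ => S T f n (T x) / n) atTop
      = limsup (fun n : ℕ => S T f n x / n) atTop := by
  -- key estimate
  have key : ∀ n : ℕ, 1 ≤ n → |S T f n (T x) / n - S T f (n + 1) x / (n + 1)| ≤ 2 * C / n := by
    intro n hn
    have hn' : (0:ℝ) < n := by exact_mod_cast hn
    have hn1 : (0:ℝ) < (n:ℝ) + 1 := by positivity
    set s := S T f (n + 1) x with hs
    have h1 : S T f n (T x) = s - f x := by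
      have := S_succ' T f n x
      rw [← hs] at this
      linarith
    have hsb : |s| ≤ ((n:ℝ) + 1) * C := by
      have := abs_S_le (T := T) hb (n + 1) x
      push_cast at this
      exact this
    have heq : S T f n (T x) / n - s / (n + 1)
        = (s - ((n:ℝ) + 1) * f x) / ((n:ℝ) * ((n:ℝ) + 1)) := by
      rw [h1]
      field_simp
      ring
    rw [heq, abs_div, abs_of_pos (by positivity : (0:ℝ) < (n:ℝ) * ((n:ℝ) + 1))]
    rw [div_le_div_iff₀ (by positivity) hn']
    have h2 : |s - ((n:ℝ) + 1) * f x| ≤ ((n:ℝ) + 1) * C + ((n:ℝ) + 1) * C := by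
      calc |s - ((n:ℝ) + 1) * f x| ≤ |s| + |((n:ℝ) + 1) * f x| := abs_sub _ _
        _ ≤ ((n:ℝ) + 1) * C + ((n:ℝ) + 1) * C := by
            refine add_le_add hsb ?_
            rw [abs_mul, abs_of_pos hn1]
            exact mul_le_mul_of_nonneg_left (hb x) hn1.le
    nlinarith
  -- two inequalities
  have main : ∀ ε : ℝ, 0 < ε →
      limsup (fun n : ℕ => S T f n (T x) / n) atTop
        ≤ limsup (fun n : ℕ => S T f n x / n) atTop + ε ∧
      limsup (fun n : ℕ => S T f n x / n) atTop
        ≤ limsup (fun n : ℕ => S T f n (T x) / n) atTop + ε := by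
    intro ε hε
    have hev : ∀ᶠ n : ℕ in atTop, |S T f n (T x) / n - S T f (n + 1) x / (n + 1)| ≤ ε := by
      have h0 : Tendsto (fun n : ℕ => 2 * C / n) atTop (𝓝 0) :=
        tendsto_const_div_atTop_nhds_zero_nat (2 * C)
      filter_upwards [h0.eventually (eventually_le_nhds hε), eventually_ge_atTop 1] with n h1 h2
      exact le_trans (key n h2) h1
    constructor
    · have h1 : limsup (fun n : ℕ => S T f n (T x) / n) atTop
          ≤ limsup (fun n : ℕ => S T f (n + 1) x / (n + 1) + ε) atTop := by
        apply limsup_le_limsup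
        · filter_upwards [hev] with n hn
          have := (abs_le.1 hn).2
          linarith
        · exact (bddl T f hC hb (T x)).isCoboundedUnder_le
        · exact (isBoundedUnder_of ⟨C + ε, fun n =>
            by linarith [(abs_le.1 (abs_avg_le' T f hC hb n x)).2]⟩)
      rw [limsup_add_const atTop (fun n : ℕ => S T f (n + 1) x / (n + 1)) ε
          (isBoundedUnder_of ⟨C, fun n => (abs_le.1 (abs_avg_le' T f hC hb n x)).2⟩)
          ((isBoundedUnder_of ⟨-C, fun n =>
            by linarith [(abs_le.1 (abs_avg_le' T f hC hb n x)).1]⟩ :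
              IsBoundedUnder (· ≥ ·) atTop _).isCoboundedUnder_le)] at h1
      have h2 : limsup (fun n : ℕ => S T f (n + 1) x / ((n:ℝ) + 1)) atTop
          = limsup (fun n : ℕ => S T f n x / n) atTop := by
        have := limsup_nat_add (fun n : ℕ => S T f n x / n) 1
        rw [← this]
        congr 1
        funext n
        push_cast
        rfl
      rw [h2] at h1
      exact h1
    · have h1 : limsup (fun n : ℕ => S T f (n + 1) x / ((n:ℝ) + 1)) atTop
          ≤ limsup (fun n : ℕ => S T f n (T x) / n + ε) atTop := by
        apply limsup_le_limsup
        · filter_upwards [hev] with n hn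
          have := (abs_le.1 hn).1
          linarith
        · exact (isBoundedUnder_of ⟨-C, fun n =>
            by linarith [(abs_le.1 (abs_avg_le' T f hC hb n x)).1]⟩ :
              IsBoundedUnder (· ≥ ·) atTop _).isCoboundedUnder_le
        · exact (isBoundedUnder_of ⟨C + ε, fun n =>
            by linarith [(abs_le.1 (abs_avg_le T f hC hb n (T x))).2]⟩)
      rw [limsup_add_const atTop (fun n : ℕ => S T f n (T x) / n) ε
          (bddu T f hC hb (T x)) ((bddl T f hC hb (T x)).isCoboundedUnder_le)] at h1
      have h2 : limsup (fun n : ℕ => S T f (n + 1) x / ((n:ℝ) + 1)) atTop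
          = limsup (fun n : ℕ => S T f n x / n) atTop := by
        have := limsup_nat_add (fun n : ℕ => S T f n x / n) 1
        rw [← this]
        congr 1
        funext n
        push_cast
        rfl
      rw [h2] at h1
      exact h1
  have h1 : ∀ ε : ℝ, 0 < ε → limsup (fun n : ℕ => S T f n (T x) / n) atTop
      ≤ limsup (fun n : ℕ => S T f n x / n) atTop + ε := fun ε hε => (main ε hε).1
  have h2 : ∀ ε : ℝ, 0 < ε → limsup (fun n : ℕ => S T f n x / n) atTop
      ≤ limsup (fun n : ℕ => S T f n (T x) / n) atTop + ε := fun ε hε => (main ε hε).2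
  exact le_antisymm (le_of_forall_pos_le_add h1) (le_of_forall_pos_le_add h2)

lemma S_sub_const (T : X → X) (f : X → ℝ) (c : ℝ) (n : ℕ) (x : X) :
    S T (fun z => f z - c) n x = S T f n x - n * c := by
  simp [S, Finset.sum_sub_distrib, mul_comm]

lemma le_liminf_aux {u : ℕ → ℝ} {c C : ℝ} (hb : ∀ n, |u n| ≤ C)
    (h : limsup (fun n => -u n) atTop ≤ -c) : c ≤ liminf u atTop := by
  by_contra hlt
  push_neg at hlt
  obtain ⟨b, hb1, hb2⟩ := exists_between hlt
  have hcob : IsCoboundedUnder (· ≥ ·) atTop u :=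
    (isBoundedUnder_of ⟨C, fun n => (abs_le.1 (hb n)).2⟩ :
      IsBoundedUnder (· ≤ ·) atTop u).isCoboundedUnder_ge
  have hfreq : ∃ᶠ n in atTop, u n < b := frequently_lt_of_liminf_lt hcob hb1
  have hbdd : IsBoundedUnder (· ≤ ·) atTop (fun n => -u n) :=
    isBoundedUnder_of ⟨C, fun n => by linarith [(abs_le.1 (hb n)).1]⟩
  have hle : -b ≤ limsup (fun n => -u n) atTop :=
    le_limsup_of_frequently_le (hfreq.mono fun n hn => by linarith) hbdd
  linarith

lemma ae_limsup_le {T : X → X} (hT : Ergodic T μ) {f : X → ℝ} (hf : Measurable f)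
    {C : ℝ} (hC : 0 ≤ C) (hb : ∀ x, |f x| ≤ C) :
    ∀ᵐ x ∂μ, limsup (fun n : ℕ => S T f n x / n) atTop ≤ ∫ z, f z ∂μ := by
  have hTm : Measurable T := hT.toMeasurePreserving.measurable
  have hfi : Integrable f μ := integrable_of_bounded hf hb
  have key : ∀ ε : ℝ, 0 < ε → ∀ᵐ x ∂μ,
      limsup (fun n : ℕ => S T f n x / n) atTop ≤ ∫ z, f z ∂μ + ε := by
    intro ε hε
    set c := ∫ z, f z ∂μ + ε with hc
    set f' := fun z => f z - c with hf'def
    have hf'm : Measurable f' := hf.sub measurable_const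
    have hC' : (0:ℝ) ≤ C + |c| := by positivity
    have hb' : ∀ x, |f' x| ≤ C + |c| := fun x => by
      calc |f' x| = |f x - c| := rfl
        _ ≤ |f x| + |c| := abs_sub _ _
        _ ≤ C + |c| := by linarith [hb x]
    set A := {x | c < limsup (fun n : ℕ => S T f n x / n) atTop} with hA
    have hAinv : T ⁻¹' A = A := by
      ext x
      simp only [Set.mem_preimage, hA, Set.mem_setOf_eq]
      rw [limsup_shift hC hb x]
    have hAm : MeasurableSet A := by
      have hrepr : A = ⋃ (q : ℚ) (_ : c < (q:ℝ)),
          ⋂ (N : ℕ), ⋃ (n : ℕ) (_ : N ≤ n), {x | (q:ℝ) < S T f n x / n} := by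
        ext x
        simp only [hA, Set.mem_setOf_eq, Set.mem_iUnion, Set.mem_iInter]
        constructor
        · intro hx
          obtain ⟨q, hq1, hq2⟩ := exists_rat_btwn hx
          refine ⟨q, hq1, fun N => ?_⟩
          have hfreq : ∃ᶠ n in atTop, (q:ℝ) < S T f n x / n :=
            frequently_lt_of_lt_limsup ((bddl T f hC hb x).isCoboundedUnder_le) hq2
          obtain ⟨n, hn1, hn2⟩ := (frequently_atTop.1 hfreq) N
          exact ⟨n, hn1, hn2⟩
        · rintro ⟨q, hq, hN⟩
          have hfreq : ∃ᶠ n in atTop, (q:ℝ) ≤ S T f n x / n := by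
            rw [frequently_atTop]
            intro N
            obtain ⟨n, hn1, hn2⟩ := hN N
            exact ⟨n, hn1, hn2.le⟩
          exact lt_of_lt_of_le hq (le_limsup_of_frequently_le hfreq (bddu T f hC hb x))
      rw [hrepr]
      refine MeasurableSet.iUnion fun q => MeasurableSet.iUnion fun _ =>
        MeasurableSet.iInter fun N => MeasurableSet.iUnion fun n =>
          MeasurableSet.iUnion fun _ => ?_
      exact measurableSet_lt measurable_const ((S_measurable hTm hf n).div_const _)
    rcases hT.toPreErgodic.ae_empty_or_univ hAm hAinv with h0 | h1
    · have hA0 : μ A = 0 := ae_eq_empty.mp h0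
      filter_upwards [measure_eq_zero_iff_ae_notMem.mp hA0] with x hx
      have h3 : ¬ c < limsup (fun n : ℕ => S T f n x / n) atTop := fun hcon => hx hcon
      exact not_lt.1 h3
    · exfalso
      set E := fun n : ℕ => {x | 0 < M T f' n x} with hE
      have hEm : ∀ n, MeasurableSet (E n) := fun n =>
        measurableSet_lt measurable_const (M_measurable hTm hf'm n)
      have hEmono : Monotone E := fun m n hmn x hx =>
        lt_of_lt_of_le hx (M_mono' T f' hmn x)
      have hf'i : Integrable f' μ := integrable_of_bounded hf'm hb'
      have hAsub : A ⊆ ⋃ n, E n := by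
        intro x hx
        have hx' : c < limsup (fun n : ℕ => S T f n x / n) atTop := hx
        have hfreq : ∃ᶠ n in atTop, c < S T f n x / n :=
          frequently_lt_of_lt_limsup ((bddl T f hC hb x).isCoboundedUnder_le) hx'
        obtain ⟨n, hn1, hn2⟩ := (frequently_atTop.1 hfreq) 1
        have hn' : (0:ℝ) < n := by exact_mod_cast hn1
        have hS : 0 < S T f' n x := by
          rw [S_sub_const]
          have h4 : c * n < S T f n x := (lt_div_iff₀ hn').1 hn2
          nlinarith
        refine Set.mem_iUnion.2 ⟨n, ?_⟩
        exact lt_of_lt_of_le hS (S_le_M T f' n n le_rfl x)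
      have hint : ∀ n, 0 ≤ ∫ x in E n, f' x ∂μ := by
        intro n
        rcases n with _ | m
        · have h5 : E 0 = ∅ := by
            ext x; simp [hE, M]
          rw [h5]
          simp
        · exact maximal hT.toMeasurePreserving hf'm hC' hb' m
      have hlim : Tendsto (fun n => ∫ x in E n, f' x ∂μ) atTop
          (𝓝 (∫ x in ⋃ n, E n, f' x ∂μ)) :=
        tendsto_setIntegral_of_monotone hEm hEmono hf'i.integrableOn
      have hpos : 0 ≤ ∫ x in ⋃ n, E n, f' x ∂μ := ge_of_tendsto' hlim hint
      have hμA : μ A = 1 := by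
        have := measure_congr h1
        simpa using this
      have hμU : μ (⋃ n, E n) = 1 := by
        have h2 : (1 : ENNReal) ≤ μ (⋃ n, E n) := hμA ▸ measure_mono hAsub
        exact le_antisymm prob_le_one h2
      have hUm : MeasurableSet (⋃ n, E n) := MeasurableSet.iUnion hEm
      have hcompl : μ ((⋃ n, E n)ᶜ) = 0 := by
        rw [measure_compl hUm (measure_ne_top μ _), hμU, measure_univ]
        simp
      have hfull : ∫ x in ⋃ n, E n, f' x ∂μ = ∫ x, f' x ∂μ := by
        rw [← integral_add_compl hUm hf'i]
        have h6 : μ.restrict ((⋃ n, E n)ᶜ) = 0 := Measure.restrict_eq_zero.mpr hcompl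
        have h7 : ∫ x in (⋃ n, E n)ᶜ, f' x ∂μ = 0 := by
          rw [h6]
          exact integral_zero_measure _
        rw [h7, add_zero]
      have hic : ∫ _z, c ∂μ = c := by simp
      have hneg : ∫ x, f' x ∂μ = -ε := by
        have h8 : ∫ x, f' x ∂μ = ∫ x, (f x - c) ∂μ := rfl
        rw [h8, integral_sub hfi (integrable_const c), hic, hc]
        ring
      rw [hfull, hneg] at hpos
      linarith
  have h2 : ∀ᵐ x ∂μ, ∀ k : ℕ, limsup (fun n : ℕ => S T f n x / n) atTop
      ≤ ∫ z, f z ∂μ + 1 / ((k:ℝ) + 1) := ae_all_iff.2 fun k => key _ (by positivity)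
  filter_upwards [h2] with x hx
  refine le_of_forall_pos_le_add fun ε hε => ?_
  obtain ⟨k, hk⟩ := exists_nat_one_div_lt hε
  calc limsup (fun n : ℕ => S T f n x / n) atTop
      ≤ ∫ z, f z ∂μ + 1 / ((k:ℝ) + 1) := hx k
    _ ≤ ∫ z, f z ∂μ + ε := by linarith

/-- Birkhoff's pointwise ergodic theorem, for bounded measurable functions and an
ergodic transformation. -/
lemma birkhoff {T : X → X} (hT : Ergodic T μ) {f : X → ℝ} (hf : Measurable f)
    {C : ℝ} (hC : 0 ≤ C) (hb : ∀ x, |f x| ≤ C) :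
    ∀ᵐ x ∂μ, Tendsto (fun n : ℕ => S T f n x / n) atTop (𝓝 (∫ z, f z ∂μ)) := by
  have h1 := ae_limsup_le hT hf hC hb
  have hnegb : ∀ x, |(fun z => -f z) x| ≤ C := fun x => by simpa using hb x
  have h2 := ae_limsup_le (f := fun z => -f z) hT hf.neg hC hnegb
  have hSneg : ∀ (n : ℕ) (x : X), S T (fun z => -f z) n x = -S T f n x := by
    intro n x; simp [S]
  have hintneg : ∫ z, -f z ∂μ = -∫ z, f z ∂μ := integral_neg f
  filter_upwards [h1, h2] with x hx1 hx2
  have hx2' : limsup (fun n : ℕ => -(S T f n x / n)) atTop ≤ -∫ z, f z ∂μ := by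
    have h3 : (fun n : ℕ => S T (fun z => -f z) n x / n)
        = fun n : ℕ => -(S T f n x / n) := by
      funext n; rw [hSneg]; ring
    rwa [h3, hintneg] at hx2
  have hliminf : ∫ z, f z ∂μ ≤ liminf (fun n : ℕ => S T f n x / n) atTop :=
    le_liminf_aux (fun n => abs_avg_le T f hC hb n x) hx2'
  exact tendsto_of_le_liminf_of_limsup_le hliminf hx1 (bddu T f hC hb x) (bddl T f hC hb x)

end BirkhoffAux


lemma g_add_int {X : Type*} [TopologicalSpace X] {A : X → SL2} {g : X → ℝ → ℝ}
    (hg : IsLiftFamily A g) (x : X) (y : ℝ) (k : ℤ) : g x (y + k) = g x y + k := by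
  induction k using Int.induction_on with
  | zero => simp
  | succ n ih =>
      have h1 : y + ((n + 1 : ℤ) : ℝ) = (y + (n : ℤ)) + 1 := by push_cast; ring
      rw [h1, hg.2.2, ih]
      push_cast
      ring
  | pred n ih =>
      have h1 : y + ((-(n : ℤ) : ℤ) : ℝ) = (y + ((-(n : ℤ) - 1 : ℤ) : ℝ)) + 1 := by
        push_cast; ring
      rw [h1, hg.2.2] at ih
      push_cast at ih ⊢
      linarith

/-- Given an invariant section `d` of `(T, A)` and a family of lifts `g̃` for
`A`, the displacement `g̃(x,y) - y` is independent of the choice of lift `y` of `d(x)`, so the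
displacement function `φ` is well defined and continuous; moreover for `μ`-a.e. `x` and every
lift `y` of `d(x)`, `(G̃_{x,n}(y) - y)/n → ∫ φ dμ`. -/
theorem displacement_well_defined_and_ae_limit
    {X : Type*} [MetricSpace X] [CompactSpace X]
    [MeasurableSpace X] [BorelSpace X]
    (T : X ≃ₜ X) (μ : Measure X) [IsProbabilityMeasure μ] (hT : Ergodic (⇑T) μ)
    (A : X → SL2) (hA : Continuous A)
    (d : C(X, RP1)) (hd : IsInvariantSection T A d)
    (g : X → ℝ → ℝ) (hg : IsLiftFamily A g) :
    (∀ (x : X) (y y' : ℝ), RP1proj y = d x → RP1proj y' = d x → g x y - y = g x y' - y') ∧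
      ∃ φ : X → ℝ, Continuous φ ∧ (∀ x y, RP1proj y = d x → φ x = g x y - y) ∧
        ∀ᵐ x ∂μ, ∀ y : ℝ, RP1proj y = d x →
          Tendsto (fun n : ℕ => (liftIter (⇑T) g n x y - y) / n) atTop (𝓝 (∫ z, φ z ∂μ)) := by
  classical
  -- Part (i): well-definedness of the displacement.
  have welldef : ∀ (x : X) (y y' : ℝ), RP1proj y = d x → RP1proj y' = d x →
      g x y - y = g x y' - y' := by
    intro x y y' h h'
    obtain ⟨k, rfl⟩ := RP1Aux.RP1proj_eq_iff.1 (h.trans h'.symm)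
    rw [g_add_int hg]
    ring
  -- A choice of lift of `d x` for every `x`.
  choose σ hσ using fun x => RP1Aux.RP1proj_surjective (d x)
  set φ : X → ℝ := fun x => g x (σ x) - σ x with hφdef
  have hφ_eq : ∀ x y, RP1proj y = d x → φ x = g x y - y := fun x y h =>
    welldef x (σ x) y (hσ x) h
  -- Continuity of φ, via a sequential argument.
  have hφ_cont : Continuous φ := by
    apply SeqContinuous.continuous
    intro u x₀ hu
    set y₀ := σ x₀ with hy₀
    set yseq : ℕ → ℝ := fun n => σ (u n) + (round (y₀ - σ (u n)) : ℤ) with hyseq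
    have hy : ∀ n, RP1proj (yseq n) = d (u n) := fun n => by
      rw [hyseq]
      rw [RP1Aux.RP1proj_add_int _ (σ (u n)), hσ]
    have hclose : ∀ n, |yseq n - y₀| ≤ 1 / 2 := by
      intro n
      have h1 := abs_sub_round (y₀ - σ (u n))
      have h2 : |yseq n - y₀| = |(y₀ - σ (u n)) - (round (y₀ - σ (u n)) : ℤ)| := by
        rw [abs_sub_comm]
        congr 1
        simp only [hyseq]
        ring
      rw [h2]
      exact h1
    apply tendsto_of_subseq_tendsto
    intro ns hns
    have hmem : ∀ n, yseq (ns n) ∈ Set.Icc (y₀ - 1 / 2) (y₀ + 1 / 2) := fun n => by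
      have h1 := abs_le.1 (hclose (ns n))
      constructor <;> [linarith [h1.1]; linarith [h1.2]]
    obtain ⟨ystar, _, ms, hms, hconv⟩ := isCompact_Icc.tendsto_subseq hmem
    refine ⟨ms, ?_⟩
    have hu2 : Tendsto (fun n => u (ns (ms n))) atTop (𝓝 x₀) :=
      hu.comp (hns.comp hms.tendsto_atTop)
    have hconv' : Tendsto (fun n => yseq (ns (ms n))) atTop (𝓝 ystar) := hconv
    have hdy : Tendsto (fun n => d (u (ns (ms n)))) atTop (𝓝 (d x₀)) :=
      ((map_continuous d).tendsto x₀).comp hu2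
    have hπy : Tendsto (fun n => RP1proj (yseq (ns (ms n)))) atTop (𝓝 (RP1proj ystar)) :=
      (RP1Aux.continuous_RP1proj.tendsto ystar).comp hconv'
    have hπy' : Tendsto (fun n => d (u (ns (ms n)))) atTop (𝓝 (RP1proj ystar)) :=
      hπy.congr fun n => hy _
    have hystar : RP1proj ystar = d x₀ := tendsto_nhds_unique hπy' hdy
    have hpair : Tendsto (fun n => ((u (ns (ms n)), yseq (ns (ms n))) : X × ℝ))
        atTop (𝓝 (x₀, ystar)) := hu2.prodMk_nhds hconv'
    have hgt : Tendsto (fun n => g (u (ns (ms n))) (yseq (ns (ms n))) - yseq (ns (ms n)))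
        atTop (𝓝 (g x₀ ystar - ystar)) :=
      ((hg.1.tendsto (x₀, ystar)).comp hpair).sub hconv'
    have hφn : ∀ n, g (u (ns (ms n))) (yseq (ns (ms n))) - yseq (ns (ms n))
        = (φ ∘ u) (ns (ms n)) := fun n => (hφ_eq _ _ (hy _)).symm
    have hφx₀ : φ x₀ = g x₀ ystar - ystar := hφ_eq x₀ ystar hystar
    rw [hφx₀]
    exact hgt.congr hφn
  -- The cocycle sum formula.
  have sum_formula : ∀ (n : ℕ) (x : X) (y : ℝ), RP1proj y = d x →
      liftIter (⇑T) g n x y = y + BirkhoffAux.S (⇑T) φ n x := by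
    intro n
    induction n with
    | zero => intro x y _; simp [liftIter, BirkhoffAux.S_zero]
    | succ n ih =>
        intro x y h
        have hTy : RP1proj (g x y) = d (T x) := by rw [hg.2.1, h, hd x]
        have h1 : liftIter (⇑T) g (n + 1) x y = liftIter (⇑T) g n (T x) (g x y) := rfl
        rw [h1, ih (T x) (g x y) hTy, BirkhoffAux.S_succ' (⇑T) φ n x]
        have hφx : φ x = g x y - y := hφ_eq x y h
        linarith
  -- A bound for φ.
  obtain ⟨C₀, hC₀⟩ := (isCompact_range (hφ_cont.norm)).bddAbove
  have hbound : ∀ x, |φ x| ≤ max C₀ 0 :=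
    fun x => le_trans (hC₀ ⟨x, rfl⟩) (le_max_left _ _)
  have hCnn : (0:ℝ) ≤ max C₀ 0 := le_max_right _ _
  -- Birkhoff's theorem applied to φ.
  have hbirk := BirkhoffAux.birkhoff hT hφ_cont.measurable hCnn hbound
  refine ⟨welldef, φ, hφ_cont, hφ_eq, ?_⟩
  filter_upwards [hbirk] with x hx
  intro y hy
  have heq : ∀ n : ℕ, BirkhoffAux.S (⇑T) φ n x / n = (liftIter (⇑T) g n x y - y) / n := by
    intro n
    rw [sum_formula n x y hy]
    ring_nf
  exact hx.congr heq


end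
end

section
/- Assume X is connected. Let E₁, E₂ ∈ ℝ be such that (T, A_{E₁}) and (T, A_{E₂}) are uniformly hyperbolic, with unstable sections d₁ and d₂ respectively. Let g̃₁ and g̃₂ be families of lifts for A_{E₁} and A_{E₂}, and let φ₁ and φ₂ be the displacement functions of (d₁, g̃₁) and (d₂, g̃₂). If d₁ and d₂ are homotopic as maps X → ℝP¹, then ∫_X φ₁ dμ − ∫_X φ₂ dμ is an integer. -/
open MeasureTheory Topology Filter

noncomputable section

namespace RP1Aux

/-- Complex coordinate of a vector in `ℝ²`. -/
def zOf (v : Fin 2 → ℝ) : ℂ := (v 0 : ℂ) + (v 1 : ℂ) * Complex.I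

lemma zOf_re (v : Fin 2 → ℝ) : (zOf v).re = v 0 := by simp [zOf]

lemma zOf_im (v : Fin 2 → ℝ) : (zOf v).im = v 1 := by simp [zOf]

lemma zOf_ne_zero {v : Fin 2 → ℝ} (hv : v ≠ 0) : zOf v ≠ 0 := by
  intro h
  apply hv
  have h0 : v 0 = 0 := by rw [← zOf_re v, h]; simp
  have h1 : v 1 = 0 := by rw [← zOf_im v, h]; simp
  funext i
  fin_cases i <;> simp [h0, h1]

lemma zOf_smul (t : ℝ) (v : Fin 2 → ℝ) : zOf (t • v) = (t : ℂ) * zOf v := by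
  simp [zOf]; ring

/-- The square map `RP1 → ℂ`, `span v ↦ (v₀+v₁i)²/|v|²`, an injection onto the unit circle. -/
def Phi : RP1 → ℂ :=
  Projectivization.lift
    (fun v => zOf v.1 ^ 2 / (Complex.normSq (zOf v.1) : ℂ))
    (by
      rintro ⟨a, ha⟩ ⟨b, hb⟩ t h
      have h' : a = t • b := by exact_mod_cast h
      have ht : t ≠ 0 := by
        rintro rfl
        rw [zero_smul] at h'
        exact ha h'
      have hzb : zOf b ≠ 0 := zOf_ne_zero hb
      have hnb : (Complex.normSq (zOf b) : ℂ) ≠ 0 := by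
        simpa using (Complex.normSq_pos.2 hzb).ne'
      have hnt : ((t : ℂ)) ≠ 0 := by exact_mod_cast ht
      simp only [h', zOf_smul]
      rw [Complex.normSq_mul, Complex.normSq_ofReal]
      push_cast
      field_simp)

lemma Phi_mk (v : Fin 2 → ℝ) (hv : v ≠ 0) :
    Phi (Projectivization.mk ℝ v hv) = zOf v ^ 2 / (Complex.normSq (zOf v) : ℂ) := rfl

lemma abs_Phi (p : RP1) : ‖Phi p‖ = 1 := by
  induction p using Projectivization.ind with
  | h v hv =>
    have hz : zOf v ≠ 0 := zOf_ne_zero hv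
    have hn : Complex.normSq (zOf v) ≠ 0 := by simpa using (Complex.normSq_pos.2 hz).ne'
    rw [Phi_mk, norm_div, norm_pow, Complex.norm_real, Real.norm_eq_abs,
      abs_of_nonneg (Complex.normSq_nonneg _), Complex.sq_norm, div_self hn]

lemma Phi_cont : Continuous Phi := by
  have h1 : Continuous (fun v : { v : Fin 2 → ℝ // v ≠ 0 } => zOf v.1) := by
    apply Continuous.add
    · exact Complex.continuous_ofReal.comp ((continuous_apply 0).comp continuous_subtype_val)
    · exact ((Complex.continuous_ofReal.comp
        ((continuous_apply 1).comp continuous_subtype_val))).mul continuous_const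
  have h2 : Continuous (fun v : { v : Fin 2 → ℝ // v ≠ 0 } =>
      zOf v.1 ^ 2 / (Complex.normSq (zOf v.1) : ℂ)) := by
    apply Continuous.div (h1.pow 2)
    · exact Complex.continuous_ofReal.comp (Complex.continuous_normSq.comp h1)
    · intro v
      simpa using (Complex.normSq_pos.2 (zOf_ne_zero v.2)).ne'
  exact h2.quotient_lift _

lemma Phi_inj : Function.Injective Phi := by
  intro p q h
  induction p using Projectivization.ind with
  | h v hv =>
  induction q using Projectivization.ind with
  | h w hw =>
    have hz : zOf v ≠ 0 := zOf_ne_zero hv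
    have hw' : zOf w ≠ 0 := zOf_ne_zero hw
    rw [Phi_mk, Phi_mk] at h
    have hnv : (Complex.normSq (zOf v) : ℂ) ≠ 0 := by
      simpa using (Complex.normSq_pos.2 hz).ne'
    have hnw : (Complex.normSq (zOf w) : ℂ) ≠ 0 := by
      simpa using (Complex.normSq_pos.2 hw').ne'
    rw [div_eq_div_iff hnv hnw] at h
    -- h : zOf v ^ 2 * normSq (zOf w) = zOf w ^ 2 * normSq (zOf v)
    rw [← Complex.mul_conj (zOf w), ← Complex.mul_conj (zOf v)] at h
    have hkey : zOf v * (starRingEnd ℂ) (zOf w) = zOf w * (starRingEnd ℂ) (zOf v) := by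
      apply mul_left_cancel₀ (mul_ne_zero hz hw')
      linear_combination h
    set c := zOf v * (starRingEnd ℂ) (zOf w) with hc
    have hcr : (starRingEnd ℂ) c = c := by
      rw [hc, map_mul, Complex.conj_conj, mul_comm]
      exact hkey.symm
    have hcre : c = (c.re : ℂ) := (Complex.conj_eq_iff_re.1 hcr).symm
    have hzv : zOf v = ((c.re / Complex.normSq (zOf w) : ℝ) : ℂ) * zOf w := by
      have h1 : zOf v * ((starRingEnd ℂ) (zOf w) * zOf w) = c * zOf w := by
        rw [hc]; ring
      rw [mul_comm ((starRingEnd ℂ) (zOf w)) (zOf w), Complex.mul_conj] at h1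
      rw [hcre] at h1
      push_cast
      rw [div_mul_eq_mul_div, eq_div_iff hnw]
      exact_mod_cast h1
    set r : ℝ := c.re / Complex.normSq (zOf w) with hr
    have hrne : r ≠ 0 := by
      intro h0
      rw [h0] at hzv
      push_cast at hzv
      rw [zero_mul] at hzv
      exact hz hzv
    apply (Projectivization.mk_eq_mk_iff' ℝ v w hv hw).2
    refine ⟨r, ?_⟩
    funext i
    have h0 : v 0 = r * w 0 := by
      have := congrArg Complex.re hzv
      simpa [zOf_re, Complex.ofReal_mul] using this
    have h1 : v 1 = r * w 1 := by
      have := congrArg Complex.im hzv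
      simpa [zOf_im] using this
    fin_cases i <;> simp [h0, h1, Pi.smul_apply]

lemma Phi_proj (y : ℝ) :
    Phi (RP1proj y) = Complex.exp (((2 * Real.pi * y : ℝ) : ℂ) * Complex.I) := by
  rw [RP1proj, Phi_mk]
  have hz : zOf ![Real.cos (Real.pi * y), Real.sin (Real.pi * y)] =
      Complex.exp (((Real.pi * y : ℝ) : ℂ) * Complex.I) := by
    rw [Complex.exp_mul_I, ← Complex.ofReal_cos, ← Complex.ofReal_sin]
    simp [zOf]
  rw [hz]
  have habs : ‖Complex.exp (((Real.pi * y : ℝ) : ℂ) * Complex.I)‖ = 1 :=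
    Complex.norm_exp_ofReal_mul_I _
  have hns : Complex.normSq (Complex.exp (((Real.pi * y : ℝ) : ℂ) * Complex.I)) = 1 := by
    rw [Complex.normSq_eq_norm_sq, habs, one_pow]
  rw [hns]
  push_cast
  rw [div_one, sq, ← Complex.exp_add]
  congr 1
  ring

lemma unit_exp_arg {z : ℂ} (h : ‖z‖ = 1) :
    Complex.exp ((Complex.arg z : ℂ) * Complex.I) = z := by
  conv_rhs => rw [← Complex.norm_mul_exp_arg_mul_I z]
  rw [h, Complex.ofReal_one, one_mul]

lemma mem_slitPlane_of_unit {z : ℂ} (h1 : ‖z‖ = 1) (h2 : z ≠ -1) :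
    z ∈ Complex.slitPlane := by
  rw [Complex.mem_slitPlane_iff]
  by_contra hcon
  push_neg at hcon
  obtain ⟨hre, him⟩ := hcon
  have hns : Complex.normSq z = 1 := by rw [← Complex.sq_norm, h1]; norm_num
  rw [Complex.normSq_apply, him] at hns
  have : z.re = -1 := by nlinarith
  exact h2 (by apply Complex.ext <;> simp [this, him])

lemma proj_eq_iff (a b : ℝ) : RP1proj a = RP1proj b ↔ ∃ n : ℤ, a = b + n := by
  constructor
  · intro h
    have h2 := congrArg Phi h
    rw [Phi_proj, Phi_proj] at h2
    obtain ⟨n, hn⟩ := Complex.exp_eq_exp_iff_exists_int.1 h2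
    refine ⟨n, ?_⟩
    have hI : ((2 * Real.pi * a : ℝ) : ℂ) = ((2 * Real.pi * b + 2 * Real.pi * n : ℝ) : ℂ) := by
      apply mul_right_cancel₀ Complex.I_ne_zero
      rw [hn]
      push_cast
      ring
    have hR : 2 * Real.pi * a = 2 * Real.pi * b + 2 * Real.pi * n := by exact_mod_cast hI
    have hπ : (2 * Real.pi) ≠ 0 := by positivity
    have : 2 * Real.pi * a = 2 * Real.pi * (b + n) := by rw [hR]; ring
    exact mul_left_cancel₀ hπ this
  · rintro ⟨n, rfl⟩
    apply Phi_inj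
    rw [Phi_proj, Phi_proj]
    rw [Complex.exp_eq_exp_iff_exists_int]
    refine ⟨n, ?_⟩
    push_cast
    ring

lemma proj_arg (p : RP1) : RP1proj (Complex.arg (Phi p) / (2 * Real.pi)) = p := by
  apply Phi_inj
  rw [Phi_proj]
  have hπ : (2 * Real.pi) ≠ 0 := by positivity
  have h1 : 2 * Real.pi * (Complex.arg (Phi p) / (2 * Real.pi)) = Complex.arg (Phi p) := by
    field_simp
  rw [h1]
  exact unit_exp_arg (abs_Phi p)

lemma exists_continuousAt_lift {X : Type*} [TopologicalSpace X] (d : C(X, RP1)) (x₀ : X) :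
    ∃ yf : X → ℝ, ContinuousAt yf x₀ ∧ ∀ x, RP1proj (yf x) = d x := by
  set z₀ := Phi (d x₀) with hz₀
  have habs₀ : ‖z₀‖ = 1 := abs_Phi _
  have hns₀ : Complex.normSq z₀ = 1 := by rw [Complex.normSq_eq_norm_sq, habs₀, one_pow]
  set w : X → ℂ := fun x => Phi (d x) * (starRingEnd ℂ) z₀ with hw
  have hwc : Continuous w := (Phi_cont.comp d.continuous).mul continuous_const
  have hwabs : ∀ x, ‖w x‖ = 1 := by
    intro x
    rw [hw]
    simp [map_mul, abs_Phi, Complex.norm_conj, habs₀]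
  have hw₀ : w x₀ = 1 := by
    rw [hw]
    simp only
    rw [← hz₀, Complex.mul_conj, hns₀, Complex.ofReal_one]
  refine ⟨fun x => (Complex.arg (w x) + Complex.arg z₀) / (2 * Real.pi), ?_, ?_⟩
  · apply ContinuousAt.div_const
    apply ContinuousAt.add _ continuousAt_const
    have hmem : w x₀ ∈ Complex.slitPlane := by
      rw [hw₀]; exact Complex.one_mem_slitPlane
    exact (Complex.continuousAt_arg hmem).comp hwc.continuousAt
  · intro x
    apply Phi_inj
    rw [Phi_proj]
    have hπ : (2 * Real.pi) ≠ 0 := by positivity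
    have h1 : 2 * Real.pi * ((Complex.arg (w x) + Complex.arg z₀) / (2 * Real.pi))
        = Complex.arg (w x) + Complex.arg z₀ := by field_simp
    rw [h1, Complex.ofReal_add, add_mul, Complex.exp_add,
      unit_exp_arg (hwabs x), unit_exp_arg habs₀, hw]
    simp only
    rw [mul_assoc, mul_comm ((starRingEnd ℂ) z₀) z₀, Complex.mul_conj, hns₀,
      Complex.ofReal_one, mul_one]

/-- Telescoping product of consecutive unit ratios. -/
lemma prod_tele (u : ℕ → ℂ) (hu : ∀ i, ‖u i‖ = 1) (N : ℕ) :
    ∏ i ∈ Finset.range N, (u (i + 1) * (starRingEnd ℂ) (u i))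
      = u N * (starRingEnd ℂ) (u 0) := by
  induction N with
  | zero =>
    rw [Finset.prod_range_zero, Complex.mul_conj, Complex.normSq_eq_norm_sq, hu 0]
    norm_num
  | succ n ih =>
    rw [Finset.prod_range_succ, ih]
    have h1 : u n * (starRingEnd ℂ) (u n) = 1 := by
      rw [Complex.mul_conj, Complex.normSq_eq_norm_sq, hu n]; norm_num
    linear_combination (u (n + 1) * (starRingEnd ℂ) (u 0)) * h1

lemma min_lip (a b : ℝ) : |min a 1 - min b 1| ≤ |a - b| := by
  rcases le_total a 1 with h1 | h1 <;> rcases le_total b 1 with h2 | h2 <;>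
    simp only [min_eq_left, min_eq_right, h1, h2] <;>
    (rw [abs_le]; constructor <;>
      cases abs_cases (a - b) <;> cases abs_cases (b - a) <;> linarith)

/-- Construction of the continuous angular shift between two homotopic sections. -/
lemma exists_shift {X : Type*} [MetricSpace X] [CompactSpace X]
    (d₁ d₂ : C(X, RP1)) (hhom : d₁.Homotopic d₂) :
    ∃ s : X → ℝ, Continuous s ∧
      ∀ x, Phi (d₂ x) = Phi (d₁ x) * Complex.exp (((2 * Real.pi * s x : ℝ) : ℂ) * Complex.I) := by
  obtain ⟨H⟩ := hhom
  set K : unitInterval × X → ℂ :=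
    fun p => Phi (H p) * (starRingEnd ℂ) (Phi (d₁ p.2)) with hK
  have hKc : Continuous K := by
    apply Continuous.mul (Phi_cont.comp H.continuous)
    exact Complex.continuous_conj.comp (Phi_cont.comp (d₁.continuous.comp continuous_snd))
  have hKabs : ∀ p, ‖K p‖ = 1 := by
    intro p
    rw [hK]
    simp [map_mul, abs_Phi, Complex.norm_conj]
  obtain ⟨δ, hδ, hδ2⟩ := (Metric.uniformContinuous_iff.1
    (CompactSpace.uniformContinuous_of_continuous hKc)) 2 (by norm_num)
  obtain ⟨n, hn⟩ := exists_nat_one_div_lt hδ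
  set N : ℕ := n + 1 with hN
  have hNpos : (0 : ℝ) < N := by positivity
  have hinv : 1 / (N : ℝ) < δ := by exact_mod_cast hn
  set p : ℕ → unitInterval := fun i =>
    ⟨min ((i : ℝ) / N) 1, ⟨le_min (by positivity) zero_le_one, min_le_right _ _⟩⟩ with hp
  have hp0 : p 0 = 0 := by
    apply Subtype.ext
    simp [hp]
  have hpN : p N = 1 := by
    apply Subtype.ext
    simp [hp, div_self hNpos.ne']
  have hdist : ∀ i : ℕ, dist (p (i + 1)) (p i) < δ := by
    intro i
    have h1 : dist (p (i + 1)) (p i) ≤ 1 / (N : ℝ) := by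
      rw [Subtype.dist_eq, Real.dist_eq]
      have h2 := min_lip (((i : ℕ) + 1 : ℝ) / N) ((i : ℝ) / N)
      have h3 : |((i : ℕ) + 1 : ℝ) / N - (i : ℝ) / N| = 1 / N := by
        rw [div_sub_div_same]
        have h4 : ((i : ℕ) + 1 - (i : ℕ) : ℝ) = 1 := by ring
        rw [h4, abs_of_nonneg (by positivity)]
      calc |min (((i + 1 : ℕ) : ℝ) / N) 1 - min ((i : ℝ) / N) 1|
          ≤ |((i : ℕ) + 1 : ℝ) / N - (i : ℝ) / N| := by push_cast; exact min_lip _ _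
        _ = 1 / N := h3
    linarith
  set r : ℕ → X → ℂ := fun i x => K (p (i + 1), x) * (starRingEnd ℂ) (K (p i, x)) with hr
  have hrabs : ∀ i x, ‖r i x‖ = 1 := by
    intro i x
    rw [hr]
    simp [map_mul, hKabs, Complex.norm_conj]
  have hrne : ∀ i x, r i x ≠ -1 := by
    intro i x hcon
    have hKns : Complex.normSq (K (p i, x)) = 1 := by
      rw [Complex.normSq_eq_norm_sq, hKabs]; norm_num
    have h1 : K (p (i + 1), x) = -K (p i, x) := by
      have h2 := congrArg (· * K (p i, x)) hcon
      simp only [hr] at h2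
      rw [mul_assoc, mul_comm ((starRingEnd ℂ) (K (p i, x))) (K (p i, x)),
        Complex.mul_conj, hKns, Complex.ofReal_one, mul_one, neg_one_mul] at h2
      exact h2
    have h2 : dist (K (p (i + 1), x)) (K (p i, x)) = 2 := by
      rw [Complex.dist_eq, h1]
      have : -K (p i, x) - K (p i, x) = -(2 * K (p i, x)) := by ring
      rw [this, norm_neg, norm_mul, hKabs]
      simp
    have h3 : dist ((p (i + 1), x) : unitInterval × X) ((p i, x)) < δ := by
      rw [Prod.dist_eq]
      simp only [dist_self]
      exact max_lt (hdist i) hδ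
    have h4 := hδ2 h3
    rw [h2] at h4
    exact lt_irrefl 2 h4
  have hrslit : ∀ i x, r i x ∈ Complex.slitPlane :=
    fun i x => mem_slitPlane_of_unit (hrabs i x) (hrne i x)
  refine ⟨fun x => (∑ i ∈ Finset.range N, Complex.arg (r i x)) / (2 * Real.pi), ?_, ?_⟩
  · apply Continuous.div_const
    apply continuous_finset_sum
    intro i _
    have hric : Continuous (fun x => r i x) := by
      apply Continuous.mul
      · exact hKc.comp (continuous_const.prodMk continuous_id)
      · exact Complex.continuous_conj.comp (hKc.comp (continuous_const.prodMk continuous_id))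
    rw [continuous_iff_continuousAt]
    intro x
    exact (Complex.continuousAt_arg (hrslit i x)).comp hric.continuousAt
  · intro x
    have hπ : (2 * Real.pi) ≠ 0 := by positivity
    have h1 : (2 * Real.pi * ((∑ i ∈ Finset.range N, Complex.arg (r i x)) / (2 * Real.pi)) : ℝ)
        = ∑ i ∈ Finset.range N, Complex.arg (r i x) := by field_simp
    rw [h1]
    have hexp : Complex.exp (((∑ i ∈ Finset.range N, Complex.arg (r i x) : ℝ) : ℂ) * Complex.I)
        = ∏ i ∈ Finset.range N, r i x := by
      rw [Complex.ofReal_sum, Finset.sum_mul, Complex.exp_sum]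
      exact Finset.prod_congr rfl fun i _ => unit_exp_arg (hrabs i x)
    rw [hexp]
    have htele : ∏ i ∈ Finset.range N, r i x
        = K (p N, x) * (starRingEnd ℂ) (K (p 0, x)) :=
      prod_tele (fun i => K (p i, x)) (fun i => hKabs _) N
    rw [htele, hp0, hpN]
    have hK1 : K ((1 : unitInterval), x) = Phi (d₂ x) * (starRingEnd ℂ) (Phi (d₁ x)) := by
      rw [hK]
      simp only
      rw [H.apply_one]
    have hK0 : K ((0 : unitInterval), x) = Phi (d₁ x) * (starRingEnd ℂ) (Phi (d₁ x)) := by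
      rw [hK]
      simp only
      rw [H.apply_zero]
    have hns : Complex.normSq (Phi (d₁ x)) = 1 := by
      rw [Complex.normSq_eq_norm_sq, abs_Phi]; norm_num
    rw [hK1, hK0, Complex.mul_conj, hns, Complex.ofReal_one, map_one, mul_one]
    have hone : Phi (d₁ x) * (starRingEnd ℂ) (Phi (d₁ x)) = 1 := by
      rw [Complex.mul_conj, hns, Complex.ofReal_one]
    linear_combination (-(Phi (d₂ x))) * hone

lemma int_valued_const {X : Type*} [TopologicalSpace X] [PreconnectedSpace X] {k : X → ℝ}
    (hk : Continuous k) (h : ∀ x, ∃ m : ℤ, k x = m) : ∀ x y, k x = k y := by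
  have key : ∀ x y : X, k x < k y → False := by
    intro x y hlt
    obtain ⟨mx, hmx⟩ := h x
    obtain ⟨my, hmy⟩ := h y
    have hmlt : (mx : ℝ) < my := by rw [← hmx, ← hmy]; exact hlt
    have hmlt' : mx < my := by exact_mod_cast hmlt
    have hmle : (mx : ℝ) + 1 ≤ my := by exact_mod_cast hmlt'
    have hpc : IsPreconnected (Set.range k) := by
      rw [← Set.image_univ]
      exact isPreconnected_univ.image k hk.continuousOn
    have hmid : (mx : ℝ) + 1 / 2 ∈ Set.Icc (k x) (k y) := by
      constructor
      · rw [hmx]; linarith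
      · rw [hmy]; linarith
    obtain ⟨z, hz⟩ := hpc.Icc_subset (Set.mem_range_self x) (Set.mem_range_self y) hmid
    obtain ⟨mz, hmz⟩ := h z
    rw [hmz] at hz
    have h2 : (2 * mz : ℝ) = 2 * mx + 1 := by rw [two_mul, hz]; ring
    have h3 : (2 * mz : ℤ) = 2 * mx + 1 := by exact_mod_cast h2
    omega
  intro x y
  rcases lt_trichotomy (k x) (k y) with h' | h' | h'
  · exact absurd h' (fun h' => key x y h')
  · exact h'
  · exact absurd h' (fun h' => key y x h')

end RP1Aux

namespace RP1Aux

lemma phi_continuous {X : Type*} [TopologicalSpace X] {A : X → SL2} {g : X → ℝ → ℝ}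
    (hg : IsLiftFamily A g) (d : C(X, RP1)) (φ : X → ℝ)
    (hφ : ∀ x y, RP1proj y = d x → φ x = g x y - y) : Continuous φ := by
  rw [continuous_iff_continuousAt]
  intro x₀
  obtain ⟨yf, hyc, hyl⟩ := exists_continuousAt_lift d x₀
  have hgy : ContinuousAt (fun x => g x (yf x)) x₀ :=
    (hg.1.continuousAt).comp (continuousAt_id.prodMk hyc)
  have hca : ContinuousAt (fun x => g x (yf x) - yf x) x₀ := hgy.sub hyc
  exact hca.congr (Filter.Eventually.of_forall fun x => (hφ x (yf x) (hyl x)).symm)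

end RP1Aux

/-- Assume `X` is connected and the Schrödinger cocycles at energies `E₁`
and `E₂` are uniformly hyperbolic, with unstable sections `d₁`, `d₂`, families of lifts
`g̃₁`, `g̃₂` and displacement functions `φ₁`, `φ₂`. If `d₁` and `d₂` are homotopic, then
`∫ φ₁ dμ - ∫ φ₂ dμ` is an integer. -/
theorem homotopic_sections_rotation_numbers_differ_by_integer
    {X : Type*} [MetricSpace X] [CompactSpace X] [Nonempty X] [ConnectedSpace X]
    [MeasurableSpace X] [BorelSpace X]
    (T : X ≃ₜ X)
    (μ : Measure X) [IsProbabilityMeasure μ]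
    (hT : Ergodic (⇑T) μ)
    (hfull : ∀ U : Set X, IsOpen U → U.Nonempty → μ U ≠ 0)
    (f : C(X, ℝ))
    (E₁ E₂ : ℝ)
    (hUH₁ : UniformlyHyperbolic T (schrodingerCocycle (⇑f) E₁))
    (hUH₂ : UniformlyHyperbolic T (schrodingerCocycle (⇑f) E₂))
    (d₁ d₂ : C(X, RP1))
    (hd₁ : IsUnstableSection T (schrodingerCocycle (⇑f) E₁) d₁)
    (hd₂ : IsUnstableSection T (schrodingerCocycle (⇑f) E₂) d₂)
    (g₁ g₂ : X → ℝ → ℝ)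
    (hg₁ : IsLiftFamily (schrodingerCocycle (⇑f) E₁) g₁)
    (hg₂ : IsLiftFamily (schrodingerCocycle (⇑f) E₂) g₂)
    (φ₁ φ₂ : X → ℝ)
    (hφ₁ : ∀ x y, RP1proj y = d₁ x → φ₁ x = g₁ x y - y)
    (hφ₂ : ∀ x y, RP1proj y = d₂ x → φ₂ x = g₂ x y - y)
    (hhom : d₁.Homotopic d₂) :
    ∃ k : ℤ, (∫ x, φ₁ x ∂μ) - (∫ x, φ₂ x ∂μ) = (k : ℝ) := by
  classical
  obtain ⟨s, hs_cont, hs⟩ := RP1Aux.exists_shift d₁ d₂ hhom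
  have hs2 : ∀ x y, RP1proj y = d₁ x → RP1proj (y + s x) = d₂ x := by
    intro x y hy
    apply RP1Aux.Phi_inj
    rw [RP1Aux.Phi_proj, hs x, ← hy, RP1Aux.Phi_proj, ← Complex.exp_add]
    congr 1
    push_cast
    ring
  have hφ₁c : Continuous φ₁ := RP1Aux.phi_continuous hg₁ d₁ φ₁ hφ₁
  have hφ₂c : Continuous φ₂ := RP1Aux.phi_continuous hg₂ d₂ φ₂ hφ₂
  set k : X → ℝ := fun x => φ₁ x - φ₂ x - s x + s (T x) with hk
  have hkc : Continuous k := ((hφ₁c.sub hφ₂c).sub hs_cont).add (hs_cont.comp T.continuous)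
  have hkint : ∀ x, ∃ m : ℤ, k x = m := by
    intro x
    set y := Complex.arg (RP1Aux.Phi (d₁ x)) / (2 * Real.pi) with hy'
    have hy : RP1proj y = d₁ x := RP1Aux.proj_arg _
    have h1 : φ₁ x = g₁ x y - y := hφ₁ x y hy
    have hy2 : RP1proj (y + s x) = d₂ x := hs2 x y hy
    have h2 : φ₂ x = g₂ x (y + s x) - (y + s x) := hφ₂ x _ hy2
    have hY : RP1proj (g₁ x y) = d₁ (T x) := by
      rw [hg₁.2.1 x y, hy, hd₁.1 x]
    have hY2 : RP1proj (g₁ x y + s (T x)) = d₂ (T x) := hs2 (T x) _ hY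
    have hG : RP1proj (g₂ x (y + s x)) = d₂ (T x) := by
      rw [hg₂.2.1 x _, hy2, hd₂.1 x]
    obtain ⟨m, hm⟩ := (RP1Aux.proj_eq_iff _ _).1 (hG.trans hY2.symm)
    refine ⟨-m, ?_⟩
    rw [hk]
    simp only
    push_cast
    rw [h1, h2]
    linarith [hm]
  have hconst := RP1Aux.int_valued_const hkc hkint
  obtain ⟨c, hc⟩ := hkint (Classical.arbitrary X)
  refine ⟨c, ?_⟩
  have hInt : ∀ {u : X → ℝ}, Continuous u → Integrable u μ := fun {u} hu =>
    hu.integrable_of_hasCompactSupport (isClosed_tsupport u).isCompact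
  have hint1 : Integrable φ₁ μ := hInt hφ₁c
  have hint2 : Integrable φ₂ μ := hInt hφ₂c
  have hintS : Integrable s μ := hInt hs_cont
  have hintST : Integrable (fun x => s (T x)) μ := hInt (hs_cont.comp T.continuous)
  have hφeq : ∀ x, φ₁ x - φ₂ x = (c : ℝ) + s x - s (T x) := by
    intro x
    have h := (hconst x (Classical.arbitrary X)).trans hc
    rw [hk] at h
    simp only at h
    linarith
  rw [← integral_sub hint1 hint2]
  have heq2 : ∫ x, (φ₁ x - φ₂ x) ∂μ = ∫ x, ((c : ℝ) + s x - s (T x)) ∂μ := by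
    apply integral_congr_ae
    filter_upwards with x using hφeq x
  have heq3 : ∫ x, ((c : ℝ) + s x - s (T x)) ∂μ
      = (∫ x, ((c : ℝ) + s x) ∂μ) - ∫ x, s (T x) ∂μ :=
    integral_sub ((integrable_const _).add hintS) hintST
  have heq4 : ∫ x, ((c : ℝ) + s x) ∂μ = (∫ _x, (c : ℝ) ∂μ) + ∫ x, s x ∂μ :=
    integral_add (integrable_const _) hintS
  have hTint : ∫ x, s (T x) ∂μ = ∫ x, s x ∂μ :=
    hT.toMeasurePreserving.integral_comp T.measurableEmbedding s
  rw [heq2, heq3, heq4, hTint, integral_const]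
  simp [measure_univ]


end
end

section
/- If g̃ is a family of lifts for A, then there exists a real number ρ such that: (i) for every y ∈ ℝ, lim_{n→∞} (1/n) ∫_X G̃_{x,n}(y) dμ(x) = ρ, and (ii) for μ-almost every x ∈ X and every y ∈ ℝ, lim_{n→∞} G̃_{x,n}(y)/n = ρ. -/
open MeasureTheory Topology Filter
open ENNReal

noncomputable section

namespace RotNum

variable {α : Type*} [MeasurableSpace α] {μ : Measure α} {T : α → α}

/-- Birkhoff sums. -/
def birkS (T : α → α) (f : α → ℝ) (n : ℕ) (x : α) : ℝ :=
  ∑ k ∈ Finset.range n, f (T^[k] x)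

lemma birkS_zero (T : α → α) (f : α → ℝ) (x : α) : birkS T f 0 x = 0 := by simp [birkS]

lemma birkS_one (T : α → α) (f : α → ℝ) (x : α) : birkS T f 1 x = f x := by simp [birkS]

lemma birkS_succ_left (T : α → α) (f : α → ℝ) (n : ℕ) (x : α) :
    birkS T f (n + 1) x = f x + birkS T f n (T x) := by
  rw [birkS, Finset.sum_range_succ']
  simp [birkS, Function.iterate_succ_apply, add_comm]

lemma birkS_add (T : α → α) (f : α → ℝ) (m n : ℕ) (x : α) :
    birkS T f (m + n) x = birkS T f m x + birkS T f n (T^[m] x) := by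
  induction m generalizing x with
  | zero => simp [birkS_zero]
  | succ m IH =>
      rw [show m + 1 + n = (m + n) + 1 from by omega, birkS_succ_left, IH (T x),
        birkS_succ_left, Function.iterate_succ_apply]
      ring

lemma abs_birkS_le {f : α → ℝ} {C : ℝ} (hC : ∀ x, |f x| ≤ C) (n : ℕ) (x : α) :
    |birkS T f n x| ≤ n * C := by
  calc |birkS T f n x| ≤ ∑ k ∈ Finset.range n, |f (T^[k] x)| :=
        Finset.abs_sum_le_sum_abs _ _
    _ ≤ ∑ _k ∈ Finset.range n, C := Finset.sum_le_sum fun k _ => hC _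
    _ = n * C := by simp [mul_comm]

lemma birkS_measurable (hT : Measurable T) {f : α → ℝ} (hf : Measurable f) (n : ℕ) :
    Measurable (birkS T f n) :=
  Finset.measurable_sum _ fun k _ => hf.comp (hT.iterate k)

lemma birkS_mono {f g : α → ℝ} (hfg : ∀ x, f x ≤ g x) (n : ℕ) (x : α) :
    birkS T f n x ≤ birkS T g n x :=
  Finset.sum_le_sum fun k _ => hfg _

lemma birkS_neg (T : α → α) (f : α → ℝ) (n : ℕ) (x : α) :
    birkS T (fun y => - f y) n x = - birkS T f n x := by
  simp [birkS]

lemma covering {h : α → ℝ} {β D : ℝ} {M : ℕ}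
    (hD0 : 0 ≤ D) (hβD : β ≤ D) (hlb : ∀ x, -D ≤ h x) (hM : 1 ≤ M)
    (hblock : ∀ x, ∃ n, 1 ≤ n ∧ n ≤ M ∧ β * n ≤ birkS T h n x) :
    ∀ N (x : α), β * N - 2 * M * D ≤ birkS T h N x := by
  intro N
  induction N using Nat.strong_induction_on with
  | _ N IH =>
    intro x
    by_cases hNM : N ≤ M
    · have h1 : -(D * N) ≤ birkS T h N x := by
        have := Finset.card_nsmul_le_sum (Finset.range N) (fun k => h (T^[k] x)) (-D)
          (fun i _ => hlb _)
        simpa [birkS, nsmul_eq_mul, mul_comm] using this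
      have hN' : (N : ℝ) ≤ (M : ℝ) := Nat.cast_le.2 hNM
      have hN0 : (0 : ℝ) ≤ (N : ℝ) := Nat.cast_nonneg N
      nlinarith
    · push_neg at hNM
      obtain ⟨n, hn1, hnM, hblk⟩ := hblock x
      have hnN : n ≤ N := by omega
      have key : birkS T h N x = birkS T h n x + birkS T h (N - n) (T^[n] x) := by
        rw [← birkS_add]; congr 1; omega
      have IH' := IH (N - n) (by omega) (T^[n] x)
      have hcast : ((N - n : ℕ) : ℝ) = (N : ℝ) - (n : ℝ) := by
        rw [Nat.cast_sub hnN]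
      rw [key]
      rw [hcast] at IH'
      nlinarith [IH', hblk]

end RotNum


namespace RotNum
set_option linter.unusedSectionVars false

variable {α : Type*} [MeasurableSpace α] {μ : Measure α} {T : α → α}

/-- The set of points whose Birkhoff averages exceed `q` infinitely often. -/
def freqSet (T : α → α) (f : α → ℝ) (q : ℚ) : Set α :=
  {x | ∃ᶠ n in atTop, (q : ℝ) * n ≤ birkS T f n x}

def goodSet (T : α → α) (f : α → ℝ) (t : ℝ) : Set α :=
  ⋂ (q : ℚ) (_ : (q : ℝ) < t), freqSet T f q

lemma measurableSet_freqSet (hT : Measurable T) {f : α → ℝ} (hf : Measurable f) (q : ℚ) :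
    MeasurableSet (freqSet T f q) := by
  have : freqSet T f q
      = ⋂ (N : ℕ), ⋃ (n : ℕ), ⋃ (_ : N ≤ n), {x | (q : ℝ) * n ≤ birkS T f n x} := by
    ext x
    simp only [freqSet, Set.mem_setOf_eq, frequently_atTop, Set.mem_iInter, Set.mem_iUnion]
    constructor
    · intro h N; obtain ⟨n, hn, h'⟩ := h N; exact ⟨n, hn, h'⟩
    · intro h N; obtain ⟨n, hn, h'⟩ := h N; exact ⟨n, hn, h'⟩
  rw [this]
  exact MeasurableSet.iInter fun N => MeasurableSet.iUnion fun n => MeasurableSet.iUnion fun _ =>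
    measurableSet_le measurable_const (birkS_measurable hT hf n)

lemma measurableSet_goodSet (hT : Measurable T) {f : α → ℝ} (hf : Measurable f) (t : ℝ) :
    MeasurableSet (goodSet T f t) :=
  MeasurableSet.iInter fun q => MeasurableSet.iInter fun _ => measurableSet_freqSet hT hf q

lemma freqSet_mono {f : α → ℝ} {q q' : ℚ} (hqq' : q' ≤ q) :
    freqSet T f q ⊆ freqSet T f q' := by
  intro x hx
  refine hx.mono fun n hn => le_trans ?_ hn
  have : (q' : ℝ) ≤ q := by exact_mod_cast hqq'
  have : (0:ℝ) ≤ n := Nat.cast_nonneg n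
  nlinarith

lemma freq_shift_up {f : α → ℝ} {C : ℝ} (hC : ∀ x, |f x| ≤ C) {q q' : ℚ} (hqq' : q < q')
    {x : α} (hx : T x ∈ freqSet T f q') : x ∈ freqSet T f q := by
  simp only [freqSet, Set.mem_setOf_eq, frequently_atTop] at hx ⊢
  intro N
  have hδ : (0:ℝ) < (q' : ℝ) - q := by
    have : (q : ℝ) < q' := by exact_mod_cast hqq'
    linarith
  obtain ⟨n₀, hn₀⟩ := exists_nat_ge ((C + q) / ((q' : ℝ) - q))
  obtain ⟨n, hnge, hn⟩ := hx (max N n₀)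
  refine ⟨n + 1, le_trans (le_max_left _ _) (le_trans hnge (Nat.le_succ n)), ?_⟩
  have h1 : C + q ≤ ((q' : ℝ) - q) * n := by
    rw [div_le_iff₀ hδ] at hn₀
    have : (n₀ : ℝ) ≤ n := Nat.cast_le.2 (le_trans (le_max_right _ _) hnge)
    nlinarith
  have h2 : birkS T f (n + 1) x = f x + birkS T f n (T x) := birkS_succ_left T f n x
  have h3 : -C ≤ f x := neg_le_of_abs_le (hC x)
  push_cast
  rw [h2]
  linarith

lemma freq_shift_down {f : α → ℝ} {C : ℝ} (hC : ∀ x, |f x| ≤ C) {q q' : ℚ} (hqq' : q < q')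
    {x : α} (hx : x ∈ freqSet T f q') : T x ∈ freqSet T f q := by
  simp only [freqSet, Set.mem_setOf_eq, frequently_atTop] at hx ⊢
  intro N
  have hδ' : (0:ℝ) < (q' : ℝ) - q := by
    have : (q : ℝ) < q' := by exact_mod_cast hqq'
    linarith
  obtain ⟨n₀, hn₀⟩ := exists_nat_ge ((C - q) / ((q' : ℝ) - q))
  obtain ⟨n, hnge, hn⟩ := hx (max (N + 1) n₀)
  have hn1 : 1 ≤ n := le_trans (le_trans (Nat.le_add_left 1 N) (le_max_left _ _)) hnge
  refine ⟨n - 1, by omega, ?_⟩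
  have h1 : C - q ≤ ((q' : ℝ) - q) * n := by
    rw [div_le_iff₀ hδ'] at hn₀
    have : (n₀ : ℝ) ≤ n := Nat.cast_le.2 (le_trans (le_max_right _ _) hnge)
    nlinarith
  have h2 : birkS T f n x = f x + birkS T f (n - 1) (T x) := by
    conv_lhs => rw [show n = (n - 1) + 1 from by omega]
    exact birkS_succ_left T f (n - 1) x
  have h3 : f x ≤ C := le_of_abs_le (hC x)
  have hcast : ((n - 1 : ℕ) : ℝ) = (n : ℝ) - 1 := by
    rw [Nat.cast_sub hn1]; norm_num
  rw [hcast]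
  linarith [hn, h2.symm.le, h2.le]

lemma goodSet_invariant {f : α → ℝ} {C : ℝ} (hC : ∀ x, |f x| ≤ C) (t : ℝ) :
    T ⁻¹' goodSet T f t = goodSet T f t := by
  ext x
  simp only [Set.mem_preimage, goodSet, Set.mem_iInter]
  constructor
  · intro hx q hq
    obtain ⟨q', hq1, hq2⟩ := exists_rat_btwn hq
    exact freq_shift_up hC (by exact_mod_cast hq1) (hx q' hq2)
  · intro hx q hq
    obtain ⟨q', hq1, hq2⟩ := exists_rat_btwn hq
    exact freq_shift_down hC (by exact_mod_cast hq1) (hx q' hq2)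

end RotNum

namespace RotNum
set_option linter.unusedSectionVars false

variable {α : Type*} [MeasurableSpace α] {μ : Measure α} {T : α → α}

/-- Candidate for the ergodic average: supremum of levels whose good set has full measure. -/
def rotC (T : α → α) (f : α → ℝ) (μ : Measure α) : ℝ :=
  sSup {t : ℝ | μ (goodSet T f t) = 1}

section ergodic

variable [IsProbabilityMeasure μ] {f : α → ℝ} {C : ℝ}

lemma goodSet_full_of_le (hC : ∀ x, |f x| ≤ C) {t : ℝ} (ht : t ≤ -C) :
    goodSet T f t = Set.univ := by
  ext x
  simp only [goodSet, Set.mem_iInter, Set.mem_univ, iff_true]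
  intro q hq
  refine Frequently.of_forall fun n => ?_
  have h1 : -((n:ℝ) * C) ≤ birkS T f n x := neg_le_of_abs_le (abs_birkS_le hC n x)
  have h2 : (q:ℝ) ≤ -C := le_of_lt (lt_of_lt_of_le hq ht)
  have h3 : (0:ℝ) ≤ n := Nat.cast_nonneg n
  nlinarith

lemma mem_rotC_set_le (hC : ∀ x, |f x| ≤ C) {t : ℝ} (ht : μ (goodSet T f t) = 1) :
    t ≤ C + 1 := by
  by_contra hlt
  push_neg at hlt
  obtain ⟨q, hq1, hq2⟩ := exists_rat_btwn (show C < t by linarith)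
  have hempty : freqSet T f q = (∅ : Set α) := by
    ext x
    simp only [Set.mem_empty_iff_false, iff_false]
    intro hx
    obtain ⟨n, hn1, hn⟩ := frequently_atTop.1 hx 1
    have h1 : birkS T f n x ≤ (n:ℝ) * C := le_of_abs_le (abs_birkS_le hC n x)
    have h2 : (1:ℝ) ≤ n := by exact_mod_cast hn1
    nlinarith
  have hsub : goodSet T f t ⊆ freqSet T f q :=
    Set.iInter_subset_of_subset q fun x hx => by
      simpa using Set.mem_iInter.1 hx hq2
  have hle := measure_mono (μ := μ) hsub
  rw [ht, hempty] at hle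
  simp at hle

lemma rotC_set_nonempty (hC : ∀ x, |f x| ≤ C) :
    (-C) ∈ {t : ℝ | μ (goodSet T f t) = 1} := by
  simp [Set.mem_setOf_eq, goodSet_full_of_le hC (le_refl (-C))]

lemma rotC_le (hC : ∀ x, |f x| ≤ C) : rotC T f μ ≤ C + 1 :=
  csSup_le ⟨-C, rotC_set_nonempty hC⟩ fun _ ht => mem_rotC_set_le hC ht

lemma le_rotC (hC : ∀ x, |f x| ≤ C) : -C ≤ rotC T f μ :=
  le_csSup ⟨C + 1, fun _ ht => mem_rotC_set_le hC ht⟩ (rotC_set_nonempty hC)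

lemma block_full (hC : ∀ x, |f x| ≤ C) {β : ℝ} (hβ : β < rotC T f μ) :
    μ {x | ∃ n, 1 ≤ n ∧ β * n ≤ birkS T f n x} = 1 := by
  obtain ⟨t, htL, hβt⟩ := exists_lt_of_lt_csSup ⟨-C, rotC_set_nonempty hC⟩ hβ
  obtain ⟨q, hq1, hq2⟩ := exists_rat_btwn hβt
  have hsub : goodSet T f t ⊆ {x | ∃ n, 1 ≤ n ∧ β * n ≤ birkS T f n x} := by
    intro x hx
    have hxq : x ∈ freqSet T f q := Set.mem_iInter.1 (Set.mem_iInter.1 hx q) hq2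
    obtain ⟨n, hn1, hn⟩ := frequently_atTop.1 hxq 1
    refine ⟨n, hn1, le_trans ?_ hn⟩
    have : (0:ℝ) ≤ n := Nat.cast_nonneg n
    nlinarith
  exact le_antisymm prob_le_one (le_trans (le_of_eq htL.symm) (measure_mono hsub))

lemma freq_null (hT : Ergodic T μ) (hf : Measurable f) (hC : ∀ x, |f x| ≤ C)
    {q : ℚ} (hq : rotC T f μ < q) : μ (freqSet T f q) = 0 := by
  have hsub : freqSet T f q ⊆ goodSet T f (q : ℝ) := by
    intro x hx
    simp only [goodSet, Set.mem_iInter]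
    intro q' hq'
    exact freqSet_mono (le_of_lt (by exact_mod_cast hq')) hx
  rcases hT.prob_eq_zero_or_one (measurableSet_goodSet hT.measurable hf (q:ℝ))
    (goodSet_invariant hC (q:ℝ)) with h0 | h1
  · exact measure_mono_null hsub h0
  · exact absurd (le_csSup ⟨C + 1, fun _ ht => mem_rotC_set_le hC ht⟩ h1) (not_le.2 hq)

lemma rotC_le_integral (hT : Ergodic T μ) (hf : Measurable f) (hC : ∀ x, |f x| ≤ C) :
    rotC T f μ ≤ ∫ x, f x ∂μ := by
  have : Nonempty α := MeasureTheory.Measure.nonempty_of_neZero μ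
  have hC0 : 0 ≤ C := le_trans (abs_nonneg _) (hC (Classical.arbitrary α))
  have hintf : Integrable f μ :=
    (integrable_const C).mono' hf.aestronglyMeasurable
      (Eventually.of_forall fun x => by simpa using hC x)
  have H : ∀ ε : ℝ, 0 < ε → ε ≤ 1 → rotC T f μ ≤ (∫ x, f x ∂μ) + ε * (4 * C + 5) := by
    classical
    intro ε hε hε1
    set c := rotC T f μ with hc
    set β := c - ε with hβdef
    set D := 2 * C + 2 with hD
    have hD0 : (0:ℝ) ≤ D := by simp [hD]; linarith
    have hcub : c ≤ C + 1 := rotC_le hC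
    have hclb : -C ≤ c := le_rotC hC
    have hβD : β ≤ D := by simp [hβdef, hD]; linarith
    have habsβ : |β| ≤ C + 2 := by
      rw [abs_le, hβdef]
      constructor <;> simp <;> linarith
    -- the sets E M
    set E : ℕ → Set α := fun M => {x | ∃ n, 1 ≤ n ∧ n ≤ M ∧ β * n ≤ birkS T f n x} with hE
    have hEmeas : ∀ M, MeasurableSet (E M) := by
      intro M
      have : E M = ⋃ (n : ℕ), ⋃ (_ : 1 ≤ n ∧ n ≤ M), {x | β * n ≤ birkS T f n x} := by
        ext x
        simp only [hE, Set.mem_setOf_eq, Set.mem_iUnion]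
        tauto
      rw [this]
      exact MeasurableSet.iUnion fun n => MeasurableSet.iUnion fun _ =>
        measurableSet_le measurable_const (birkS_measurable hT.measurable hf n)
    have hmono : Monotone E := fun M M' hMM' x ⟨n, h1, h2, h3⟩ => ⟨n, h1, h2.trans hMM', h3⟩
    have hEU : ⋃ M, E M = {x | ∃ n, 1 ≤ n ∧ β * n ≤ birkS T f n x} := by
      ext x
      simp only [Set.mem_iUnion, hE, Set.mem_setOf_eq]
      exact ⟨fun ⟨M, n, h1, _, h3⟩ => ⟨n, h1, h3⟩, fun ⟨n, h1, h3⟩ => ⟨n, n, h1, le_refl n, h3⟩⟩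
    have hfull : μ (⋃ M, E M) = 1 := by
      rw [hEU]; exact block_full hC (by simp [hβdef]; linarith)
    have htend : Tendsto (fun M => μ (E M)) atTop (𝓝 1) := by
      have := tendsto_measure_iUnion_atTop (μ := μ) hmono
      rwa [hfull] at this
    have hlo : (1 : ℝ≥0∞) - ENNReal.ofReal ε < 1 := by
      apply ENNReal.sub_lt_self one_ne_top one_ne_zero
      simpa using hε
    obtain ⟨M₀, hM₀⟩ := (htend.eventually (lt_mem_nhds hlo)).exists
    set M := max M₀ 1 with hM
    have hM1 : 1 ≤ M := le_max_right _ _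
    have hEM : (1 : ℝ≥0∞) - ENNReal.ofReal ε < μ (E M) :=
      lt_of_lt_of_le hM₀ (measure_mono (hmono (le_max_left _ _)))
    have hcompl : μ ((E M)ᶜ) ≤ ENNReal.ofReal ε := by
      rw [measure_compl (hEmeas M) (measure_ne_top μ _), measure_univ]
      rw [tsub_le_iff_right]
      calc (1 : ℝ≥0∞) ≤ (1 - ENNReal.ofReal ε) + ENNReal.ofReal ε := le_tsub_add
        _ ≤ ENNReal.ofReal ε + μ (E M) := by rw [add_comm]; exact add_le_add le_rfl hEM.le
    have hcomplR : (μ ((E M)ᶜ)).toReal ≤ ε :=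
      ENNReal.toReal_le_of_le_ofReal hε.le hcompl
    -- modified function
    set h : α → ℝ := fun x => if x ∈ E M then f x else max (f x) β with hh
    have hhmeas : Measurable h := Measurable.ite (hEmeas M) hf (hf.max measurable_const)
    have hhbound : ∀ x, |h x| ≤ C + 2 := by
      intro x
      simp only [hh]
      split
      · exact le_trans (hC x) (by linarith)
      · exact le_trans (abs_max_le_max_abs_abs) (max_le (le_trans (hC x) (by linarith)) habsβ)
    have hlbh : ∀ x, -D ≤ h x := fun x => by
      have := neg_le_of_abs_le (hhbound x); simp only [hD]; linarith
    have hfh : ∀ x, f x ≤ h x := fun x => by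
      simp only [hh]; split
      · exact le_refl _
      · exact le_max_left _ _
    have hinth : Integrable h μ :=
      (integrable_const (C + 2)).mono' hhmeas.aestronglyMeasurable
        (Eventually.of_forall fun x => by simpa using hhbound x)
    have hblock : ∀ x, ∃ n, 1 ≤ n ∧ n ≤ M ∧ β * n ≤ birkS T h n x := by
      intro x
      by_cases hx : x ∈ E M
      · obtain ⟨n, h1, h2, h3⟩ := hx
        exact ⟨n, h1, h2, le_trans h3 (birkS_mono hfh n x)⟩
      · refine ⟨1, le_refl 1, hM1, ?_⟩
        rw [birkS_one]
        simp only [hh, if_neg hx]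
        simpa using le_max_right (f x) β
    have hcov := covering hD0 hβD hlbh hM1 hblock
    -- integrate
    have hSint : ∀ N : ℕ, ∫ x, birkS T h N x ∂μ = N * ∫ x, h x ∂μ := by
      intro N
      have hterm : ∀ k : ℕ, ∫ x, h (T^[k] x) ∂μ = ∫ x, h x ∂μ := by
        intro k
        have hmp : MeasurePreserving (T^[k]) μ μ := hT.toMeasurePreserving.iterate k
        rw [← integral_map hmp.aemeasurable hhmeas.aestronglyMeasurable, hmp.map_eq]
      have hint' : ∀ k ∈ Finset.range N, Integrable (fun x => h (T^[k] x)) μ := by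
        intro k _
        exact ((hT.toMeasurePreserving.iterate k).integrable_comp
          hhmeas.aestronglyMeasurable).2 hinth
      simp only [birkS]
      rw [integral_finset_sum _ hint']
      simp only [hterm]
      simp [Finset.sum_const, mul_comm]
    have key : ∀ N : ℕ, β * N - 2 * M * D ≤ N * ∫ x, h x ∂μ := by
      intro N
      have hSintegrable : Integrable (fun x => birkS T h N x) μ :=
        (integrable_const ((N:ℝ) * (C + 2))).mono'
          (birkS_measurable hT.measurable hhmeas N).aestronglyMeasurable
          (Eventually.of_forall fun x => by simpa using abs_birkS_le hhbound N x)
      have h0 := integral_mono (integrable_const (β * N - 2 * M * D)) hSintegrable (hcov N)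
      rw [integral_const, probReal_univ, smul_eq_mul, one_mul, hSint N] at h0
      exact h0
    have hβh : β ≤ ∫ x, h x ∂μ := by
      have htd : Tendsto (fun N : ℕ => β - 2 * M * D / N) atTop (𝓝 β) := by
        have := (tendsto_const_div_atTop_nhds_zero_nat (2 * M * D))
        simpa using tendsto_const_nhds.sub this
      refine le_of_tendsto htd ?_
      filter_upwards [eventually_ge_atTop 1] with N hN
      have hNpos : (0:ℝ) < N := by exact_mod_cast hN
      have h2 : (β - 2 * M * D / N) * N ≤ (∫ x, h x ∂μ) * N := by
        have : (β - 2 * M * D / N) * N = β * N - 2 * M * D := by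
          field_simp
        rw [this, mul_comm (∫ x, h x ∂μ) (N:ℝ)]
        exact key N
      exact le_of_mul_le_mul_right h2 hNpos
    -- compare the integrals of h and f
    have hhf : ∫ x, h x ∂μ ≤ (∫ x, f x ∂μ) + D * ε := by
      have hptw : ∀ x, h x - f x ≤ ((E M)ᶜ).indicator (fun _ => D) x := by
        intro x
        by_cases hx : x ∈ E M
        · have hhx : h x = f x := if_pos hx
          rw [hhx, Set.indicator_of_notMem (Set.notMem_compl_iff.2 hx)]
          simp
        · rw [Set.indicator_of_mem (Set.mem_compl hx)]
          have hhx : h x = max (f x) β := if_neg hx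
          rw [hhx]
          have h1 : max (f x) β - f x ≤ |max (f x) β| + |f x| := by
            have := le_abs_self (max (f x) β); have := neg_le_of_abs_le (hC x); linarith [le_of_abs_le (hC x), neg_abs_le (f x)]
          have h2 : |max (f x) β| ≤ max C (C+2) :=
            le_trans abs_max_le_max_abs_abs (max_le_max (hC x) habsβ)
          have h3 : max C (C + 2) = C + 2 := max_eq_right (by linarith)
          have := hC x
          simp only [hD]
          have := le_of_abs_le (hC x); have := neg_le_of_abs_le (hC x)
          rw [h3] at h2
          have h4 : max (f x) β ≤ C + 2 := le_trans (le_abs_self _) h2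
          linarith
      have hint_ind : Integrable (((E M)ᶜ).indicator (fun _ => D)) μ :=
        (integrable_const D).indicator (hEmeas M).compl
      have := integral_mono (hinth.sub hintf) hint_ind (fun x => by simpa using hptw x)
      simp only [Pi.sub_apply] at this
      rw [integral_sub hinth hintf, integral_indicator_const D (hEmeas M).compl] at this
      have hmul : (μ ((E M)ᶜ)).toReal • D ≤ ε * D := by
        rw [smul_eq_mul]
        exact mul_le_mul_of_nonneg_right hcomplR hD0
      rw [measureReal_def] at this
      nlinarith [this, hmul]
    have : c - ε ≤ (∫ x, f x ∂μ) + D * ε := le_trans hβh hhf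
    have : c ≤ (∫ x, f x ∂μ) + ε * (D + 1) := by nlinarith
    refine le_trans this ?_
    have : ε * (D + 1) ≤ ε * (4 * C + 5) := by
      apply mul_le_mul_of_nonneg_left _ hε.le
      simp [hD]; linarith
    linarith
  -- conclude
  by_contra hlt
  push_neg at hlt
  set δ := rotC T f μ - ∫ x, f x ∂μ with hδ
  have hδpos : 0 < δ := by simp [hδ]; linarith
  have hK : (0:ℝ) < 4 * C + 5 := by linarith
  set ε := min 1 (δ / (2 * (4 * C + 5))) with hε
  have hεpos : 0 < ε := lt_min one_pos (by positivity)
  have hε1 : ε ≤ 1 := min_le_left _ _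
  have := H ε hεpos hε1
  have hεle : ε * (4 * C + 5) ≤ δ / 2 := by
    have h1 : ε ≤ δ / (2 * (4 * C + 5)) := min_le_right _ _
    calc ε * (4 * C + 5) ≤ (δ / (2 * (4 * C + 5))) * (4 * C + 5) :=
          mul_le_mul_of_nonneg_right h1 hK.le
      _ = δ / 2 := by field_simp
  simp only [hδ] at hεle
  linarith

lemma abs_birkS_div_le (hC : ∀ x, |f x| ≤ C) (hC0 : 0 ≤ C) (x : α) (n : ℕ) :
    |birkS T f n x / n| ≤ C := by
  rcases Nat.eq_zero_or_pos n with rfl | hn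
  · simp [birkS_zero, hC0]
  · have hnpos : (0:ℝ) < n := by exact_mod_cast hn
    rw [abs_div, abs_of_pos hnpos, div_le_iff₀ hnpos, mul_comm]
    exact abs_birkS_le hC n x

theorem birkhoff_limsup (hT : Ergodic T μ) (hf : Measurable f) (hC : ∀ x, |f x| ≤ C) :
    ∀ᵐ x ∂μ, limsup (fun n : ℕ => birkS T f n x / n) atTop ≤ ∫ x, f x ∂μ := by
  have : Nonempty α := MeasureTheory.Measure.nonempty_of_neZero μ
  have hC0 : 0 ≤ C := le_trans (abs_nonneg _) (hC (Classical.arbitrary α))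
  have hae : ∀ᵐ x ∂μ, ∀ q : ℚ, rotC T f μ < q → x ∉ freqSet T f q := by
    rw [ae_all_iff]
    intro q
    by_cases hq : rotC T f μ < (q : ℝ)
    · filter_upwards [measure_eq_zero_iff_ae_notMem.1 (freq_null hT hf hC hq)] with x hx _
      exact hx
    · filter_upwards with x hq'
      exact absurd hq' hq
  filter_upwards [hae] with x hx
  have hcob : IsCoboundedUnder (· ≤ ·) atTop (fun n : ℕ => birkS T f n x / n) :=
    isCoboundedUnder_le_of_le atTop (x := -C)
      (fun n => neg_le_of_abs_le (abs_birkS_div_le hC hC0 x n))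
  have hq : ∀ q : ℚ, rotC T f μ < q →
      limsup (fun n : ℕ => birkS T f n x / n) atTop ≤ q := by
    intro q hqc
    apply limsup_le_of_le hcob
    have hev : ∀ᶠ n in atTop, ¬ ((q:ℝ) * n ≤ birkS T f n x) := not_frequently.1 (hx q hqc)
    filter_upwards [hev, eventually_ge_atTop 1] with n hn hn1
    push_neg at hn
    have hnpos : (0:ℝ) < n := by exact_mod_cast hn1
    rw [div_le_iff₀ hnpos, mul_comm ((q:ℝ)) ((n:ℕ):ℝ)] at *
    exact hn.le
  by_contra hlt
  push_neg at hlt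
  have hc := rotC_le_integral hT hf hC
  obtain ⟨q, hq1, hq2⟩ := exists_rat_btwn hlt
  exact absurd (hq q (lt_of_le_of_lt hc hq1)) (not_le.2 hq2)

theorem birkhoff_ae (hT : Ergodic T μ) (hf : Measurable f) (hC : ∀ x, |f x| ≤ C) :
    ∀ᵐ x ∂μ, Tendsto (fun n : ℕ => birkS T f n x / n) atTop (𝓝 (∫ x, f x ∂μ)) := by
  have h1 := birkhoff_limsup hT hf hC
  have h2 := birkhoff_limsup hT (f := fun y => -f y) hf.neg (C := C) (fun x => by simpa using hC x)
  filter_upwards [h1, h2] with x hx1 hx2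
  have : Nonempty α := MeasureTheory.Measure.nonempty_of_neZero μ
  have hC0 : 0 ≤ C := le_trans (abs_nonneg _) (hC (Classical.arbitrary α))
  simp only [birkS_neg, neg_div, integral_neg] at hx2
  have hbd_le : IsBoundedUnder (· ≤ ·) atTop (fun n : ℕ => birkS T f n x / n) :=
    isBoundedUnder_of ⟨C, fun n => le_of_abs_le (abs_birkS_div_le hC hC0 x n)⟩
  have hbd_le' : IsBoundedUnder (· ≤ ·) atTop (fun n : ℕ => -(birkS T f n x / n)) :=
    isBoundedUnder_of ⟨C, fun n => by
      have := neg_le_of_abs_le (abs_birkS_div_le (T := T) hC hC0 x n); linarith⟩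
  refine tendsto_order.2 ⟨fun b hb => ?_, fun b hb => ?_⟩
  · have hlim : limsup (fun n : ℕ => -(birkS T f n x / n)) atTop < -b :=
      lt_of_le_of_lt hx2 (by linarith)
    filter_upwards [eventually_lt_of_limsup_lt hlim hbd_le'] with n hn
    linarith
  · filter_upwards [eventually_lt_of_limsup_lt (lt_of_le_of_lt hx1 hb) hbd_le] with n hn
    exact hn

end ergodic

end RotNum


namespace RotNum

lemma SL2act_injective (A : SL2) : Function.Injective (SL2act A) := by
  unfold SL2act
  exact Projectivization.map_injective _ _

/-- helper: equal complex exponentials of `r*I` give the translates. -/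
lemma exp_eq_aux {r s : ℝ} (h : Complex.exp ((r : ℂ) * Complex.I) = Complex.exp ((s : ℂ) * Complex.I)) :
    ∃ n : ℤ, r = s + n * (2 * Real.pi) := by
  rw [Complex.exp_eq_exp_iff_exists_int] at h
  obtain ⟨n, hn⟩ := h
  refine ⟨n, ?_⟩
  have h2 : (r : ℂ) = (s : ℂ) + (n : ℂ) * (2 * (Real.pi : ℂ)) := by
    have hI : (Complex.I : ℂ) ≠ 0 := Complex.I_ne_zero
    apply mul_right_cancel₀ hI
    rw [hn]; ring
  exact_mod_cast h2

lemma RP1proj_eq {y₁ y₂ : ℝ} (h : RP1proj y₁ = RP1proj y₂) : ∃ k : ℤ, y₁ = y₂ + k := by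
  rw [RP1proj, RP1proj, Projectivization.mk_eq_mk_iff] at h
  obtain ⟨a, ha⟩ := h
  have h0 : (a : ℝ) * Real.cos (Real.pi * y₂) = Real.cos (Real.pi * y₁) := by
    have := congrFun ha 0; simpa [Units.smul_def] using this
  have h1 : (a : ℝ) * Real.sin (Real.pi * y₂) = Real.sin (Real.pi * y₁) := by
    have := congrFun ha 1; simpa [Units.smul_def] using this
  have e1 := Real.sin_sq_add_cos_sq (Real.pi * y₁)
  have e2 := Real.sin_sq_add_cos_sq (Real.pi * y₂)
  have hsq : (a : ℝ) ^ 2 = 1 := by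
    calc (a : ℝ) ^ 2 = (a : ℝ) ^ 2 * (Real.sin (Real.pi * y₂) ^ 2 + Real.cos (Real.pi * y₂) ^ 2) := by
          rw [e2]; ring
      _ = ((a : ℝ) * Real.sin (Real.pi * y₂)) ^ 2 + ((a : ℝ) * Real.cos (Real.pi * y₂)) ^ 2 := by
          ring
      _ = Real.sin (Real.pi * y₁) ^ 2 + Real.cos (Real.pi * y₁) ^ 2 := by rw [h0, h1]
      _ = 1 := e1
  have ha2 : ((a : ℝ) - 1) * ((a : ℝ) + 1) = 0 := by
    have hr : ((a : ℝ) - 1) * ((a : ℝ) + 1) = (a : ℝ) ^ 2 - 1 := by ring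
    rw [hr, hsq]; ring
  have hexp : ∀ r : ℝ, Complex.exp ((r : ℂ) * Complex.I)
      = (Real.cos r : ℂ) + (Real.sin r : ℂ) * Complex.I := by
    intro r
    rw [Complex.exp_mul_I]
    simp [Complex.ofReal_cos, Complex.ofReal_sin]
  have hπ : Real.pi ≠ 0 := Real.pi_ne_zero
  rcases mul_eq_zero.1 ha2 with ha1 | ha1
  · -- a = 1
    have haa : (a : ℝ) = 1 := by linarith
    rw [haa, one_mul] at h0 h1
    have hee : Complex.exp (((Real.pi * y₁ : ℝ) : ℂ) * Complex.I)
        = Complex.exp (((Real.pi * y₂ : ℝ) : ℂ) * Complex.I) := by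
      rw [hexp, hexp, h0, h1]
    obtain ⟨n, hn⟩ := exp_eq_aux hee
    refine ⟨2 * n, ?_⟩
    have hmm : Real.pi * y₁ = Real.pi * (y₂ + (2 * n : ℤ)) := by push_cast at hn ⊢; linarith
    have := mul_left_cancel₀ hπ hmm
    linarith
  · -- a = -1
    have haa : (a : ℝ) = -1 := by linarith
    rw [haa] at h0 h1
    have hee : Complex.exp (((Real.pi * y₁ : ℝ) : ℂ) * Complex.I)
        = Complex.exp (((Real.pi * y₂ + Real.pi : ℝ) : ℂ) * Complex.I) := by
      rw [hexp, hexp, Real.cos_add_pi, Real.sin_add_pi, ← h0, ← h1]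
      push_cast
      ring
    obtain ⟨n, hn⟩ := exp_eq_aux hee
    refine ⟨2 * n + 1, ?_⟩
    have hmm : Real.pi * y₁ = Real.pi * (y₂ + ((2 * n + 1 : ℤ) : ℝ)) := by
      push_cast at hn ⊢; linarith
    have := mul_left_cancel₀ hπ hmm
    linarith

section Lift

variable {X : Type*} [TopologicalSpace X] {A : X → SL2} {g : X → ℝ → ℝ} {T : X → X}

lemma lift_shift (hg : IsLiftFamily A g) : ∀ (x : X) (y : ℝ) (k : ℤ), g x (y + k) = g x y + k := by
  have hper := hg.2.2
  have hsub : ∀ (x : X) (y : ℝ), g x (y - 1) = g x y - 1 := by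
    intro x y
    have := hper x (y - 1)
    simp only [sub_add_cancel] at this
    linarith
  intro x y k
  induction k using Int.induction_on with
  | zero => simp
  | succ n ih =>
      push_cast at ih ⊢
      rw [show y + ((n : ℝ) + 1) = (y + n) + 1 from by ring, hper x (y + n), ih]
      ring
  | pred n ih =>
      push_cast at ih ⊢
      rw [show y + (-(n : ℝ) - 1) = (y + -(n : ℝ)) - 1 from by ring, hsub x (y + -(n : ℝ)), ih]
      ring

lemma lift_injective (hg : IsLiftFamily A g) (x : X) : Function.Injective (g x) := by
  intro y₁ y₂ hy
  have h1 : SL2act (A x) (RP1proj y₁) = SL2act (A x) (RP1proj y₂) := by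
    rw [← hg.2.1, ← hg.2.1, hy]
  obtain ⟨k, hk⟩ := RP1proj_eq (SL2act_injective (A x) h1)
  have h2 : g x y₁ = g x y₂ + k := by rw [hk, lift_shift hg]
  have h3 : (k : ℝ) = 0 := by rw [hy] at h2; linarith
  have h4 : k = 0 := by exact_mod_cast h3
  rw [hk, h4]
  simp

lemma lift_continuous (hg : IsLiftFamily A g) (x : X) : Continuous (g x) :=
  hg.1.comp (Continuous.prodMk_right x)

lemma lift_strictMono (hg : IsLiftFamily A g) (x : X) : StrictMono (g x) := by
  rcases Continuous.strictMono_of_inj (lift_continuous hg x) (lift_injective hg x) with h | h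
  · exact h
  · exfalso
    have h1 : g x (0 + 1) = g x 0 + 1 := hg.2.2 x 0
    have h2 : g x 1 < g x 0 := h zero_lt_one
    rw [zero_add] at h1
    linarith

lemma lift_bound [CompactSpace X] (hg : IsLiftFamily A g) :
    ∃ K : ℝ, 0 ≤ K ∧ ∀ x y, |g x y - y| ≤ K := by
  by_cases hX : Nonempty X
  · have hc : Continuous fun x : X => |g x 0| :=
      (hg.1.comp (continuous_id.prodMk continuous_const)).abs
    obtain ⟨C, hC⟩ := (isCompact_range hc).bddAbove
    have hC0 : 0 ≤ C := le_trans (abs_nonneg _) (hC (Set.mem_range_self (Classical.arbitrary X)))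
    refine ⟨C + 2, by linarith, ?_⟩
    intro x y
    set t := Int.fract y with htdef
    have ht0 : 0 ≤ t := Int.fract_nonneg y
    have ht1 : t < 1 := Int.fract_lt_one y
    have hy : y = t + (⌊y⌋ : ℤ) := by rw [htdef, Int.fract]; ring
    have h1 : g x y = g x t + (⌊y⌋ : ℤ) := by
      conv_lhs => rw [hy]
      exact lift_shift hg x t ⌊y⌋
    have m0 : g x 0 ≤ g x t := (lift_strictMono hg x).monotone ht0
    have m1 : g x t ≤ g x 1 := (lift_strictMono hg x).monotone ht1.le
    have h2 : g x 1 = g x 0 + 1 := by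
      have := hg.2.2 x 0
      rw [zero_add] at this
      exact this
    have hb : |g x 0| ≤ C := hC (Set.mem_range_self x)
    have hb1 := le_of_abs_le hb
    have hb2 := neg_le_of_abs_le hb
    rw [h1, abs_le]
    constructor <;> linarith
  · exact ⟨0, le_refl 0, fun x => (hX ⟨x⟩).elim⟩

lemma liftIter_succ (T : X → X) (g : X → ℝ → ℝ) (n : ℕ) (x : X) (y : ℝ) :
    liftIter T g (n + 1) x y = liftIter T g n (T x) (g x y) := rfl

lemma liftIter_add (T : X → X) (g : X → ℝ → ℝ) (m n : ℕ) (x : X) (y : ℝ) :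
    liftIter T g (m + n) x y = liftIter T g n (T^[m] x) (liftIter T g m x y) := by
  induction m generalizing x y with
  | zero => simp [liftIter]
  | succ m IH =>
      rw [show m + 1 + n = (m + n) + 1 from by omega, liftIter_succ, liftIter_succ,
        IH (T x) (g x y), Function.iterate_succ_apply]

lemma liftIter_shift (hg : IsLiftFamily A g) :
    ∀ (n : ℕ) (x : X) (y : ℝ) (k : ℤ), liftIter T g n x (y + k) = liftIter T g n x y + k := by
  intro n
  induction n with
  | zero => intro x y k; simp [liftIter]
  | succ n IH =>
      intro x y k
      rw [liftIter_succ, liftIter_succ, lift_shift hg, IH]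

lemma liftIter_mono (hg : IsLiftFamily A g) (n : ℕ) :
    ∀ (x : X), Monotone (liftIter T g n x) := by
  induction n with
  | zero => intro x y₁ y₂ h; simpa [liftIter] using h
  | succ n IH =>
      intro x y₁ y₂ h
      rw [liftIter_succ, liftIter_succ]
      exact IH (T x) ((lift_strictMono hg x).monotone h)

lemma liftIter_cont (hg : IsLiftFamily A g) (hT : Continuous T) (n : ℕ) :
    Continuous fun p : X × ℝ => liftIter T g n p.1 p.2 := by
  induction n with
  | zero => exact continuous_snd
  | succ n IH =>
      show Continuous fun p : X × ℝ => liftIter T g n (T p.1) (g p.1 p.2)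
      exact IH.comp ((hT.comp continuous_fst).prodMk hg.1)

lemma liftIter_bound {K : ℝ} (hK : ∀ x y, |g x y - y| ≤ K) :
    ∀ (n : ℕ) (x : X) (y : ℝ), |liftIter T g n x y - y| ≤ n * K := by
  intro n
  induction n with
  | zero => intro x y; simp [liftIter]
  | succ n IH =>
      intro x y
      rw [liftIter_succ]
      have h1 := IH (T x) (g x y)
      have h2 := hK x y
      have := abs_sub_le (liftIter T g n (T x) (g x y)) (g x y) y
      push_cast
      nlinarith

lemma liftIter_dev (hg : IsLiftFamily A g) (n : ℕ) (x : X) (y : ℝ) :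
    |liftIter T g n x y - liftIter T g n x 0 - y| ≤ 2 := by
  set t := Int.fract y with htdef
  have ht0 : 0 ≤ t := Int.fract_nonneg y
  have ht1 : t < 1 := Int.fract_lt_one y
  have hy : y = t + (⌊y⌋ : ℤ) := by rw [htdef, Int.fract]; ring
  have h1 : liftIter T g n x y = liftIter T g n x t + (⌊y⌋ : ℤ) := by
    conv_lhs => rw [hy]
    exact liftIter_shift hg n x t ⌊y⌋
  have m0 : liftIter T g n x 0 ≤ liftIter T g n x t := liftIter_mono hg n x ht0
  have m1 : liftIter T g n x t ≤ liftIter T g n x 0 + 1 := by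
    have hsh := liftIter_shift (T := T) hg n x 0 1
    have := liftIter_mono (T := T) hg n x (show t ≤ (0:ℝ) + (1:ℤ) by push_cast; linarith)
    rw [hsh] at this
    push_cast at this
    linarith
  have h2 : liftIter T g n x y - liftIter T g n x 0 - y
      = liftIter T g n x t - liftIter T g n x 0 - t := by rw [h1]; linarith
  rw [h2, abs_le]
  constructor <;> linarith

end Lift

end RotNum


namespace RotNum

lemma sum_shift (b : ℕ → ℝ) (m n : ℕ) :
    ∑ k ∈ Finset.range n, (b (k + m) - b k) = ∑ j ∈ Finset.range m, (b (n + j) - b j) := by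
  induction n with
  | zero => simp
  | succ n IH =>
      have tele : ∑ j ∈ Finset.range m, (b (n + (j + 1)) - b (n + j)) = b (n + m) - b (n + 0) :=
        Finset.sum_range_sub (fun j => b (n + j)) m
      rw [Finset.sum_range_succ, IH]
      rw [show (∑ j ∈ Finset.range m, (b (n + j) - b j)) + (b (n + m) - b n)
          = ∑ j ∈ Finset.range m, ((b (n + j) - b j) + (b (n + (j + 1)) - b (n + j))) from by
        rw [Finset.sum_add_distrib, tele]; simp]
      refine Finset.sum_congr rfl fun j _ => ?_
      rw [show n + 1 + j = n + (j + 1) from by omega]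
      ring

lemma div_mono_nat {p q : ℝ} (n : ℕ) (h : p ≤ q) : p / n ≤ q / n := by
  rcases Nat.eq_zero_or_pos n with rfl | hn
  · simp
  · have : (0:ℝ) < n := by exact_mod_cast hn
    exact (div_le_div_iff_of_pos_right this).2 h

end RotNum

/-- For any family of lifts `g̃` of a continuous `SL(2,ℝ)`-cocycle over an
ergodic system, the rotation number exists: the averaged limits and the `μ`-a.e. fiberwise
limits of `G̃_{x,n}(y)/n` exist and equal a common constant `ρ`. -/
theorem rotation_number_exists
    {X : Type*} [MetricSpace X] [CompactSpace X]
    [MeasurableSpace X] [BorelSpace X]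
    (T : X ≃ₜ X) (μ : Measure X) [IsProbabilityMeasure μ] (hT : Ergodic (⇑T) μ)
    (A : X → SL2) (hA : Continuous A)
    (g : X → ℝ → ℝ) (hg : IsLiftFamily A g) :
    ∃ ρ : ℝ,
      (∀ y : ℝ, Tendsto (fun n : ℕ => (∫ x, liftIter (⇑T) g n x y ∂μ) / n) atTop (𝓝 ρ)) ∧
      ∀ᵐ x ∂μ, ∀ y : ℝ, Tendsto (fun n : ℕ => liftIter (⇑T) g n x y / n) atTop (𝓝 ρ) := by
  classical
  obtain ⟨gcont, gproj, gper⟩ := hg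
  have hg' : IsLiftFamily A g := ⟨gcont, gproj, gper⟩
  obtain ⟨K, hK0, hKb⟩ := RotNum.lift_bound hg'
  set S : ℕ → X → ℝ → ℝ := fun n x y => liftIter (⇑T) g n x y with hS
  set a : ℕ → X → ℝ := fun n x => liftIter (⇑T) g n x 0 with ha
  have hacont : ∀ n, Continuous (a n) := fun n =>
    (RotNum.liftIter_cont hg' T.continuous n).comp (continuous_id.prodMk continuous_const)
  have hameas : ∀ n, Measurable (a n) := fun n => (hacont n).measurable
  have habnd : ∀ (n : ℕ) x, |a n x| ≤ n * K := fun n x => by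
    simpa using RotNum.liftIter_bound (T := ⇑T) hKb n x 0
  have haint : ∀ n, Integrable (a n) μ := fun n =>
    (integrable_const ((n:ℝ) * K)).mono' (hameas n).aestronglyMeasurable
      (Eventually.of_forall fun x => by simpa using habnd n x)
  have hdev : ∀ (n : ℕ) x y, |liftIter (⇑T) g n x y - a n x - y| ≤ 2 := fun n x y =>
    RotNum.liftIter_dev hg' n x y
  have halmost : ∀ (m n : ℕ) x, |a (m + n) x - a m x - a n ((⇑T)^[m] x)| ≤ 2 := by
    intro m n x
    have h1 : a (m + n) x = liftIter (⇑T) g n ((⇑T)^[m] x) (a m x) :=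
      RotNum.liftIter_add (⇑T) g m n x 0
    have h2 := hdev n ((⇑T)^[m] x) (a m x)
    rw [← h1] at h2
    have h3 : a (m + n) x - a m x - a n ((⇑T)^[m] x)
        = a (m + n) x - a n ((⇑T)^[m] x) - a m x := by ring
    rw [h3]
    exact h2
  set u : ℕ → ℝ := fun n => ∫ x, a n x ∂μ with hu
  have hcomp_int : ∀ n m : ℕ, Integrable (fun x => a n ((⇑T)^[m] x)) μ := fun n m =>
    ((hT.toMeasurePreserving.iterate m).integrable_comp (hameas n).aestronglyMeasurable).2 (haint n)
  have hshiftint : ∀ n m : ℕ, ∫ x, a n ((⇑T)^[m] x) ∂μ = u n := by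
    intro n m
    have hmp := hT.toMeasurePreserving.iterate m
    rw [← integral_map hmp.aemeasurable (hameas n).aestronglyMeasurable, hmp.map_eq]
  have husub : Subadditive (fun n => u n + 2) := by
    intro m n
    have hpt : ∀ x, a (m + n) x ≤ a m x + (a n ((⇑T)^[m] x) + 2) := fun x => by
      have := le_of_abs_le (halmost m n x)
      linarith
    have i2 : Integrable (fun x : X => a n ((⇑T)^[m] x) + 2) μ :=
      (hcomp_int n m).add (integrable_const 2)
    have hmono : u (m + n) ≤ u m + (u n + 2) := by
      calc u (m + n) ≤ ∫ x, (a m x + (a n ((⇑T)^[m] x) + 2)) ∂μ :=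
            integral_mono (haint (m + n)) ((haint m).add i2) hpt
        _ = (∫ x, a m x ∂μ) + ∫ x, (a n ((⇑T)^[m] x) + 2) ∂μ :=
            integral_add (haint m) i2
        _ = (∫ x, a m x ∂μ) + ((∫ x, a n ((⇑T)^[m] x) ∂μ) + ∫ _x, (2:ℝ) ∂μ) := by
            rw [integral_add (hcomp_int n m) (integrable_const 2)]
        _ = u m + (u n + 2) := by
            rw [hshiftint n m, integral_const]
            simp [hu]
    simp only []
    linarith
  have hulb : ∀ n : ℕ, -((n:ℝ) * K) ≤ u n := by
    intro n
    have := integral_mono (integrable_const (-((n:ℝ) * K))) (haint n)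
      (fun x => neg_le_of_abs_le (habnd n x))
    rw [integral_const] at this
    simpa using this
  have hbdd : BddBelow (Set.range fun n : ℕ => (u n + 2) / n) := by
    refine ⟨-K, ?_⟩
    rintro r ⟨n, rfl⟩
    rcases Nat.eq_zero_or_pos n with rfl | hn
    · simp; linarith
    · have hnpos : (0:ℝ) < n := by exact_mod_cast hn
      rw [le_div_iff₀ hnpos]
      have := hulb n
      nlinarith
  set ρ := husub.lim with hρ
  have htendu : Tendsto (fun n : ℕ => (u n + 2) / n) atTop (𝓝 ρ) := husub.tendsto_lim hbdd
  have htendu' : Tendsto (fun n : ℕ => u n / n) atTop (𝓝 ρ) := by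
    have h2 : Tendsto (fun n : ℕ => (2:ℝ) / n) atTop (𝓝 0) :=
      tendsto_const_div_atTop_nhds_zero_nat 2
    have := htendu.sub h2
    rw [sub_zero] at this
    refine this.congr fun n => ?_
    rw [div_sub_div_same]
    norm_num
  refine ⟨ρ, ?_, ?_⟩
  · -- averaged statement
    intro y
    have hGcont : ∀ n : ℕ, Continuous (fun x => liftIter (⇑T) g n x y) := fun n =>
      (RotNum.liftIter_cont hg' T.continuous n).comp (continuous_id.prodMk continuous_const)
    have hGbnd : ∀ (n : ℕ) x, |liftIter (⇑T) g n x y| ≤ (n:ℝ) * K + |y| := by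
      intro n x
      have h1 := RotNum.liftIter_bound (T := ⇑T) hKb n x y
      have := abs_sub_abs_le_abs_sub (liftIter (⇑T) g n x y) y
      have hy := abs_nonneg y
      linarith [le_of_abs_le h1, neg_le_of_abs_le h1, le_abs_self (liftIter (⇑T) g n x y),
        neg_abs_le (liftIter (⇑T) g n x y)]
    have hGint : ∀ n : ℕ, Integrable (fun x => liftIter (⇑T) g n x y) μ := fun n =>
      (integrable_const ((n:ℝ) * K + |y|)).mono' (hGcont n).measurable.aestronglyMeasurable
        (Eventually.of_forall fun x => by simpa using hGbnd n x)
    have hlow : ∀ n : ℕ, u n + (y - 2) ≤ ∫ x, liftIter (⇑T) g n x y ∂μ := by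
      intro n
      have hpt : ∀ x, a n x + (y - 2) ≤ liftIter (⇑T) g n x y := fun x => by
        have := neg_le_of_abs_le (hdev n x y)
        linarith
      have heq : ∫ x, (a n x + (y - 2)) ∂μ = u n + (y - 2) := by
        rw [integral_add (haint n) (integrable_const (y - 2)), integral_const]
        simp [hu]
      calc u n + (y - 2) = ∫ x, (a n x + (y - 2)) ∂μ := heq.symm
        _ ≤ ∫ x, liftIter (⇑T) g n x y ∂μ :=
            integral_mono ((haint n).add (integrable_const (y - 2))) (hGint n) hpt
    have hhigh : ∀ n : ℕ, (∫ x, liftIter (⇑T) g n x y ∂μ) ≤ u n + (y + 2) := by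
      intro n
      have hpt : ∀ x, liftIter (⇑T) g n x y ≤ a n x + (y + 2) := fun x => by
        have := le_of_abs_le (hdev n x y)
        linarith
      have heq : ∫ x, (a n x + (y + 2)) ∂μ = u n + (y + 2) := by
        rw [integral_add (haint n) (integrable_const (y + 2)), integral_const]
        simp [hu]
      calc (∫ x, liftIter (⇑T) g n x y ∂μ)
          ≤ ∫ x, (a n x + (y + 2)) ∂μ :=
            integral_mono (hGint n) ((haint n).add (integrable_const (y + 2))) hpt
        _ = u n + (y + 2) := heq
    have hltend : Tendsto (fun n : ℕ => (u n + (y - 2)) / n) atTop (𝓝 ρ) := by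
      have := htendu'.add (tendsto_const_div_atTop_nhds_zero_nat (y - 2))
      rw [add_zero] at this
      exact this.congr fun n => (add_div _ _ _).symm
    have hhtend : Tendsto (fun n : ℕ => (u n + (y + 2)) / n) atTop (𝓝 ρ) := by
      have := htendu'.add (tendsto_const_div_atTop_nhds_zero_nat (y + 2))
      rw [add_zero] at this
      exact this.congr fun n => (add_div _ _ _).symm
    exact tendsto_of_tendsto_of_tendsto_of_le_of_le hltend hhtend
      (fun n => RotNum.div_mono_nat n (hlow n)) (fun n => RotNum.div_mono_nat n (hhigh n))
  · -- a.e. statement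
    have key : ∀ x (m n : ℕ),
        |RotNum.birkS (⇑T) (a m) n x - m * a n x| ≤ 2 * n + m * (2 + 2 * m * K) := by
      intro x m n
      have hA : |RotNum.birkS (⇑T) (a m) n x - ∑ k ∈ Finset.range n, (a (k + m) x - a k x)|
          ≤ 2 * n := by
        rw [RotNum.birkS, ← Finset.sum_sub_distrib]
        refine le_trans (Finset.abs_sum_le_sum_abs _ _) ?_
        refine le_trans (Finset.sum_le_sum (g := fun _ => (2:ℝ)) (fun k _ => ?_)) ?_
        · show |a m ((⇑T)^[k] x) - (a (k + m) x - a k x)| ≤ 2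
          have h1 := halmost k m x
          have h2 : a m ((⇑T)^[k] x) - (a (k + m) x - a k x)
              = -(a (k + m) x - a k x - a m ((⇑T)^[k] x)) := by ring
          rw [h2, abs_neg]
          exact h1
        · rw [Finset.sum_const, Finset.card_range, nsmul_eq_mul]
          exact le_of_eq (by ring)
      have hB : ∑ k ∈ Finset.range n, (a (k + m) x - a k x)
          = ∑ j ∈ Finset.range m, (a (n + j) x - a j x) :=
        RotNum.sum_shift (fun k => a k x) m n
      have hC : |∑ j ∈ Finset.range m, (a (n + j) x - a j x) - m * a n x|
          ≤ m * (2 + 2 * m * K) := by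
        have hsplit : ∑ j ∈ Finset.range m, (a (n + j) x - a j x - a n x)
            = ∑ j ∈ Finset.range m, (a (n + j) x - a j x) - m * a n x := by
          rw [Finset.sum_sub_distrib, Finset.sum_const, Finset.card_range, nsmul_eq_mul]
        rw [← hsplit]
        refine le_trans (Finset.abs_sum_le_sum_abs _ _) ?_
        refine le_trans (Finset.sum_le_sum (g := fun _ => 2 + 2 * (m:ℝ) * K) (fun j hj => ?_)) ?_
        · show |a (n + j) x - a j x - a n x| ≤ 2 + 2 * m * K
          have h1 := halmost n j x
          have h2 := habnd j ((⇑T)^[n] x)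
          have h3 := habnd j x
          have hjm : (j:ℝ) ≤ m := by
            exact_mod_cast le_of_lt (Finset.mem_range.1 hj)
          rw [abs_le] at h1 h2 h3 ⊢
          constructor <;> nlinarith
        · rw [Finset.sum_const, Finset.card_range, nsmul_eq_mul]
      calc |RotNum.birkS (⇑T) (a m) n x - m * a n x|
          ≤ |RotNum.birkS (⇑T) (a m) n x - ∑ k ∈ Finset.range n, (a (k + m) x - a k x)|
            + |∑ k ∈ Finset.range n, (a (k + m) x - a k x) - m * a n x| :=
            abs_sub_le _ _ _
        _ ≤ 2 * n + m * (2 + 2 * m * K) := by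
            rw [hB] at hA ⊢
            exact add_le_add hA hC
    have haea : ∀ᵐ x ∂μ, ∀ m : ℕ,
        Tendsto (fun n : ℕ => RotNum.birkS (⇑T) (a m) n x / n) atTop (𝓝 (u m)) :=
      ae_all_iff.2 fun m => RotNum.birkhoff_ae hT (hameas m) (habnd m)
    filter_upwards [haea] with x hx
    have hax : Tendsto (fun n : ℕ => a n x / n) atTop (𝓝 ρ) := by
      rw [Metric.tendsto_atTop]
      intro ε hε
      have hε4 : (0:ℝ) < ε / 4 := by linarith
      have e1 : ∀ᶠ m : ℕ in atTop, |u m / m - ρ| < ε / 4 :=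
        (htendu'.eventually (Metric.ball_mem_nhds ρ hε4)).mono fun m hm => by
          simpa [Real.dist_eq] using hm
      have e2 : ∀ᶠ m : ℕ in atTop, (2:ℝ) / m < ε / 4 :=
        (tendsto_const_div_atTop_nhds_zero_nat 2).eventually (gt_mem_nhds hε4)
      obtain ⟨m, ⟨hm2, hm3⟩, hm1⟩ := ((e1.and e2).and (eventually_ge_atTop 1)).exists
      have hmpos : (0:ℝ) < m := by exact_mod_cast hm1
      set Em : ℝ := m * (2 + 2 * m * K) with hEm
      have hEm0 : 0 ≤ Em := by
        have h1 : (0:ℝ) ≤ 2 * m * K := mul_nonneg (by positivity) hK0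
        nlinarith
      have e3 : ∀ᶠ n : ℕ in atTop, |RotNum.birkS (⇑T) (a m) n x / n - u m| < ε / 4 :=
        ((hx m).eventually (Metric.ball_mem_nhds (u m) hε4)).mono fun n hn => by
          simpa [Real.dist_eq] using hn
      have e4 : ∀ᶠ n : ℕ in atTop, Em / n < ε / 4 :=
        (tendsto_const_div_atTop_nhds_zero_nat Em).eventually (gt_mem_nhds hε4)
      rw [eventually_atTop] at e3 e4
      obtain ⟨N3, hN3⟩ := e3
      obtain ⟨N4, hN4⟩ := e4
      refine ⟨max (max N3 N4) 1, fun n hn => ?_⟩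
      have hn3 := hN3 n (le_trans (le_trans (le_max_left _ _) (le_max_left _ _)) hn)
      have hn4 := hN4 n (le_trans (le_trans (le_max_right _ _) (le_max_left _ _)) hn)
      have hn1 : 1 ≤ n := le_trans (le_max_right _ _) hn
      have hnpos : (0:ℝ) < n := by exact_mod_cast hn1
      set Sn : ℝ := RotNum.birkS (⇑T) (a m) n x with hSn
      rw [Real.dist_eq]
      have t1 : |a n x / n - ρ| ≤ |a n x / n - Sn / (n * m)|
          + |Sn / (n * m) - u m / m| + |u m / m - ρ| := by
        calc |a n x / n - ρ| ≤ |a n x / n - Sn / (n * m)| + |Sn / (n * m) - ρ| :=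
              abs_sub_le _ _ _
          _ ≤ |a n x / n - Sn / (n * m)| + (|Sn / (n * m) - u m / m| + |u m / m - ρ|) := by
              gcongr
              exact abs_sub_le _ _ _
          _ = _ := by ring
      have b1 : |a n x / n - Sn / (n * m)| ≤ 2 / m + Em / n := by
        have hq1 : a n x / n - Sn / (n * m) = (m * a n x - Sn) / (n * m) := by
          field_simp
        rw [hq1, abs_div, abs_of_pos (mul_pos hnpos hmpos)]
        have hkey : |m * a n x - Sn| ≤ 2 * n + Em := by
          rw [abs_sub_comm]
          exact key x m n
        have hstep : (2 * n + Em) / (n * m) ≤ 2 / m + Em / n := by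
          have heq : (2 * (n:ℝ) + Em) / (n * m) = 2 / m + Em / (n * m) := by
            field_simp
          rw [heq]
          have : Em / ((n:ℝ) * m) ≤ Em / n := by
            apply div_le_div_of_nonneg_left hEm0 hnpos
            nlinarith [show (1:ℝ) ≤ (m:ℝ) from by exact_mod_cast hm1]
          linarith
        exact le_trans ((div_le_div_iff_of_pos_right (mul_pos hnpos hmpos)).2 hkey) hstep
      have b2 : |Sn / (n * m) - u m / m| < ε / 4 := by
        have hq2 : Sn / (n * m) - u m / m = (Sn / n - u m) / m := by
          field_simp
        rw [hq2, abs_div, abs_of_pos hmpos]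
        have h2 : |Sn / n - u m| / m < (ε / 4) / m := (div_lt_div_iff_of_pos_right hmpos).2 hn3
        have h3 : (ε / 4) / m ≤ ε / 4 := by
          apply div_le_self (by positivity)
          exact_mod_cast hm1
        linarith
      have b3 : Em / n < ε / 4 := hn4
      have b4 : 2 / (m:ℝ) < ε / 4 := hm3
      have b5 : |u m / m - ρ| < ε / 4 := hm2
      linarith
    intro y
    have hbd : ∀ n : ℕ, |liftIter (⇑T) g n x y - a n x| ≤ |y| + 2 := by
      intro n
      have h1 := hdev n x y
      have := abs_sub_abs_le_abs_sub (liftIter (⇑T) g n x y - a n x) y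
      rw [abs_le] at h1 ⊢
      constructor <;> cases' abs_le.1 (le_refl |y|) with l r <;>
        [linarith [le_abs_self y, neg_abs_le y]; linarith [le_abs_self y, neg_abs_le y]]
    have hlow : ∀ n : ℕ, (a n x + -(|y| + 2)) / n ≤ liftIter (⇑T) g n x y / n := fun n =>
      RotNum.div_mono_nat n (by have := neg_le_of_abs_le (hbd n); linarith)
    have hhigh : ∀ n : ℕ, liftIter (⇑T) g n x y / n ≤ (a n x + (|y| + 2)) / n := fun n =>
      RotNum.div_mono_nat n (by have := le_of_abs_le (hbd n); linarith)
    have hltend : Tendsto (fun n : ℕ => (a n x + -(|y| + 2)) / n) atTop (𝓝 ρ) := by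
      have := hax.add (tendsto_const_div_atTop_nhds_zero_nat (-(|y| + 2)))
      rw [add_zero] at this
      exact this.congr fun n => (add_div _ _ _).symm
    have hhtend : Tendsto (fun n : ℕ => (a n x + (|y| + 2)) / n) atTop (𝓝 ρ) := by
      have := hax.add (tendsto_const_div_atTop_nhds_zero_nat (|y| + 2))
      rw [add_zero] at this
      exact this.congr fun n => (add_div _ _ _).symm
    exact tendsto_of_tendsto_of_tendsto_of_le_of_le hltend hhtend hlow hhigh

end
end
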